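/- arXiv:1104.1242 — 9 statements merged into one kernel-verified Lean document; each statement's English description precedes it below -/
import Mathlib

section
/- Let X₁,…,X_m be i.i.d. positive random variables with continuous distribution function F possessing a density on (0,∞), and let M^{(1)} ≥ M^{(2)} be the two largest order statistics of X₁,…,X_m (m ≥ 2). Then E[M^{(2)}/M^{(1)}] = 1 − m ∫₀^∞ F^{m−1}(x₂) ( ∫_{x₂}^∞ x₁^{−1} dF(x₁) ) dx₂. -/
open MeasureTheory ProbabilityTheory Filter Set Asymptotics
open scoped ENNReal NNReal Topology

/-- The second-order condition `1 - F x = C₁ x^(-α) + C₂ x^(-β) + o(x^(-β))` as `x → ∞`. -/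
def SecondOrderCondition (F : ℝ → ℝ) (C₁ C₂ α β : ℝ) : Prop :=
  (fun x : ℝ => (1 - F x) - (C₁ * x ^ (-α) + C₂ * x ^ (-β)))
    =o[atTop] fun x : ℝ => x ^ (-β)

/-- The largest value among `v 0, …, v (m-1)`. -/
noncomputable def groupMax (m : ℕ) (v : ℕ → ℝ) : ℝ :=
  sSup {x | ∃ j < m, x = v j}

/-- The second largest value among `v 0, …, v (m-1)` (the maximum over distinct pairs of
the pairwise minimum). -/
noncomputable def groupSecondMax (m : ℕ) (v : ℕ → ℝ) : ℝ :=
  sSup {x | ∃ j < m, ∃ k < m, j ≠ k ∧ x = min (v j) (v k)}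

lemma groupMax_eq_sup' {m : ℕ} (hm : m ≠ 0) (v : ℕ → ℝ) :
    groupMax m v = (Finset.range m).sup' (Finset.nonempty_range_iff.2 hm) v := by
  rw [Finset.sup'_eq_csSup_image, groupMax]
  congr 1
  ext x
  simp [eq_comm]

def pairSet (m : ℕ) : Finset (ℕ × ℕ) :=
  (Finset.range m ×ˢ Finset.range m).filter fun p => p.1 ≠ p.2

lemma pairSet_nonempty {m : ℕ} (hm : 2 ≤ m) : (pairSet m).Nonempty := by
  refine ⟨(0, 1), ?_⟩
  simp [pairSet, Finset.mem_filter]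
  omega

lemma groupSecondMax_eq_sup' {m : ℕ} (hm : 2 ≤ m) (v : ℕ → ℝ) :
    groupSecondMax m v = (pairSet m).sup' (pairSet_nonempty hm)
      (fun p => min (v p.1) (v p.2)) := by
  rw [Finset.sup'_eq_csSup_image, groupSecondMax]
  congr 1
  ext x
  constructor
  · rintro ⟨j, hj, k, hk, hjk, rfl⟩
    exact ⟨(j, k), by simp [pairSet, hj, hk, hjk], rfl⟩
  · rintro ⟨⟨j, k⟩, hp, rfl⟩
    simp only [pairSet, Finset.coe_filter, Finset.mem_product, Finset.mem_range, mem_setOf_eq] at hp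
    exact ⟨j, hp.1.1, k, hp.1.2, hp.2, rfl⟩

lemma le_groupMax {m : ℕ} (v : ℕ → ℝ) {j : ℕ} (hj : j < m) : v j ≤ groupMax m v := by
  rw [groupMax_eq_sup' (by omega) v]
  exact Finset.le_sup' v (Finset.mem_range.2 hj)

lemma exists_groupMax {m : ℕ} (hm : m ≠ 0) (v : ℕ → ℝ) :
    ∃ j < m, groupMax m v = v j := by
  rw [groupMax_eq_sup' hm v]
  obtain ⟨i, hi, h⟩ := Finset.exists_mem_eq_sup' (Finset.nonempty_range_iff.2 hm) v
  exact ⟨i, Finset.mem_range.1 hi, h⟩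

lemma min_le_groupSecondMax {m : ℕ} (hm : 2 ≤ m) (v : ℕ → ℝ) {j k : ℕ}
    (hj : j < m) (hk : k < m) (hjk : j ≠ k) : min (v j) (v k) ≤ groupSecondMax m v := by
  rw [groupSecondMax_eq_sup' hm v]
  refine Finset.le_sup' (f := fun p => min (v p.1) (v p.2)) (b := (j, k)) ?_
  simp only [pairSet, Finset.mem_filter, Finset.mem_product, Finset.mem_range]
  exact ⟨⟨hj, hk⟩, hjk⟩

lemma exists_groupSecondMax {m : ℕ} (hm : 2 ≤ m) (v : ℕ → ℝ) :
    ∃ j < m, ∃ k < m, j ≠ k ∧ groupSecondMax m v = min (v j) (v k) := by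
  rw [groupSecondMax_eq_sup' hm v]
  obtain ⟨⟨j, k⟩, hp, h⟩ := Finset.exists_mem_eq_sup' (pairSet_nonempty hm)
    (fun p => min (v p.1) (v p.2))
  simp only [pairSet, Finset.mem_filter, Finset.mem_product, Finset.mem_range] at hp
  exact ⟨j, hp.1.1, k, hp.1.2, hp.2, h⟩

lemma groupSecondMax_le_groupMax {m : ℕ} (hm : 2 ≤ m) (v : ℕ → ℝ) :
    groupSecondMax m v ≤ groupMax m v := by
  obtain ⟨j, hj, k, hk, hjk, h⟩ := exists_groupSecondMax hm v
  calc groupSecondMax m v = min (v j) (v k) := h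
    _ ≤ v j := min_le_left _ _
    _ ≤ groupMax m v := le_groupMax v hj

lemma groupSecondMax_pos {m : ℕ} (hm : 2 ≤ m) (v : ℕ → ℝ) (hv : ∀ j < m, 0 < v j) :
    0 < groupSecondMax m v := by
  have h01 : min (v 0) (v 1) ≤ groupSecondMax m v :=
    min_le_groupSecondMax hm v (by omega) (by omega) (by omega)
  have := hv 0 (by omega)
  have := hv 1 (by omega)
  have : 0 < min (v 0) (v 1) := lt_min ‹0 < v 0› ‹0 < v 1›
  linarith

lemma groupMax_le_iff {m : ℕ} (hm : m ≠ 0) (v : ℕ → ℝ) {x : ℝ} :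
    groupMax m v ≤ x ↔ ∀ j < m, v j ≤ x := by
  rw [groupMax_eq_sup' hm v, Finset.sup'_le_iff]
  simp

lemma groupSecondMax_le_of_unique {m : ℕ} (hm : 2 ≤ m) (v : ℕ → ℝ) {x : ℝ} {j : ℕ}
    (h : ∀ k < m, k ≠ j → v k ≤ x) : groupSecondMax m v ≤ x := by
  rw [groupSecondMax_eq_sup' hm v, Finset.sup'_le_iff]
  rintro ⟨a, b⟩ hp
  simp only [pairSet, Finset.mem_filter, Finset.mem_product, Finset.mem_range] at hp
  rcases eq_or_ne a j with rfl | ha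
  · exact le_trans (min_le_right _ _) (h b hp.1.2 (fun hb => hp.2 hb.symm))
  · exact le_trans (min_le_left _ _) (h a hp.1.1 ha)

lemma key_pointwise {m : ℕ} (hm : 2 ≤ m) (v : ℕ → ℝ) (x : ℝ) :
    (if groupSecondMax m v ≤ x ∧ x < groupMax m v
        then ENNReal.ofReal (groupMax m v)⁻¹ else 0)
      = ∑ j ∈ Finset.range m,
          (if x < v j ∧ ∀ k < m, k ≠ j → v k ≤ x then ENNReal.ofReal (v j)⁻¹ else 0) := by
  by_cases h2 : ∃ j < m, ∃ k < m, j ≠ k ∧ x < v j ∧ x < v k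
  · -- at least two exceed x : both sides are zero
    obtain ⟨j, hj, k, hk, hjk, hxj, hxk⟩ := h2
    rw [if_neg, Finset.sum_eq_zero]
    · intro i _
      rw [if_neg]
      rintro ⟨-, hall⟩
      rcases eq_or_ne i j with rfl | hij
      · exact absurd (hall k hk (Ne.symm hjk)) (not_le.2 hxk)
      · exact absurd (hall j hj (Ne.symm hij)) (not_le.2 hxj)
    · rintro ⟨hle, -⟩
      have : x < min (v j) (v k) := lt_min hxj hxk
      have := min_le_groupSecondMax hm v hj hk hjk
      linarith
  · push_neg at h2
    by_cases h1 : ∃ j < m, x < v j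
    · obtain ⟨j, hj, hxj⟩ := h1
      have hall : ∀ k < m, k ≠ j → v k ≤ x := by
        intro k hk hkj
        by_contra hc
        push_neg at hc
        exact absurd (h2 j hj k hk (Ne.symm hkj) hxj) (not_le.2 hc)
      have hMj : groupMax m v = v j := by
        obtain ⟨i, hi, hMi⟩ := exists_groupMax (show m ≠ 0 by omega) v
        rcases eq_or_ne i j with rfl | hij
        · exact hMi
        · have : v j ≤ v i := hMi ▸ le_groupMax v hj
          have : x < v i := lt_of_lt_of_le hxj this
          exact absurd (hall i hi hij) (not_le.2 this)
      rw [if_pos ⟨groupSecondMax_le_of_unique hm v hall, hMj ▸ hxj⟩, hMj]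
      rw [Finset.sum_eq_single_of_mem j (Finset.mem_range.2 hj)]
      · rw [if_pos ⟨hxj, hall⟩]
      · intro i hi hij
        rw [if_neg]
        rintro ⟨hxi, -⟩
        exact absurd (hall i (Finset.mem_range.1 hi) hij) (not_le.2 hxi)
    · push_neg at h1
      rw [if_neg, Finset.sum_eq_zero]
      · intro i hi
        rw [if_neg]
        rintro ⟨hxi, -⟩
        exact absurd hxi (not_lt.2 (h1 i (Finset.mem_range.1 hi)))
      · rintro ⟨-, hlt⟩
        exact absurd hlt (not_lt.2 ((groupMax_le_iff (show m ≠ 0 by omega) v).2 h1))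

lemma lintegral_prod_of_iIndepFun {Ω : Type*} [MeasurableSpace Ω] {P : Measure Ω}
    [IsProbabilityMeasure P] {Y : ℕ → Ω → ℝ≥0∞}
    (hY : iIndepFun Y P) (hYm : ∀ i, Measurable (Y i))
    (s : Finset ℕ) :
    ∫⁻ ω, ∏ j ∈ s, Y j ω ∂P = ∏ j ∈ s, ∫⁻ ω, Y j ω ∂P := by
  classical
  induction s using Finset.cons_induction with
  | empty => simp
  | cons a s ha ih =>
    have hind : IndepFun (∏ j ∈ s, Y j) (Y a) P :=
      hY.indepFun_finsetProd_of_notMem hYm ha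
    have hmul : ∫⁻ ω, (∏ j ∈ s, Y j) ω * Y a ω ∂P
        = (∫⁻ ω, (∏ j ∈ s, Y j) ω ∂P) * ∫⁻ ω, Y a ω ∂P :=
      lintegral_mul_eq_lintegral_mul_lintegral_of_indepFun''
        (by rw [Finset.prod_fn]
            exact (Finset.measurable_prod s (fun i _ => hYm i)).aemeasurable)
        (hYm a).aemeasurable hind
    calc ∫⁻ ω, ∏ j ∈ Finset.cons a s ha, Y j ω ∂P
        = ∫⁻ ω, (∏ j ∈ s, Y j) ω * Y a ω ∂P := by
          simp_rw [Finset.prod_cons, Finset.prod_apply, mul_comm]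
      _ = (∫⁻ ω, Y a ω ∂P) * ∏ j ∈ s, ∫⁻ ω, Y j ω ∂P := by
          rw [hmul, mul_comm]
          congr 1
          rw [← ih]
          simp_rw [Finset.prod_apply]
      _ = ∏ j ∈ Finset.cons a s ha, ∫⁻ ω, Y j ω ∂P := by rw [Finset.prod_cons]

lemma prod_ite_eq_ite {m : ℕ} {j : ℕ} (hj : j < m) (x : ℝ) (w : ℕ → ℝ) :
    (∏ k ∈ Finset.range m,
        (if k = j then (if x < w k then ENNReal.ofReal (w k)⁻¹ else 0)
          else (if w k ≤ x then 1 else 0)))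
      = if x < w j ∧ ∀ k < m, k ≠ j → w k ≤ x then ENNReal.ofReal (w j)⁻¹ else 0 := by
  by_cases h : x < w j ∧ ∀ k < m, k ≠ j → w k ≤ x
  · rw [if_pos h]
    rw [Finset.prod_eq_single_of_mem j (Finset.mem_range.2 hj)]
    · simp [h.1]
    · intro k hk hkj
      rw [if_neg hkj, if_pos (h.2 k (Finset.mem_range.1 hk) hkj)]
  · rw [if_neg h]
    push_neg at h
    by_cases hxj : x < w j
    · obtain ⟨k, hk, hkj, hxk⟩ := h hxj
      refine Finset.prod_eq_zero (Finset.mem_range.2 hk) ?_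
      rw [if_neg hkj, if_neg (not_le.2 hxk)]
    · refine Finset.prod_eq_zero (Finset.mem_range.2 hj) ?_
      rw [if_pos rfl, if_neg hxj]

noncomputable def gfun (x : ℝ) (j k : ℕ) (y : ℝ) : ℝ≥0∞ :=
  if k = j then (if x < y then ENNReal.ofReal y⁻¹ else 0) else (if y ≤ x then 1 else 0)

lemma gfun_measurable (x : ℝ) (j k : ℕ) : Measurable (gfun x j k) := by
  rcases eq_or_ne k j with rfl | h
  · have h2 : gfun x k k = fun y => if x < y then ENNReal.ofReal y⁻¹ else 0 := by
      funext y; unfold gfun; rw [if_pos rfl]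
    rw [h2]
    exact Measurable.ite measurableSet_Ioi (measurable_inv.ennreal_ofReal) measurable_const
  · have h2 : gfun x j k = fun y => if y ≤ x then (1 : ℝ≥0∞) else 0 := by
      funext y; unfold gfun; rw [if_neg h]
    rw [h2]
    exact Measurable.ite measurableSet_Iic measurable_const measurable_const

lemma gfun_prod {m : ℕ} {j : ℕ} (hj : j < m) (x : ℝ) (w : ℕ → ℝ) :
    (∏ k ∈ Finset.range m, gfun x j k (w k))
      = if x < w j ∧ ∀ k < m, k ≠ j → w k ≤ x then ENNReal.ofReal (w j)⁻¹ else 0 := by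
  rw [← prod_ite_eq_ite hj x w]
  rfl

lemma gfun_lintegral_ne (μ : Measure ℝ) (x : ℝ) {j k : ℕ} (hkj : k ≠ j) :
    ∫⁻ y, gfun x j k y ∂μ = μ (Iic x) := by
  have h : ∀ y : ℝ, gfun x j k y = (Iic x).indicator 1 y := by
    intro y
    unfold gfun
    simp only [if_neg hkj, indicator_apply, mem_Iic, Pi.one_apply]
  rw [lintegral_congr h, lintegral_indicator_one measurableSet_Iic]

lemma gfun_lintegral_eq (μ : Measure ℝ) (x : ℝ) (j : ℕ) :
    ∫⁻ y, gfun x j j y ∂μ = ∫⁻ y in Ioi x, ENNReal.ofReal y⁻¹ ∂μ := by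
  have h : ∀ y : ℝ, gfun x j j y = (Ioi x).indicator (fun y => ENNReal.ofReal y⁻¹) y := by
    intro y
    unfold gfun
    rw [if_pos rfl]
    simp only [indicator_apply, mem_Ioi]
  rw [lintegral_congr h, lintegral_indicator measurableSet_Ioi]

/-- **Expectation formula for the ratio of the two largest order statistics.**
If `X 0, …, X (m-1)` are i.i.d. positive random variables with continuous distribution
function `F` possessing a density, and `M⁽¹⁾ ≥ M⁽²⁾` are the two largest order
statistics (`m ≥ 2`), then
`E[M⁽²⁾/M⁽¹⁾] = 1 - m ∫₀^∞ F^(m-1)(x₂) (∫_{x₂}^∞ x₁⁻¹ dF(x₁)) dx₂`. -/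
theorem expectation_ratio_formula
    {Ω : Type*} [MeasurableSpace Ω] (P : Measure Ω) [IsProbabilityMeasure P]
    (m : ℕ) (hm : 2 ≤ m)
    (X : ℕ → Ω → ℝ) (μ : Measure ℝ) [IsProbabilityMeasure μ]
    (hmeas : ∀ i, Measurable (X i))
    (hindep : iIndepFun X P)
    (hdist : ∀ i, Measure.map (X i) P = μ)
    (hpos : ∀ i, ∀ᵐ ω ∂P, 0 < X i ω)
    (F : ℝ → ℝ) (hF : ∀ x, F x = (μ (Set.Iic x)).toReal)
    (hFcont : Continuous F)
    (hdens : μ ≪ volume) :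
    (∫ ω, groupSecondMax m (fun j => X j ω) / groupMax m (fun j => X j ω) ∂P)
      = 1 - (m : ℝ) *
        ∫ x in Set.Ioi (0 : ℝ), (F x) ^ (m - 1) * ∫ y in Set.Ioi x, y⁻¹ ∂μ := by
  classical
  have hm0 : m ≠ 0 := by omega
  set M1 : Ω → ℝ := fun ω => groupMax m (fun j => X j ω) with hM1def
  set M2 : Ω → ℝ := fun ω => groupSecondMax m (fun j => X j ω) with hM2def
  have hM1app : ∀ ω, M1 ω = groupMax m (fun j => X j ω) := fun _ => rfl
  have hM2app : ∀ ω, M2 ω = groupSecondMax m (fun j => X j ω) := fun _ => rfl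
  have hgoal : (∫ ω, groupSecondMax m (fun j => X j ω) / groupMax m (fun j => X j ω) ∂P)
      = ∫ ω, M2 ω / M1 ω ∂P := rfl
  rw [hgoal]
  -- measurability of M1, M2
  have hM1m : Measurable M1 := by
    have h : M1 = (Finset.range m).sup' (Finset.nonempty_range_iff.2 hm0) X := by
      funext ω
      rw [Finset.sup'_apply]
      exact groupMax_eq_sup' hm0 _
    rw [h]
    exact Finset.measurable_sup' _ (fun i _ => hmeas i)
  have hM2m : Measurable M2 := by
    have h : M2 = (pairSet m).sup' (pairSet_nonempty hm)
        (fun p : ℕ × ℕ => fun ω => min (X p.1 ω) (X p.2 ω)) := by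
      funext ω
      rw [Finset.sup'_apply]
      exact groupSecondMax_eq_sup' hm _
    rw [h]
    exact Finset.measurable_sup' _ (fun p _ => (hmeas p.1).min (hmeas p.2))
  have hG : ∀ᵐ ω ∂P, ∀ j, 0 < X j ω := ae_all_iff.2 hpos
  set R : Ω → ℝ := fun ω => (M1 ω - M2 ω) / M1 ω with hRdef
  have hRapp : ∀ ω, R ω = (M1 ω - M2 ω) / M1 ω := fun _ => rfl
  have hRmeas : Measurable R := (hM1m.sub hM2m).div hM1m
  have hprops : ∀ᵐ ω ∂P, 0 < M2 ω ∧ M2 ω ≤ M1 ω := by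
    filter_upwards [hG] with ω hω
    exact ⟨groupSecondMax_pos hm _ (fun j _ => hω j), groupSecondMax_le_groupMax hm _⟩
  have hRint : Integrable R P := by
    refine Integrable.mono' (integrable_const (1 : ℝ)) hRmeas.aestronglyMeasurable ?_
    filter_upwards [hprops] with ω hω
    have h1 : 0 < M1 ω := lt_of_lt_of_le hω.1 hω.2
    rw [Real.norm_eq_abs, abs_le]
    constructor
    · have h2 : 0 ≤ (M1 ω - M2 ω) / M1 ω := div_nonneg (by linarith [hω.2]) h1.le
      rw [hRapp]; linarith
    · rw [hRapp, div_le_one h1]; linarith [hω.1]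
  have hsplit : (∫ ω, M2 ω / M1 ω ∂P) = 1 - ∫ ω, R ω ∂P := by
    have hcongr : ∀ᵐ ω ∂P, M2 ω / M1 ω = (1 : ℝ) - R ω := by
      filter_upwards [hprops] with ω hω
      have h1 : 0 < M1 ω := lt_of_lt_of_le hω.1 hω.2
      have h2 : M2 ω / M1 ω + R ω = 1 := by
        rw [hRapp, ← add_div, show M2 ω + (M1 ω - M2 ω) = M1 ω by ring,
          div_self h1.ne']
      linarith
    rw [integral_congr_ae hcongr, integral_sub (integrable_const 1) hRint]
    simp
  rw [hsplit]
  have hRnonneg : 0 ≤ᵐ[P] R := by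
    filter_upwards [hprops] with ω hω
    have h1 : 0 < M1 ω := lt_of_lt_of_le hω.1 hω.2
    exact div_nonneg (by linarith [hω.2]) h1.le
  have hRlint : ∫ ω, R ω ∂P = (∫⁻ ω, ENNReal.ofReal (R ω) ∂P).toReal :=
    integral_eq_lintegral_of_nonneg_ae hRnonneg hRmeas.aestronglyMeasurable
  set f : Ω → ℝ → ℝ≥0∞ := fun ω x =>
    if M2 ω ≤ x ∧ x < M1 ω then ENNReal.ofReal (M1 ω)⁻¹ else 0 with hfdef
  have hfapp : ∀ ω x, f ω x
      = if M2 ω ≤ x ∧ x < M1 ω then ENNReal.ofReal (M1 ω)⁻¹ else 0 := fun _ _ => rfl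
  have claim1 : ∀ᵐ ω ∂P, ENNReal.ofReal (R ω) = ∫⁻ x in Ioi (0 : ℝ), f ω x ∂volume := by
    filter_upwards [hprops] with ω hω
    have h1 : 0 < M1 ω := lt_of_lt_of_le hω.1 hω.2
    have hind : ∀ x : ℝ, f ω x
        = (Ico (M2 ω) (M1 ω)).indicator (fun _ => ENNReal.ofReal (M1 ω)⁻¹) x := by
      intro x
      rw [hfapp]
      simp only [indicator_apply, mem_Ico]
    rw [lintegral_congr hind, lintegral_indicator measurableSet_Ico,
      Measure.restrict_restrict measurableSet_Ico]
    have hsub : Ico (M2 ω) (M1 ω) ∩ Ioi 0 = Ico (M2 ω) (M1 ω) := by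
      apply inter_eq_self_of_subset_left
      intro y hy
      exact lt_of_lt_of_le hω.1 hy.1
    rw [hsub, setLIntegral_const, Real.volume_Ico,
      ← ENNReal.ofReal_mul (inv_nonneg.2 h1.le)]
    congr 1
    rw [hRapp, div_eq_inv_mul]
  have hL1 : ∫⁻ ω, ENNReal.ofReal (R ω) ∂P
      = ∫⁻ ω, ∫⁻ x in Ioi (0 : ℝ), f ω x ∂volume ∂P := lintegral_congr_ae claim1
  have hsetm : MeasurableSet {p : Ω × ℝ | M2 p.1 ≤ p.2 ∧ p.2 < M1 p.1} := by
    rw [setOf_and]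
    exact (measurableSet_le (hM2m.comp measurable_fst) measurable_snd).inter
      (measurableSet_lt measurable_snd (hM1m.comp measurable_fst))
  have hfunc : Measurable (Function.uncurry f) := by
    have h : Function.uncurry f = fun p : Ω × ℝ =>
        if M2 p.1 ≤ p.2 ∧ p.2 < M1 p.1 then ENNReal.ofReal (M1 p.1)⁻¹ else 0 := rfl
    rw [h]
    exact Measurable.ite hsetm ((hM1m.comp measurable_fst).inv.ennreal_ofReal)
      measurable_const
  have hswap : ∫⁻ ω, ∫⁻ x in Ioi (0 : ℝ), f ω x ∂volume ∂P
      = ∫⁻ x in Ioi (0 : ℝ), ∫⁻ ω, f ω x ∂P ∂volume :=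
    lintegral_lintegral_swap hfunc.aemeasurable
  -- the key evaluation for fixed x > 0
  have hstepE : ∀ x ∈ Ioi (0 : ℝ), ∫⁻ ω, f ω x ∂P
      = (m : ℝ≥0∞) * ((μ (Iic x)) ^ (m - 1) * ∫⁻ y in Ioi x, ENNReal.ofReal y⁻¹ ∂μ) := by
    intro x hx
    have hkey : ∀ ω, f ω x = ∑ j ∈ Finset.range m,
        ∏ k ∈ Finset.range m, gfun x j k (X k ω) := by
      intro ω
      rw [hfapp, hM1app, hM2app, key_pointwise hm (fun j => X j ω) x]
      refine Finset.sum_congr rfl (fun j hj => ?_)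
      rw [gfun_prod (Finset.mem_range.1 hj) x (fun k => X k ω)]
    have hterm : ∀ j ∈ Finset.range m,
        ∫⁻ ω, ∏ k ∈ Finset.range m, gfun x j k (X k ω) ∂P
          = (μ (Iic x)) ^ (m - 1) * ∫⁻ y in Ioi x, ENNReal.ofReal y⁻¹ ∂μ := by
      intro j hj
      have hind2 : iIndepFun (fun k => gfun x j k ∘ X k) P :=
        hindep.comp _ (fun k => gfun_measurable x j k)
      have hprod := lintegral_prod_of_iIndepFun hind2
        (fun k => (gfun_measurable x j k).comp (hmeas k)) (Finset.range m)
      simp only [Function.comp_apply] at hprod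
      rw [hprod]
      have hfactor : ∀ k, ∫⁻ ω, gfun x j k (X k ω) ∂P = ∫⁻ y, gfun x j k y ∂μ := by
        intro k
        rw [← hdist k, lintegral_map (gfun_measurable x j k) (hmeas k)]
      rw [Finset.prod_congr rfl (fun k _ => hfactor k),
        ← Finset.mul_prod_erase _ _ hj, gfun_lintegral_eq μ x j,
        Finset.prod_congr rfl (fun k hk => gfun_lintegral_ne μ x (Finset.ne_of_mem_erase hk)),
        Finset.prod_const, Finset.card_erase_of_mem hj, Finset.card_range, mul_comm]
    have hmeasterm : ∀ j, Measurable fun ω => ∏ k ∈ Finset.range m, gfun x j k (X k ω) := by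
      intro j
      exact Finset.measurable_prod _ (fun k _ => (gfun_measurable x j k).comp (hmeas k))
    rw [lintegral_congr hkey,
      lintegral_finset_sum _ (fun j _ => hmeasterm j),
      Finset.sum_congr rfl hterm, Finset.sum_const, Finset.card_range, nsmul_eq_mul]
  -- measurability of the integrand in x
  have hmono : Measurable fun x : ℝ => μ (Iic x) ^ (m - 1) :=
    (Monotone.measurable (fun a b hab => measure_mono (Iic_subset_Iic.2 hab))).pow_const _
  have hJm : Measurable fun x : ℝ => ∫⁻ y in Ioi x, ENNReal.ofReal y⁻¹ ∂μ :=
    Antitone.measurable (fun a b hab => lintegral_mono_set (Ioi_subset_Ioi hab))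
  have hL2 : ∫⁻ x in Ioi (0 : ℝ), ∫⁻ ω, f ω x ∂P ∂volume
      = (m : ℝ≥0∞) * ∫⁻ x in Ioi (0 : ℝ),
          (μ (Iic x)) ^ (m - 1) * ∫⁻ y in Ioi x, ENNReal.ofReal y⁻¹ ∂μ ∂volume := by
    rw [setLIntegral_congr_fun_ae measurableSet_Ioi (ae_of_all _ hstepE)]
    exact lintegral_const_mul _ (hmono.mul hJm)
  have hfin : ∀ᵐ x ∂(volume.restrict (Ioi (0 : ℝ))),
      (μ (Iic x)) ^ (m - 1) * ∫⁻ y in Ioi x, ENNReal.ofReal y⁻¹ ∂μ < ∞ := by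
    filter_upwards [ae_restrict_mem measurableSet_Ioi] with x hx
    have hJle : (∫⁻ y in Ioi x, ENNReal.ofReal y⁻¹ ∂μ) ≤ ENNReal.ofReal x⁻¹ := by
      calc ∫⁻ y in Ioi x, ENNReal.ofReal y⁻¹ ∂μ
          ≤ ∫⁻ _ in Ioi x, ENNReal.ofReal x⁻¹ ∂μ := by
            refine setLIntegral_mono measurable_const (fun y hy => ?_)
            exact ENNReal.ofReal_le_ofReal (inv_anti₀ hx (le_of_lt hy))
        _ = ENNReal.ofReal x⁻¹ * μ (Ioi x) := setLIntegral_const _ _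
        _ ≤ ENNReal.ofReal x⁻¹ * 1 := by gcongr; exact prob_le_one
        _ = ENNReal.ofReal x⁻¹ := mul_one _
    exact ENNReal.mul_lt_top
      (ENNReal.pow_lt_top (measure_lt_top μ _))
      (lt_of_le_of_lt hJle ENNReal.ofReal_lt_top)
  have htoReal : ∫ x in Ioi (0 : ℝ), F x ^ (m - 1) * ∫ y in Ioi x, y⁻¹ ∂μ
      = (∫⁻ x in Ioi (0 : ℝ),
          (μ (Iic x)) ^ (m - 1) * ∫⁻ y in Ioi x, ENNReal.ofReal y⁻¹ ∂μ ∂volume).toReal := by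
    rw [← integral_toReal (f := fun x => μ (Iic x) ^ (m - 1) * ∫⁻ y in Ioi x, ENNReal.ofReal y⁻¹ ∂μ) (hmono.mul hJm).aemeasurable hfin]
    refine integral_congr_ae ?_
    filter_upwards [ae_restrict_mem measurableSet_Ioi] with x hx
    rw [ENNReal.toReal_mul, ENNReal.toReal_pow, hF x]
    congr 1
    rw [integral_eq_lintegral_of_nonneg_ae ?_ measurable_inv.aestronglyMeasurable]
    filter_upwards [ae_restrict_mem measurableSet_Ioi] with y hy
    exact inv_nonneg.2 (le_of_lt (lt_trans hx hy))
  rw [hRlint, hL1, hswap, hL2, ENNReal.toReal_mul, ENNReal.toReal_natCast, htoReal]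
end

section
/- Let F be a distribution function satisfying the second-order condition 1 − F(x) = C₁x^{−α} + C₂x^{−β} + o(x^{−β}) as x → ∞ with 0 < α < β < ∞ and C₁ > 0, and let a_m = κ m^{1/α} (ln m)^{−1/α} with 0 < κ < (C₁/ζ)^{1/α}, where ζ = (β−α)/α. Then K_{m,1} := m ∫₀^{a_m} F^{m−1}(x₂) ( ∫_{x₂}^∞ x₁^{−1} dF(x₁) ) dx₂ = o(m^{−ζ}) as m → ∞. -/
open MeasureTheory ProbabilityTheory Filter Set Asymptotics
open scoped ENNReal NNReal Topology

lemma aux_integral_exp_rpow (α T M A : ℝ) (hα : 0 < α) (hT : 0 < T) (hM : 0 < M)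
    (hMA : M ≤ A) :
    ∫ x in Set.Ioo M A, Real.exp (-T * x ^ (-α)) * (x⁻¹ * x ^ (-α)) ≤
      Real.exp (-T * A ^ (-α)) / (T * α) := by
  have hTα : 0 < T * α := mul_pos hT hα
  set Ψ : ℝ → ℝ := fun x => Real.exp (-T * x ^ (-α)) / (T * α) with hΨ
  have hmem : ∀ x ∈ Set.uIcc M A, 0 < x := by
    intro x hx
    rw [Set.uIcc_of_le hMA] at hx
    exact lt_of_lt_of_le hM hx.1
  have hderiv : ∀ x ∈ Set.uIcc M A,
      HasDerivAt Ψ (Real.exp (-T * x ^ (-α)) * (x⁻¹ * x ^ (-α))) x := by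
    intro x hx
    have hx0 : 0 < x := hmem x hx
    have h1 : HasDerivAt (fun x : ℝ => x ^ (-α)) (-α * x ^ (-α - 1)) x :=
      Real.hasDerivAt_rpow_const (Or.inl hx0.ne')
    have h2 : HasDerivAt (fun x : ℝ => -T * x ^ (-α)) (-T * (-α * x ^ (-α - 1))) x :=
      h1.const_mul _
    have h3 := h2.exp.div_const (T * α)
    refine h3.congr_deriv ?_
    have hxa : x ^ (-α - 1) = x⁻¹ * x ^ (-α) := by
      rw [show -α - 1 = -1 + -α by ring, Real.rpow_add hx0, Real.rpow_neg_one]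
    rw [hxa]
    field_simp
  have hcont : ContinuousOn (fun x : ℝ => Real.exp (-T * x ^ (-α)) * (x⁻¹ * x ^ (-α)))
      (Set.uIcc M A) := by
    have hr : ContinuousOn (fun x : ℝ => x ^ (-α)) (Set.uIcc M A) := fun x hx =>
      (Real.continuousAt_rpow_const x _ (Or.inl (hmem x hx).ne')).continuousWithinAt
    have hinv : ContinuousOn (fun x : ℝ => x⁻¹) (Set.uIcc M A) :=
      continuousOn_id.inv₀ fun x hx => (hmem x hx).ne'
    exact (Real.continuous_exp.comp_continuousOn (continuousOn_const.mul hr)).mul (hinv.mul hr)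
  have hFTC := intervalIntegral.integral_eq_sub_of_hasDerivAt hderiv hcont.intervalIntegrable
  rw [intervalIntegral.integral_of_le hMA] at hFTC
  rw [← MeasureTheory.integral_Ioc_eq_integral_Ioo, hFTC]
  have hΨM : 0 ≤ Ψ M := by positivity
  have : Ψ A = Real.exp (-T * A ^ (-α)) / (T * α) := rfl
  linarith

lemma aux_tonelli (μ : Measure ℝ) [IsProbabilityMeasure μ] (M : ℝ) :
    ∫⁻ x in Set.Ioo (0:ℝ) M, (∫⁻ y in Set.Ioi x, ENNReal.ofReal y⁻¹ ∂μ) ≤ 1 := by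
  have hmeas : Measurable (fun p : ℝ × ℝ =>
      if p.1 < p.2 then ENNReal.ofReal p.2⁻¹ else 0) := by
    exact Measurable.ite (measurableSet_lt measurable_fst measurable_snd)
      (ENNReal.measurable_ofReal.comp measurable_snd.inv) measurable_const
  have key : ∀ x : ℝ, (∫⁻ y in Set.Ioi x, ENNReal.ofReal y⁻¹ ∂μ)
      = ∫⁻ y, (if x < y then ENNReal.ofReal y⁻¹ else 0) ∂μ := by
    intro x
    rw [← lintegral_indicator measurableSet_Ioi]
    refine lintegral_congr fun y => ?_
    simp [Set.indicator, Set.mem_Ioi]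
  calc ∫⁻ x in Set.Ioo (0:ℝ) M, (∫⁻ y in Set.Ioi x, ENNReal.ofReal y⁻¹ ∂μ)
      = ∫⁻ x in Set.Ioo (0:ℝ) M, ∫⁻ y, (if x < y then ENNReal.ofReal y⁻¹ else 0) ∂μ := by
        exact lintegral_congr fun x => key x
    _ = ∫⁻ y, (∫⁻ x in Set.Ioo (0:ℝ) M, (if x < y then ENNReal.ofReal y⁻¹ else 0)) ∂μ := by
        exact lintegral_lintegral_swap (μ := volume.restrict (Set.Ioo (0:ℝ) M)) (ν := μ)
          (f := fun x y : ℝ => if x < y then ENNReal.ofReal y⁻¹ else 0)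
          (by exact hmeas.aemeasurable)
    _ ≤ ∫⁻ _, 1 ∂μ := by
        refine lintegral_mono fun y => ?_
        have hrw : (fun x : ℝ => if x < y then ENNReal.ofReal y⁻¹ else 0)
            = (Set.Iio y).indicator (fun _ => ENNReal.ofReal y⁻¹) := by
          ext x; simp [Set.indicator, Set.mem_Iio]
        rw [hrw, lintegral_indicator measurableSet_Iio, setLIntegral_const,
          Measure.restrict_apply measurableSet_Iio]
        rcases le_or_gt y 0 with hy | hy
        · have : ENNReal.ofReal y⁻¹ = 0 := by
            rw [ENNReal.ofReal_eq_zero]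
            exact inv_nonpos.2 hy
          simp [this]
        · have hsub : Set.Iio y ∩ Set.Ioo (0:ℝ) M ⊆ Set.Ioo 0 y :=
            fun x hx => ⟨hx.2.1, hx.1⟩
          have hvol : volume (Set.Iio y ∩ Set.Ioo (0:ℝ) M) ≤ ENNReal.ofReal y := by
            calc volume (Set.Iio y ∩ Set.Ioo (0:ℝ) M) ≤ volume (Set.Ioo (0:ℝ) y) :=
                measure_mono hsub
              _ = ENNReal.ofReal y := by rw [Real.volume_Ioo, sub_zero]
          calc ENNReal.ofReal y⁻¹ * volume (Set.Iio y ∩ Set.Ioo (0:ℝ) M)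
              ≤ ENNReal.ofReal y⁻¹ * ENNReal.ofReal y := mul_le_mul_right hvol _
            _ = ENNReal.ofReal (y⁻¹ * y) := (ENNReal.ofReal_mul (by positivity)).symm
            _ = 1 := by rw [inv_mul_cancel₀ hy.ne', ENNReal.ofReal_one]
    _ = 1 := by simp

lemma aux_meas (μ : Measure ℝ) [IsProbabilityMeasure μ] :
    StronglyMeasurable (fun x : ℝ => ∫ y in Set.Ioi x, y⁻¹ ∂μ) := by
  have h : StronglyMeasurable (fun p : ℝ × ℝ => if p.1 < p.2 then p.2⁻¹ else 0) :=
    (Measurable.ite (measurableSet_lt measurable_fst measurable_snd)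
      measurable_snd.inv measurable_const).stronglyMeasurable
  have h2 := h.integral_prod_right' (ν := μ)
  have heq : (fun x : ℝ => ∫ y in Set.Ioi x, y⁻¹ ∂μ)
      = fun x : ℝ => ∫ y, (if x < y then y⁻¹ else 0) ∂μ := by
    funext x
    rw [← integral_indicator measurableSet_Ioi]
    refine integral_congr_ae (ae_of_all _ fun y => ?_)
    simp [Set.indicator, Set.mem_Ioi]
  rw [heq]
  exact h2

lemma aux_measG (μ : Measure ℝ) [IsProbabilityMeasure μ] :
    Measurable (fun x : ℝ => ∫⁻ y in Set.Ioi x, ENNReal.ofReal y⁻¹ ∂μ) := by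
  have hmeas : Measurable (fun p : ℝ × ℝ =>
      if p.1 < p.2 then ENNReal.ofReal p.2⁻¹ else 0) :=
    Measurable.ite (measurableSet_lt measurable_fst measurable_snd)
      (ENNReal.measurable_ofReal.comp measurable_snd.inv) measurable_const
  have h2 := hmeas.lintegral_prod_right' (ν := μ)
  have heq : (fun x : ℝ => ∫⁻ y in Set.Ioi x, ENNReal.ofReal y⁻¹ ∂μ)
      = fun x : ℝ => ∫⁻ y, (if x < y then ENNReal.ofReal y⁻¹ else 0) ∂μ := by
    funext x
    rw [← lintegral_indicator measurableSet_Ioi]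
    refine lintegral_congr fun y => ?_
    simp [Set.indicator, Set.mem_Ioi]
  rw [heq]
  exact h2

lemma aux_xlog : Tendsto (fun x : ℝ => x / Real.log x) atTop atTop := by
  rw [tendsto_atTop]
  intro b
  set b' := max b 1 with hb'
  have hb'pos : (0:ℝ) < b' := lt_of_lt_of_le one_pos (le_max_right _ _)
  have hev := isLittleO_iff.mp Real.isLittleO_log_id_atTop (by positivity : (0:ℝ) < 1/b')
  filter_upwards [hev, eventually_ge_atTop (3:ℝ)] with x hx h3
  have hx1 : (1:ℝ) < x := by linarith
  have hlogpos : 0 < Real.log x := Real.log_pos hx1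
  rw [Real.norm_eq_abs, Real.norm_eq_abs, abs_of_pos hlogpos, id_eq,
    abs_of_pos (by linarith : (0:ℝ) < x)] at hx
  rw [le_div_iff₀ hlogpos]
  calc b * Real.log x ≤ b' * Real.log x :=
      mul_le_mul_of_nonneg_right (le_max_left _ _) hlogpos.le
    _ ≤ b' * (1/b' * x) := mul_le_mul_of_nonneg_left hx hb'pos.le
    _ = x := by field_simp

set_option maxHeartbeats 1000000 in
/-- **The lower part of the bias integral is negligible.** Under the second-order
condition with `0 < α < β < ∞`, `C₁ > 0`, and with the truncation level
`a_m = κ m^(1/α) (ln m)^(-1/α)` where `0 < κ < (C₁/ζ)^(1/α)`, one has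
`K_{m,1} = m ∫₀^{a_m} F^(m-1)(x₂)(∫_{x₂}^∞ x₁⁻¹ dF(x₁)) dx₂ = o(m^(-ζ))` as `m → ∞`. -/
theorem lower_integral_negligible
    (μ : Measure ℝ) [IsProbabilityMeasure μ]
    (F : ℝ → ℝ) (hF : ∀ x, F x = (μ (Set.Iic x)).toReal)
    (C₁ C₂ α β : ℝ) (hα : 0 < α) (hαβ : α < β) (hC₁ : 0 < C₁)
    (hso : SecondOrderCondition F C₁ C₂ α β)
    (ζ : ℝ) (hζ : ζ = (β - α) / α)
    (κ : ℝ) (hκ : 0 < κ) (hκ' : κ < (C₁ / ζ) ^ (1 / α))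
    (a : ℕ → ℝ)
    (ha : ∀ m : ℕ, a m = κ * (m : ℝ) ^ (1 / α) * (Real.log m) ^ (-(1 / α))) :
    (fun m : ℕ => (m : ℝ) *
        ∫ x in Set.Ioo (0 : ℝ) (a m), (F x) ^ (m - 1) * ∫ y in Set.Ioi x, y⁻¹ ∂μ)
      =o[atTop] fun m : ℕ => (m : ℝ) ^ (-ζ) := by
  classical
  -- basic facts about F
  have hF0 : ∀ x, 0 ≤ F x := fun x => by rw [hF]; exact ENNReal.toReal_nonneg
  have hFmono : Monotone F := by
    intro x y hxy
    rw [hF x, hF y]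
    exact ENNReal.toReal_mono (measure_ne_top μ _) (measure_mono (Set.Iic_subset_Iic.2 hxy))
  have htail : ∀ x : ℝ, (μ (Set.Ioi x)).toReal = 1 - F x := by
    intro x
    rw [← Set.compl_Iic, measure_compl measurableSet_Iic (measure_ne_top μ _), measure_univ,
      ENNReal.toReal_sub_of_le prob_le_one ENNReal.one_ne_top, ENNReal.toReal_one, hF]
  set g : ℝ → ℝ := fun x => ∫ y in Set.Ioi x, y⁻¹ ∂μ with hgdef
  have hgmeas : Measurable g := (aux_meas μ).measurable
  have hgnn : ∀ x : ℝ, 0 < x → 0 ≤ g x := fun x hx =>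
    setIntegral_nonneg measurableSet_Ioi fun y hy => inv_nonneg.2 (hx.trans hy).le
  have hgint : ∀ x : ℝ, 0 < x → IntegrableOn (fun y : ℝ => y⁻¹) (Set.Ioi x) μ := by
    intro x hx
    refine Integrable.mono' (integrable_const x⁻¹) measurable_inv.aestronglyMeasurable ?_
    refine (ae_restrict_iff' measurableSet_Ioi).2 (ae_of_all _ fun y hy => ?_)
    rw [Real.norm_eq_abs, abs_of_pos (inv_pos.2 (hx.trans hy))]
    exact inv_anti₀ hx hy.le
  have hofg : ∀ x : ℝ, 0 < x →
      ENNReal.ofReal (g x) ≤ ∫⁻ y in Set.Ioi x, ENNReal.ofReal y⁻¹ ∂μ := by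
    intro x hx
    refine le_of_eq (ofReal_integral_eq_lintegral_ofReal (hgint x hx) ?_)
    exact (ae_restrict_iff' measurableSet_Ioi).2
      (ae_of_all _ fun y hy => inv_nonneg.2 (hx.trans hy).le)
  have hgle : ∀ x : ℝ, 0 < x → g x ≤ x⁻¹ * (1 - F x) := by
    intro x hx
    have hbound : ∀ y ∈ Set.Ioi x, ‖y⁻¹‖ ≤ x⁻¹ := by
      intro y hy
      rw [Real.norm_eq_abs, abs_of_pos (inv_pos.2 (hx.trans hy))]
      exact inv_anti₀ hx hy.le
    have hb := norm_setIntegral_le_of_norm_le_const (μ := μ) (s := Set.Ioi x)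
      (measure_lt_top μ _) hbound
    rw [measureReal_def, htail x, Real.norm_eq_abs] at hb
    exact (le_abs_self _).trans hb
  -- constants
  have hζpos : 0 < ζ := by rw [hζ]; exact div_pos (by linarith) hα
  have hκα : 0 < κ ^ α := Real.rpow_pos_of_pos hκ α
  have hζκ : ζ * κ ^ α < C₁ := by
    have h2 := Real.rpow_lt_rpow hκ.le hκ' hα
    rw [← Real.rpow_mul (div_pos hC₁ hζpos).le, one_div_mul_cancel hα.ne',
      Real.rpow_one] at h2
    have h3 := (lt_div_iff₀ hζpos).mp h2
    linarith [h3, mul_comm (κ ^ α) ζ ▸ h3]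
  set c := (ζ * κ ^ α + C₁) / 2 with hcdef
  have hc1 : ζ * κ ^ α < c := by rw [hcdef]; linarith
  have hc2 : c < C₁ := by rw [hcdef]; linarith
  have hcpos : 0 < c := lt_of_le_of_lt (by positivity) hc1
  set ρ := c * (κ ^ α)⁻¹ with hρdef
  have hρζ : ζ < ρ := by
    have := (lt_div_iff₀ hκα).2 hc1
    rwa [div_eq_mul_inv] at this
  have hρpos : 0 < ρ := hζpos.trans hρζ
  set ρ' := (ζ + ρ) / 2 with hρ'def
  have hρ'1 : ζ < ρ' := by rw [hρ'def]; linarith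
  have hρ'2 : ρ' < ρ := by rw [hρ'def]; linarith
  have hρ'pos : 0 < ρ' := hζpos.trans hρ'1
  set D := C₁ + (1 + |C₂|) with hDdef
  have hDpos : 0 < D := by positivity
  -- tail bounds from the second order condition
  have hev : ∀ᶠ x : ℝ in atTop, (c * x ^ (-α) ≤ 1 - F x ∧ 1 - F x ≤ D * x ^ (-α)) := by
    have h1 := isLittleO_iff.mp hso one_pos
    have h2 : Tendsto (fun x : ℝ => x ^ (-(β - α))) atTop (nhds 0) :=
      tendsto_rpow_neg_atTop (by linarith)
    have h3 : ∀ᶠ x : ℝ in atTop, x ^ (-(β - α)) < (C₁ - c) / (1 + |C₂|) :=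
      h2.eventually_lt_const (div_pos (by linarith) (by positivity))
    filter_upwards [h1, h3, eventually_ge_atTop (1:ℝ)] with x hx1 hx3 hxge
    have hx0 : (0:ℝ) < x := lt_of_lt_of_le one_pos hxge
    have hxb : (0:ℝ) < x ^ (-β) := Real.rpow_pos_of_pos hx0 _
    have hxa : (0:ℝ) < x ^ (-α) := Real.rpow_pos_of_pos hx0 _
    rw [Real.norm_eq_abs, Real.norm_eq_abs, abs_of_pos hxb, one_mul] at hx1
    have habs := abs_le.mp hx1
    have hsplit : x ^ (-β) = x ^ (-(β - α)) * x ^ (-α) := by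
      rw [← Real.rpow_add hx0]; ring_nf
    have hkey : (1 + |C₂|) * x ^ (-β) ≤ (C₁ - c) * x ^ (-α) := by
      rw [hsplit, ← mul_assoc]
      refine mul_le_mul_of_nonneg_right ?_ hxa.le
      calc (1 + |C₂|) * x ^ (-(β - α)) ≤ (1 + |C₂|) * ((C₁ - c) / (1 + |C₂|)) :=
          mul_le_mul_of_nonneg_left hx3.le (by positivity)
        _ = C₁ - c := mul_div_cancel₀ _ (by positivity)
    have hC₂l : -(|C₂| * x ^ (-β)) ≤ C₂ * x ^ (-β) := by
      rw [← neg_mul]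
      exact mul_le_mul_of_nonneg_right (neg_abs_le C₂) hxb.le
    have hC₂u : C₂ * x ^ (-β) ≤ |C₂| * x ^ (-β) :=
      mul_le_mul_of_nonneg_right (le_abs_self C₂) hxb.le
    have hxab : x ^ (-β) ≤ x ^ (-α) :=
      Real.rpow_le_rpow_of_exponent_le hxge (by linarith)
    have hxab' : (1 + |C₂|) * x ^ (-β) ≤ (1 + |C₂|) * x ^ (-α) :=
      mul_le_mul_of_nonneg_left hxab (by positivity)
    constructor
    · linarith [habs.1]
    · rw [hDdef]
      linarith [habs.2]
  obtain ⟨M₀, hM₀⟩ := eventually_atTop.mp hev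
  set M := max M₀ 1 with hMdef
  have hM1 : (1:ℝ) ≤ M := le_max_right _ _
  have hMpos : (0:ℝ) < M := lt_of_lt_of_le one_pos hM1
  have hP : ∀ x : ℝ, M ≤ x → c * x ^ (-α) ≤ 1 - F x ∧ 1 - F x ≤ D * x ^ (-α) :=
    fun x hx => hM₀ x ((le_max_left _ _).trans hx)
  set θ := F M with hθdef
  have hθ0 : 0 ≤ θ := hF0 M
  have hθ1 : θ < 1 := by
    have h := (hP M le_rfl).1
    have hMα : 0 < M ^ (-α) := Real.rpow_pos_of_pos hMpos _
    linarith [mul_pos hcpos hMα]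
  -- a m tends to infinity
  have ha_tend : Tendsto a atTop atTop := by
    have h₂ : Tendsto (fun x : ℝ => κ * (x / Real.log x) ^ (1/α)) atTop atTop :=
      ((tendsto_rpow_atTop (by positivity)).comp aux_xlog).const_mul_atTop hκ
    have h₃ := h₂.comp (tendsto_natCast_atTop_atTop (R := ℝ))
    refine Tendsto.congr' ?_ h₃
    filter_upwards [eventually_ge_atTop 2] with m hm
    have hm1 : (1:ℝ) < m := by exact_mod_cast Nat.lt_of_lt_of_le Nat.one_lt_two hm
    have hm0 : (0:ℝ) < m := by linarith
    have hlog : 0 < Real.log m := Real.log_pos hm1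
    show κ * ((m:ℝ) / Real.log m) ^ (1/α) = a m
    rw [ha m, div_eq_mul_inv, Real.mul_rpow hm0.le (inv_nonneg.2 hlog.le),
      Real.inv_rpow hlog.le, ← Real.rpow_neg hlog.le]
    ring
  -- the comparison little-o
  have hlittle : (fun m : ℕ => (m:ℝ) ^ (-ρ')) =o[atTop] fun m : ℕ => (m:ℝ) ^ (-ζ) := by
    rw [isLittleO_iff]
    intro ε hε
    have h := (tendsto_rpow_neg_atTop (show (0:ℝ) < ρ' - ζ by linarith)).comp
      (tendsto_natCast_atTop_atTop (R := ℝ))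
    filter_upwards [h.eventually_lt_const hε, eventually_ge_atTop 1] with m hm hm1
    have hm1R : (1:ℝ) ≤ m := by exact_mod_cast hm1
    have hm0 : (0:ℝ) < m := by linarith
    have h1 : (m:ℝ) ^ (-ρ') = (m:ℝ) ^ (-(ρ' - ζ)) * (m:ℝ) ^ (-ζ) := by
      rw [← Real.rpow_add hm0]; ring_nf
    rw [Real.norm_eq_abs, Real.norm_eq_abs, abs_of_pos (Real.rpow_pos_of_pos hm0 _),
      abs_of_pos (Real.rpow_pos_of_pos hm0 _), h1]
    have hm' : (m:ℝ) ^ (-(ρ' - ζ)) ≤ ε := le_of_lt hm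
    exact mul_le_mul_of_nonneg_right hm' (Real.rpow_pos_of_pos hm0 _).le
  -- geometric decay beats polynomial
  obtain ⟨k, hk⟩ := exists_nat_ge (1 + ρ')
  have htendθ : Tendsto (fun m : ℕ => ((m - 1 : ℕ):ℝ) ^ k * θ ^ (m - 1)) atTop (nhds 0) :=
    (tendsto_pow_const_mul_const_pow_of_lt_one k hθ0 hθ1).comp (tendsto_sub_atTop_nat 1)
  have hsmallθ : ∀ᶠ m : ℕ in atTop, ((m - 1 : ℕ):ℝ) ^ k * θ ^ (m - 1) < 1 / 2 ^ k :=
    htendθ.eventually_lt_const (by positivity)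
  have hρev : ∀ᶠ m : ℕ in atTop, ρ' * m ≤ ρ * ((m:ℝ) - 1) := by
    filter_upwards [(tendsto_natCast_atTop_atTop (R := ℝ)).eventually_ge_atTop
      (ρ / (ρ - ρ'))] with m hm
    have h2 : ρ ≤ (m:ℝ) * (ρ - ρ') := (div_le_iff₀ (by linarith)).mp hm
    nlinarith [h2]
  set C₀ := 1 + 2 * D / (c * α) with hC₀def
  -- the main eventual bound
  have hmain : ∀ᶠ m : ℕ in atTop,
      ‖(m:ℝ) * ∫ x in Set.Ioo (0:ℝ) (a m), F x ^ (m - 1) * g x‖ ≤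
        C₀ * ‖(m:ℝ) ^ (-ρ')‖ := by
    filter_upwards [eventually_ge_atTop 2, ha_tend.eventually_ge_atTop M, hsmallθ, hρev]
      with m hm2 hMa hsθ hρm
    set n := m - 1 with hndef
    have hmR : (2:ℝ) ≤ m := by exact_mod_cast hm2
    have hm0 : (0:ℝ) < m := by linarith
    have hm1R : (1:ℝ) ≤ m := by linarith
    have hnc : ((n:ℕ):ℝ) = (m:ℝ) - 1 := by
      rw [hndef, Nat.cast_sub (by omega : 1 ≤ m)]; norm_num
    have hnpos : (0:ℝ) < n := by rw [hnc]; linarith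
    have hm2n : (m:ℝ) ≤ 2 * (n:ℕ) := by rw [hnc]; linarith
    set T := ((n:ℕ):ℝ) * c with hTdef
    have hT : 0 < T := mul_pos hnpos hcpos
    have hTα : 0 < T * α := mul_pos hT hα
    have hlogm : 0 < Real.log m := Real.log_pos (by linarith)
    have haM : (0:ℝ) < a m := lt_of_lt_of_le hMpos hMa
    -- pointwise exp bound
    have hFexp : ∀ x : ℝ, M ≤ x → F x ^ n ≤ Real.exp (-T * x ^ (-α)) := by
      intro x hx
      have h1 : F x ≤ Real.exp (-(1 - F x)) := by
        have := Real.add_one_le_exp (-(1 - F x))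
        linarith
      have h2 : Real.exp (-(1 - F x)) ≤ Real.exp (-(c * x ^ (-α))) :=
        Real.exp_le_exp.2 (by linarith [(hP x hx).1])
      calc F x ^ n ≤ Real.exp (-(c * x ^ (-α))) ^ n :=
          pow_le_pow_left₀ (hF0 x) (h1.trans h2) n
        _ = Real.exp (-T * x ^ (-α)) := by
          rw [← Real.exp_nat_mul]
          congr 1
          rw [hTdef]; ring
    -- express the integral via a lower integral
    have hI : (∫ x in Set.Ioo (0:ℝ) (a m), F x ^ n * g x)
        = (∫⁻ x in Set.Ioo (0:ℝ) (a m), ENNReal.ofReal (F x ^ n * g x)).toReal := by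
      rw [integral_eq_lintegral_of_nonneg_ae]
      · exact (ae_restrict_iff' measurableSet_Ioo).2 (ae_of_all _ fun x hx =>
          mul_nonneg (pow_nonneg (hF0 x) n) (hgnn x hx.1))
      · exact ((hFmono.measurable.pow_const n).mul hgmeas).aestronglyMeasurable.restrict
    set E := Real.exp (-T * (a m) ^ (-α)) with hEdef
    have hE0 : 0 < E := Real.exp_pos _
    -- part 1
    have hpart1 : (∫⁻ x in Set.Ioo (0:ℝ) M, ENNReal.ofReal (F x ^ n * g x))
        ≤ ENNReal.ofReal (θ ^ n) := by
      have hb : ∀ x ∈ Set.Ioo (0:ℝ) M, ENNReal.ofReal (F x ^ n * g x) ≤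
          ENNReal.ofReal (θ ^ n) * (∫⁻ y in Set.Ioi x, ENNReal.ofReal y⁻¹ ∂μ) := by
        intro x hx
        rw [ENNReal.ofReal_mul (pow_nonneg (hF0 x) n)]
        exact mul_le_mul' (ENNReal.ofReal_le_ofReal
          (pow_le_pow_left₀ (hF0 x) (hFmono hx.2.le) n)) (hofg x hx.1)
      calc (∫⁻ x in Set.Ioo (0:ℝ) M, ENNReal.ofReal (F x ^ n * g x))
          ≤ ∫⁻ x in Set.Ioo (0:ℝ) M,
              ENNReal.ofReal (θ ^ n) * (∫⁻ y in Set.Ioi x, ENNReal.ofReal y⁻¹ ∂μ) :=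
            setLIntegral_mono (measurable_const.mul (aux_measG μ)) hb
        _ = ENNReal.ofReal (θ ^ n) *
              ∫⁻ x in Set.Ioo (0:ℝ) M, (∫⁻ y in Set.Ioi x, ENNReal.ofReal y⁻¹ ∂μ) :=
            lintegral_const_mul' _ _ ENNReal.ofReal_ne_top
        _ ≤ ENNReal.ofReal (θ ^ n) * 1 := mul_le_mul_right (aux_tonelli μ M) _
        _ = ENNReal.ofReal (θ ^ n) := mul_one _
    -- part 2
    have hbnd2 : ∀ x ∈ Set.Icc M (a m), F x ^ n * g x ≤
        D * (Real.exp (-T * x ^ (-α)) * (x⁻¹ * x ^ (-α))) := by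
      intro x hx
      have hxM : M ≤ x := hx.1
      have hx0 : 0 < x := lt_of_lt_of_le hMpos hxM
      have h1 : g x ≤ x⁻¹ * (D * x ^ (-α)) :=
        (hgle x hx0).trans (mul_le_mul_of_nonneg_left (hP x hxM).2 (inv_nonneg.2 hx0.le))
      have h2 := hFexp x hxM
      calc F x ^ n * g x ≤ Real.exp (-T * x ^ (-α)) * (x⁻¹ * (D * x ^ (-α))) :=
          mul_le_mul h2 h1 (hgnn x hx0) (Real.exp_pos _).le
        _ = D * (Real.exp (-T * x ^ (-α)) * (x⁻¹ * x ^ (-α))) := by ring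
    have hcont2 : IntegrableOn
        (fun x : ℝ => D * (Real.exp (-T * x ^ (-α)) * (x⁻¹ * x ^ (-α))))
        (Set.Icc M (a m)) volume := by
      apply ContinuousOn.integrableOn_Icc
      have hne : ∀ x ∈ Set.Icc M (a m), x ≠ 0 := fun x hx => (lt_of_lt_of_le hMpos hx.1).ne'
      have hr : ContinuousOn (fun x : ℝ => x ^ (-α)) (Set.Icc M (a m)) := fun x hx =>
        (Real.continuousAt_rpow_const x _ (Or.inl (hne x hx))).continuousWithinAt
      exact continuousOn_const.mul ((Real.continuous_exp.comp_continuousOn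
        (continuousOn_const.mul hr)).mul ((continuousOn_id.inv₀ hne).mul hr))
    have hrpmeas : Measurable fun x : ℝ => x ^ (-α) := measurable_id.pow measurable_const
    have hpart2 : (∫⁻ x in Set.Icc M (a m), ENNReal.ofReal (F x ^ n * g x))
        ≤ ENNReal.ofReal (D * (E / (T * α))) := by
      calc (∫⁻ x in Set.Icc M (a m), ENNReal.ofReal (F x ^ n * g x))
          ≤ ∫⁻ x in Set.Icc M (a m),
              ENNReal.ofReal (D * (Real.exp (-T * x ^ (-α)) * (x⁻¹ * x ^ (-α)))) := by
            refine setLIntegral_mono ?_ (fun x hx => ENNReal.ofReal_le_ofReal (hbnd2 x hx))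
            exact ENNReal.measurable_ofReal.comp (measurable_const.mul
              ((Real.measurable_exp.comp (measurable_const.mul hrpmeas)).mul
                (measurable_inv.mul hrpmeas)))
        _ = ENNReal.ofReal (∫ x in Set.Icc M (a m),
              D * (Real.exp (-T * x ^ (-α)) * (x⁻¹ * x ^ (-α)))) := by
            refine (ofReal_integral_eq_lintegral_ofReal hcont2 ?_).symm
            refine (ae_restrict_iff' measurableSet_Icc).2 (ae_of_all _ fun x hx => ?_)
            have hx0 : 0 < x := lt_of_lt_of_le hMpos hx.1
            exact mul_nonneg hDpos.le (mul_nonneg (Real.exp_pos _).le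
              (mul_nonneg (inv_nonneg.2 hx0.le) (Real.rpow_nonneg hx0.le _)))
        _ ≤ ENNReal.ofReal (D * (E / (T * α))) := by
            apply ENNReal.ofReal_le_ofReal
            rw [MeasureTheory.integral_Icc_eq_integral_Ioo, MeasureTheory.integral_const_mul]
            exact mul_le_mul_of_nonneg_left
              (aux_integral_exp_rpow α T M (a m) hα hT hMpos hMa) hDpos.le
    -- combine
    have hsplit : (∫⁻ x in Set.Ioo (0:ℝ) (a m), ENNReal.ofReal (F x ^ n * g x))
        ≤ ENNReal.ofReal (θ ^ n) + ENNReal.ofReal (D * (E / (T * α))) := by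
      calc (∫⁻ x in Set.Ioo (0:ℝ) (a m), ENNReal.ofReal (F x ^ n * g x))
          ≤ ∫⁻ x in Set.Ioo (0:ℝ) M ∪ Set.Icc M (a m),
              ENNReal.ofReal (F x ^ n * g x) := by
            refine lintegral_mono_set fun x hx => ?_
            rcases lt_or_ge x M with h | h
            · exact Or.inl ⟨hx.1, h⟩
            · exact Or.inr ⟨h, hx.2.le⟩
        _ ≤ (∫⁻ x in Set.Ioo (0:ℝ) M, ENNReal.ofReal (F x ^ n * g x)) +
              ∫⁻ x in Set.Icc M (a m), ENNReal.ofReal (F x ^ n * g x) :=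
            lintegral_union_le _ _ _
        _ ≤ _ := add_le_add hpart1 hpart2
    have hIle : (∫ x in Set.Ioo (0:ℝ) (a m), F x ^ n * g x)
        ≤ θ ^ n + D * (E / (T * α)) := by
      rw [hI]
      refine le_trans (ENNReal.toReal_mono ?_ hsplit) ?_
      · exact ENNReal.add_ne_top.2 ⟨ENNReal.ofReal_ne_top, ENNReal.ofReal_ne_top⟩
      · rw [ENNReal.toReal_add ENNReal.ofReal_ne_top ENNReal.ofReal_ne_top,
          ENNReal.toReal_ofReal (pow_nonneg hθ0 n),
          ENNReal.toReal_ofReal (mul_nonneg hDpos.le (div_nonneg hE0.le hTα.le))]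
    -- the exponential term
    have hamα : (a m) ^ (-α) = (κ ^ α)⁻¹ * ((m:ℝ)⁻¹ * Real.log m) := by
      rw [ha m, Real.mul_rpow (mul_nonneg hκ.le (Real.rpow_nonneg hm0.le _))
          (Real.rpow_nonneg hlogm.le _),
        Real.mul_rpow hκ.le (Real.rpow_nonneg hm0.le _),
        ← Real.rpow_mul hm0.le, ← Real.rpow_mul hlogm.le, Real.rpow_neg hκ.le,
        show 1/α * (-α) = -1 by field_simp,
        show -(1/α) * (-α) = 1 by field_simp,
        Real.rpow_neg_one, Real.rpow_one]
      ring
    have hexpE : E ≤ (m:ℝ) ^ (-ρ') := by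
      rw [hEdef, hamα,
        show (m:ℝ) ^ (-ρ') = Real.exp (Real.log m * (-ρ')) from by
          rw [Real.rpow_def_of_pos hm0]]
      apply Real.exp_le_exp.2
      rw [show -T * ((κ^α)⁻¹ * ((m:ℝ)⁻¹ * Real.log m))
            = -((T * (κ^α)⁻¹ * Real.log m) / m) from by field_simp,
        show Real.log (m:ℝ) * (-ρ') = -(ρ' * Real.log m) from by ring, neg_le_neg_iff,
        le_div_iff₀ hm0]
      have hTρ : T * (κ^α)⁻¹ = ρ * (n:ℕ) := by rw [hTdef, hρdef]; ring
      rw [hTρ, hnc, show ρ' * Real.log (m:ℝ) * (m:ℝ) = ρ' * (m:ℝ) * Real.log (m:ℝ) by ring]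
      exact mul_le_mul_of_nonneg_right hρm hlogm.le
    -- the geometric term
    have hθm : (m:ℝ) * θ ^ n ≤ (m:ℝ) ^ (-ρ') := by
      have hmk : (m:ℝ) ^ ((1:ℝ) + ρ') ≤ (m:ℝ) ^ (k:ℕ) := by
        rw [← Real.rpow_natCast (m:ℝ) k]
        exact Real.rpow_le_rpow_of_exponent_le hm1R hk
      have h2n : (m:ℝ) ^ (k:ℕ) ≤ 2 ^ k * ((n:ℕ):ℝ) ^ k := by
        calc (m:ℝ) ^ k ≤ (2 * ((n:ℕ):ℝ)) ^ k := pow_le_pow_left₀ hm0.le hm2n k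
          _ = 2 ^ k * ((n:ℕ):ℝ) ^ k := mul_pow _ _ _
      have hkey : (m:ℝ) ^ ((1:ℝ) + ρ') * θ ^ n ≤ 1 := by
        calc (m:ℝ) ^ ((1:ℝ) + ρ') * θ ^ n ≤ (2 ^ k * ((n:ℕ):ℝ) ^ k) * θ ^ n :=
            mul_le_mul_of_nonneg_right (hmk.trans h2n) (pow_nonneg hθ0 n)
          _ = 2 ^ k * (((n:ℕ):ℝ) ^ k * θ ^ n) := by ring
          _ ≤ 2 ^ k * (1 / 2 ^ k) := mul_le_mul_of_nonneg_left hsθ.le (by positivity)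
          _ = 1 := by field_simp
      have hdecomp : (m:ℝ) * θ ^ n = (m:ℝ) ^ (-ρ') * ((m:ℝ) ^ ((1:ℝ) + ρ') * θ ^ n) := by
        rw [← mul_assoc, ← Real.rpow_add hm0, show -ρ' + ((1:ℝ) + ρ') = 1 by ring,
          Real.rpow_one]
      rw [hdecomp]
      calc (m:ℝ) ^ (-ρ') * ((m:ℝ) ^ ((1:ℝ) + ρ') * θ ^ n) ≤ (m:ℝ) ^ (-ρ') * 1 :=
          mul_le_mul_of_nonneg_left hkey (Real.rpow_nonneg hm0.le _)
        _ = (m:ℝ) ^ (-ρ') := mul_one _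
    -- final assembly
    have hKnn : 0 ≤ (m:ℝ) * ∫ x in Set.Ioo (0:ℝ) (a m), F x ^ n * g x := by
      apply mul_nonneg hm0.le
      rw [hI]; exact ENNReal.toReal_nonneg
    rw [Real.norm_eq_abs, abs_of_nonneg hKnn, Real.norm_eq_abs,
      abs_of_nonneg (Real.rpow_nonneg hm0.le _)]
    have hstep : (m:ℝ) * (∫ x in Set.Ioo (0:ℝ) (a m), F x ^ n * g x)
        ≤ (m:ℝ) * θ ^ n + (m:ℝ) * (D * (E / (T * α))) := by
      calc (m:ℝ) * (∫ x in Set.Ioo (0:ℝ) (a m), F x ^ n * g x)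
          ≤ (m:ℝ) * (θ ^ n + D * (E / (T * α))) := mul_le_mul_of_nonneg_left hIle hm0.le
        _ = (m:ℝ) * θ ^ n + (m:ℝ) * (D * (E / (T * α))) := mul_add _ _ _
    have h2 : (m:ℝ) * (D * (E / (T * α))) ≤ 2 * D / (c * α) * (m:ℝ) ^ (-ρ') := by
      rw [show (m:ℝ) * (D * (E / (T * α))) = (m:ℝ) * D * E / (T * α) from by ring,
        div_le_iff₀ hTα]
      have hrw : 2 * D / (c * α) * (m:ℝ) ^ (-ρ') * (T * α)
          = 2 * D * (m:ℝ) ^ (-ρ') * ((n:ℕ):ℝ) := by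
        rw [hTdef]; field_simp
      rw [hrw]
      have e1 : (m:ℝ) * D * E ≤ (2 * ((n:ℕ):ℝ)) * D * E := by
        calc (m:ℝ) * D * E = (m:ℝ) * (D * E) := by ring
          _ ≤ (2 * ((n:ℕ):ℝ)) * (D * E) :=
            mul_le_mul_of_nonneg_right hm2n (mul_nonneg hDpos.le hE0.le)
          _ = (2 * ((n:ℕ):ℝ)) * D * E := by ring
      have e2 : (2 * ((n:ℕ):ℝ)) * D * E ≤ 2 * D * (m:ℝ) ^ (-ρ') * ((n:ℕ):ℝ) := by
        calc (2 * ((n:ℕ):ℝ)) * D * E = (2 * ((n:ℕ):ℝ) * D) * E := by ring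
          _ ≤ (2 * ((n:ℕ):ℝ) * D) * ((m:ℝ) ^ (-ρ')) :=
            mul_le_mul_of_nonneg_left hexpE
              (by positivity : (0:ℝ) ≤ 2 * ((n:ℕ):ℝ) * D)
          _ = 2 * D * (m:ℝ) ^ (-ρ') * ((n:ℕ):ℝ) := by ring
      exact e1.trans e2
    calc (m:ℝ) * (∫ x in Set.Ioo (0:ℝ) (a m), F x ^ n * g x)
        ≤ (m:ℝ) * θ ^ n + (m:ℝ) * (D * (E / (T * α))) := hstep
      _ ≤ (m:ℝ) ^ (-ρ') + 2 * D / (c * α) * (m:ℝ) ^ (-ρ') := add_le_add hθm h2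
      _ = C₀ * (m:ℝ) ^ (-ρ') := by rw [hC₀def]; ring
  exact (Asymptotics.IsBigO.of_bound C₀ hmain).trans_isLittleO hlittle
end

section
/- Let 0 < α < β < ∞, C₁ > 0, C₂ ∈ ℝ, set F̃(x) = 1 − C₁x^{−α} − C₂x^{−β}, ζ = (β−α)/α, and a_m = κ m^{1/α} (ln m)^{−1/α} with 0 < κ < (C₁/ζ)^{1/α}. Then K''_{m,2} := C₂ β m (1/(β+1) − 1/(α+1)) ∫_{a_m}^∞ x^{−β−1} F̃^{m−1}(x) dx satisfies K''_{m,2} ∼ −χ m^{−ζ} as m → ∞, where χ = C₂ β ζ Γ(ζ+1) / (C₁^{ζ+1}(α+1)(β+1)). -/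
open MeasureTheory Filter Set Asymptotics
open scoped Topology



private lemma aux_anti {α A : ℝ} (hα : 0 < α) (hA : 0 < A) {x y : ℝ} (hx : 0 < x)
    (hxy : x < y) : A * y ^ (-α) < A * x ^ (-α) := by
  have h1 : x ^ α < y ^ α := Real.rpow_lt_rpow hx.le hxy hα
  have h2 : y ^ (-α) < x ^ (-α) := by
    rw [Real.rpow_neg (hx.trans hxy).le, Real.rpow_neg hx.le]
    exact inv_strictAnti₀ (Real.rpow_pos_of_pos hx _) h1
  exact mul_lt_mul_of_pos_left h2 hA

private lemma aux_image (α A a : ℝ) (hα : 0 < α) (hA : 0 < A) (ha : 0 < a) :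
    (fun x : ℝ => A * x ^ (-α)) '' Ioi a = Ioo 0 (A * a ^ (-α)) := by
  ext t
  constructor
  · rintro ⟨x, hx, rfl⟩
    have hx0 : 0 < x := ha.trans hx
    exact ⟨mul_pos hA (Real.rpow_pos_of_pos hx0 _), aux_anti hα hA ha hx⟩
  · rintro ⟨ht0, htA⟩
    have haα : 0 < a ^ α := Real.rpow_pos_of_pos ha _
    have hAt0 : 0 < A / t := div_pos hA ht0
    refine ⟨(A / t) ^ (1 / α), ?_, ?_⟩
    · have hAt : a ^ α < A / t := by
        rw [lt_div_iff₀ ht0]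
        have := mul_lt_mul_of_pos_right htA haα
        rw [mul_assoc, ← Real.rpow_add ha, neg_add_cancel, Real.rpow_zero, mul_one] at this
        linarith [this]
      have h := Real.rpow_lt_rpow haα.le hAt (by positivity : (0:ℝ) < 1 / α)
      rwa [← Real.rpow_mul ha.le, mul_one_div, div_self hα.ne', Real.rpow_one] at h
    · show A * ((A / t) ^ (1 / α)) ^ (-α) = t
      rw [← Real.rpow_mul hAt0.le, one_div]
      have : α⁻¹ * -α = -1 := by field_simp
      rw [this, Real.rpow_neg_one]
      field_simp

private lemma aux_subst (α A a : ℝ) (hα : 0 < α) (hA : 0 < A) (ha : 0 < a) (g : ℝ → ℝ) :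
    ∫ s in Ioo 0 (A * a ^ (-α)), g s
      = ∫ x in Ioi a, (α * A * x ^ (-α - 1)) * g (A * x ^ (-α)) := by
  rw [← aux_image α A a hα hA ha]
  rw [integral_image_eq_integral_abs_deriv_smul measurableSet_Ioi
      (f' := fun x => A * (-α * x ^ (-α - 1))) ?_ ?_ g]
  · refine setIntegral_congr_fun measurableSet_Ioi fun x hx => ?_
    have hx0 : 0 < x := ha.trans hx
    have hpos : 0 < α * x ^ (-α - 1) := mul_pos hα (Real.rpow_pos_of_pos hx0 _)
    rw [smul_eq_mul, abs_of_neg (by nlinarith : A * (-α * x ^ (-α - 1)) < 0)]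
    ring_nf
  · intro x hx
    have hx0 : 0 < x := ha.trans hx
    have h := (Real.hasDerivAt_rpow_const (p := -α) (Or.inl hx0.ne')).const_mul A
    have : -α * x ^ (-α - 1) = -α * x ^ (-α - 1) := rfl
    exact h.hasDerivWithinAt
  · exact fun x hx y hy hxy => by
      rcases lt_trichotomy x y with h | h | h
      · exact absurd hxy (aux_anti hα hA (ha.trans hx) h).ne'
      · exact h
      · exact absurd hxy.symm (aux_anti hα hA (ha.trans hy) h).ne'

private lemma aux_limit (ζ D c : ℝ) (hζ : 0 < ζ) (hc : 0 < c) :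
    Tendsto (fun m : ℕ => ∫ s in Ioo (0:ℝ) (c * Real.log m),
        s ^ ζ * (1 - s / m - D * (s / m) ^ (1 + ζ)) ^ (m - 1)) atTop
      (𝓝 (Real.Gamma (ζ + 1))) := by
  set G : ℝ → ℝ := fun t => 1 - t - D * t ^ (1 + ζ) with hG
  set t₀ : ℝ := min 2⁻¹ ((2 * (|D| + 1))⁻¹ ^ ζ⁻¹) with ht₀def
  have hDpos : (0:ℝ) < 2 * (|D| + 1) := by positivity
  have ht₀ : 0 < t₀ := lt_min (by norm_num) (Real.rpow_pos_of_pos (by positivity) _)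
  have ht₀half : t₀ ≤ 2⁻¹ := min_le_left _ _
  -- key pointwise bounds
  have habs : ∀ t : ℝ, 0 < t → t ≤ t₀ → |G t| ≤ 1 - t / 2 ∧ 0 < G t := by
    intro t ht ht'
    have hDt : |D * t ^ (1 + ζ)| ≤ t / 2 := by
      rw [abs_mul, abs_of_nonneg (Real.rpow_nonneg ht.le _)]
      have h1 : t ^ (1 + ζ) = t * t ^ ζ := by
        rw [Real.rpow_add ht, Real.rpow_one]
      have h2 : t ^ ζ ≤ (2 * (|D| + 1))⁻¹ := by
        calc t ^ ζ ≤ ((2 * (|D| + 1))⁻¹ ^ ζ⁻¹) ^ ζ := by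
              exact Real.rpow_le_rpow ht.le (le_trans ht' (min_le_right _ _)) hζ.le
          _ = (2 * (|D| + 1))⁻¹ := by
              rw [← Real.rpow_mul (by positivity), inv_mul_cancel₀ hζ.ne', Real.rpow_one]
      have h3 : |D| * t ^ (1 + ζ) ≤ |D| * (t * (2 * (|D| + 1))⁻¹) := by
        rw [h1]
        exact mul_le_mul_of_nonneg_left (mul_le_mul_of_nonneg_left h2 ht.le) (abs_nonneg D)
      have h4 : |D| * (t * (2 * (|D| + 1))⁻¹) = t * (|D| / (2 * (|D| + 1))) := by ring
      have h5 : |D| / (2 * (|D| + 1)) ≤ 1 / 2 := by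
        rw [div_le_div_iff₀ hDpos two_pos]; nlinarith [abs_nonneg D]
      calc |D| * t ^ (1 + ζ) ≤ t * (|D| / (2 * (|D| + 1))) := by rw [← h4]; exact h3
        _ ≤ t * (1 / 2) := mul_le_mul_of_nonneg_left h5 ht.le
        _ = t / 2 := by ring
    have hb := abs_le.mp hDt
    have hGpos : 0 < G t := by
      simp only [hG]
      have : t ≤ 2⁻¹ := ht'.trans ht₀half
      nlinarith [hb.1, hb.2]
    refine ⟨?_, hGpos⟩
    rw [abs_of_pos hGpos]
    simp only [hG]
    nlinarith [hb.1, hb.2]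
  -- the functions for DCT
  set F : ℕ → ℝ → ℝ := fun m => (Ioo (0:ℝ) (c * Real.log m)).indicator
    (fun s => s ^ ζ * G (s / m) ^ (m - 1)) with hF
  set f0 : ℝ → ℝ := (Ioi (0:ℝ)).indicator (fun s => Real.exp (-s) * s ^ ζ) with hf0
  set bound : ℝ → ℝ := (Ioi (0:ℝ)).indicator
    (fun s => s ^ ζ * Real.exp (-(4⁻¹ * s))) with hbound
  have hbound_nonneg : ∀ s, 0 ≤ bound s :=
    fun s => indicator_nonneg (fun x hx => mul_nonneg (Real.rpow_nonneg (le_of_lt hx) _) (Real.exp_nonneg _)) s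
  have key : Tendsto (fun m : ℕ => ∫ s, F m s) atTop (𝓝 (∫ s, f0 s)) := by
    refine tendsto_integral_filter_of_dominated_convergence bound ?_ ?_ ?_ ?_
    · -- measurability
      refine Eventually.of_forall fun m => ?_
      refine AEStronglyMeasurable.indicator ?_ measurableSet_Ioo
      refine Continuous.aestronglyMeasurable ?_
      refine ((Real.continuous_rpow_const hζ.le)).mul ?_
      refine Continuous.pow ?_ _
      refine (continuous_const.sub (continuous_id.div_const _)).sub ?_
      exact continuous_const.mul
        ((Real.continuous_rpow_const (by positivity)).comp (continuous_id.div_const _))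
    · -- bound
      have hev1 : ∀ᶠ m : ℕ in atTop, c * Real.log m / m < t₀ := by
        have h1 : Tendsto (fun x : ℝ => c * Real.log x / x) atTop (𝓝 0) :=
          (Real.isLittleO_log_id_atTop.const_mul_left c).tendsto_div_nhds_zero
        exact (h1.comp tendsto_natCast_atTop_atTop).eventually_lt_const ht₀
      filter_upwards [eventually_ge_atTop 2, hev1] with m hm2 hmt₀
      refine Eventually.of_forall fun s => ?_
      by_cases hs : s ∈ Ioo 0 (c * Real.log m)
      · simp only [hF]
        rw [indicator_of_mem hs]
        obtain ⟨hs0, hsL⟩ := hs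
        have hmR : (2:ℝ) ≤ (m:ℝ) := by exact_mod_cast hm2
        have hm0 : (0:ℝ) < m := by linarith
        have hlog0 : 0 ≤ Real.log m := by
          by_contra h
          push_neg at h
          nlinarith [hs0, hsL, mul_neg_of_pos_of_neg hc h]
        have ht : 0 < s / m := div_pos hs0 hm0
        have ht' : s / m ≤ t₀ := by
          rw [div_le_iff₀ hm0]
          have : c * Real.log m < t₀ * m := by
            have := (div_lt_iff₀ hm0).mp hmt₀
            linarith
          linarith
        obtain ⟨hGa, hGp⟩ := habs (s / m) ht ht'
        rw [Real.norm_eq_abs, abs_mul, abs_of_nonneg (Real.rpow_nonneg hs0.le _), abs_pow]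
        have h12 : (0:ℝ) ≤ 1 - s / m / 2 := by
          have := ht'.trans ht₀half; linarith
        have hstep1 : |G (s / m)| ^ (m - 1) ≤ (1 - s / m / 2) ^ (m - 1) :=
          pow_le_pow_left₀ (abs_nonneg _) hGa _
        have hstep2 : (1 - s / m / 2) ^ (m - 1) ≤ Real.exp (-(s / m / 2)) ^ (m - 1) := by
          refine pow_le_pow_left₀ h12 ?_ _
          linarith [Real.add_one_le_exp (-(s / m / 2))]
        have hstep3 : Real.exp (-(s / m / 2)) ^ (m - 1)
            = Real.exp (((m - 1 : ℕ) : ℝ) * (-(s / m / 2))) := by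
          rw [Real.exp_nat_mul]
        have hcast : ((m - 1 : ℕ) : ℝ) = (m : ℝ) - 1 := by
          rw [Nat.cast_sub (by omega), Nat.cast_one]
        have hstep4 : ((m - 1 : ℕ) : ℝ) * (-(s / m / 2)) ≤ -(4⁻¹ * s) := by
          rw [hcast]
          have key2 : 4⁻¹ * s * (2 * m) ≤ ((m:ℝ) - 1) * s := by
            nlinarith [mul_nonneg hs0.le (by linarith : (0:ℝ) ≤ (m:ℝ) - 2)]
          have : 4⁻¹ * s ≤ ((m:ℝ) - 1) * (s / m / 2) := by
            rw [div_div, ← mul_div_assoc, le_div_iff₀ (by positivity : (0:ℝ) < (m:ℝ) * 2)]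
            calc 4⁻¹ * s * ((m:ℝ) * 2) = 4⁻¹ * s * (2 * m) := by ring
              _ ≤ ((m:ℝ) - 1) * s := key2
          linarith
        have : |G (s / m)| ^ (m - 1) ≤ Real.exp (-(4⁻¹ * s)) := by
          calc |G (s / m)| ^ (m - 1) ≤ Real.exp (-(s / m / 2)) ^ (m - 1) :=
                hstep1.trans hstep2
            _ = Real.exp (((m - 1 : ℕ) : ℝ) * (-(s / m / 2))) := hstep3
            _ ≤ Real.exp (-(4⁻¹ * s)) := Real.exp_le_exp.mpr hstep4
        rw [hbound, indicator_of_mem (mem_Ioi.mpr hs0)]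
        exact mul_le_mul_of_nonneg_left this (Real.rpow_nonneg hs0.le _)
      · simp only [hF]
        rw [indicator_of_notMem hs, norm_zero]
        exact hbound_nonneg s
    · -- bound integrable
      rw [hbound, integrable_indicator_iff measurableSet_Ioi]
      have h := integrableOn_rpow_mul_exp_neg_mul_rpow
        (p := 1) (s := ζ) (b := 4⁻¹) (by linarith) one_pos (by norm_num)
      refine h.congr_fun (fun x hx => ?_) measurableSet_Ioi
      simp only [Real.rpow_one]; ring_nf
    · -- pointwise limit
      refine Eventually.of_forall fun s => ?_
      by_cases hs0 : 0 < s
      · have hf0s : f0 s = Real.exp (-s) * s ^ ζ := indicator_of_mem (mem_Ioi.mpr hs0) _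
        rw [hf0s]
        -- exponent limit
        have hG0 : G 0 = 1 := by
          simp only [hG]
          rw [Real.zero_rpow (by positivity : (1:ℝ) + ζ ≠ 0)]
          ring
        have hGd : HasDerivAt G (-1) 0 := by
          have h1 : HasDerivAt (fun t : ℝ => t ^ (1 + ζ))
              ((1 + ζ) * (0:ℝ) ^ (1 + ζ - 1)) 0 :=
            Real.hasDerivAt_rpow_const (Or.inr (by linarith))
          have h0 : (0:ℝ) ^ (1 + ζ - 1) = 0 := by
            rw [Real.zero_rpow (by simpa using hζ.ne')]
          rw [h0, mul_zero] at h1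
          have h2 := ((hasDerivAt_id (0:ℝ)).const_sub 1).sub (h1.const_mul D)
          exact h2.congr_deriv (by simp)
        have hlogd : HasDerivAt (fun t => Real.log (G t)) (-1) 0 := by
          have := hGd.log (by rw [hG0]; norm_num)
          simpa [hG0] using this
        have hslope := hasDerivAt_iff_tendsto_slope.mp hlogd
        have hu : Tendsto (fun m : ℕ => s / m) atTop (𝓝[≠] 0) := by
          rw [tendsto_nhdsWithin_iff]
          constructor
          · exact tendsto_const_div_atTop_nhds_zero_nat s
          · filter_upwards [eventually_ge_atTop 1] with m hm
            have : (0:ℝ) < m := by exact_mod_cast hm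
            exact (div_pos hs0 this).ne'
        have hcomp := hslope.comp hu
        -- slope (log∘G) 0 (s/m) = log (G (s/m)) / (s/m)
        have hslope_eq : ∀ t : ℝ, slope (fun t => Real.log (G t)) 0 t
            = Real.log (G t) / t := by
          intro t
          rw [slope_def_field, hG0, Real.log_one, sub_zero, sub_zero]
        have hcomp' : Tendsto (fun m : ℕ => Real.log (G (s / m)) / (s / m)) atTop
            (𝓝 (-1)) := by
          refine hcomp.congr fun m => ?_
          simp only [Function.comp_apply, hslope_eq]
        have hfac : Tendsto (fun m : ℕ => ((m - 1 : ℕ) : ℝ) * (s / m)) atTop (𝓝 s) := by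
          have h1 : Tendsto (fun m : ℕ => s * (1 - 1 / (m:ℝ))) atTop (𝓝 (s * (1 - 0))) :=
            tendsto_const_nhds.mul (tendsto_const_nhds.sub tendsto_one_div_atTop_nhds_zero_nat)
          rw [sub_zero, mul_one] at h1
          refine h1.congr' ?_
          filter_upwards [eventually_ge_atTop 1] with m hm
          have hm0 : ((m:ℝ)) ≠ 0 := Nat.cast_ne_zero.mpr (by omega)
          rw [Nat.cast_sub (by omega), Nat.cast_one]
          field_simp
        have hexp : Tendsto (fun m : ℕ => ((m - 1 : ℕ) : ℝ) * Real.log (G (s / m)))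
            atTop (𝓝 (-s)) := by
          have h1 := hfac.mul hcomp'
          rw [show s * (-1) = -s by ring] at h1
          refine h1.congr' ?_
          filter_upwards [eventually_ge_atTop 1] with m hm
          have hm0 : ((m:ℝ)) ≠ 0 := Nat.cast_ne_zero.mpr (by omega)
          have hsm : s / (m:ℝ) ≠ 0 := div_ne_zero (ne_of_gt hs0) hm0
          rw [mul_assoc, mul_comm (s / (m:ℝ)), div_mul_cancel₀ _ hsm]
        have hexp2 : Tendsto (fun m : ℕ =>
            s ^ ζ * Real.exp (((m - 1 : ℕ) : ℝ) * Real.log (G (s / m)))) atTop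
            (𝓝 (s ^ ζ * Real.exp (-s))) :=
          tendsto_const_nhds.mul ((Real.continuous_exp.tendsto _).comp hexp)
        have hev : ∀ᶠ m : ℕ in atTop, F m s
            = s ^ ζ * Real.exp (((m - 1 : ℕ) : ℝ) * Real.log (G (s / m))) := by
          have hlogm : Tendsto (fun m : ℕ => c * Real.log m) atTop atTop :=
            (Real.tendsto_log_atTop.comp tendsto_natCast_atTop_atTop).const_mul_atTop hc
          have hsm0 : Tendsto (fun m : ℕ => s / (m:ℝ)) atTop (𝓝 0) :=
            tendsto_const_div_atTop_nhds_zero_nat s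
          filter_upwards [hlogm.eventually_gt_atTop s, hsm0.eventually_le_const ht₀,
            eventually_ge_atTop 1] with m hm1 hm2 hm3
          have hmpos : (0:ℝ) < m := by exact_mod_cast hm3
          have htpos : 0 < s / m := div_pos hs0 hmpos
          obtain ⟨-, hGp⟩ := habs (s / m) htpos hm2
          simp only [hF]
          rw [indicator_of_mem (by exact ⟨hs0, hm1⟩ : s ∈ Ioo 0 (c * Real.log m))]
          rw [Real.exp_nat_mul, Real.exp_log hGp]
        rw [show Real.exp (-s) * s ^ ζ = s ^ ζ * Real.exp (-s) by ring]
        refine hexp2.congr' ?_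
        filter_upwards [hev] with m h
        exact h.symm
      · -- s ≤ 0 : everything is 0
        have h1 : ∀ m : ℕ, F m s = 0 := by
          intro m
          simp only [hF]
          rw [indicator_of_notMem (by simp only [mem_Ioo, not_and]; intro h; exact absurd h hs0)]
        have h2 : f0 s = 0 := by
          rw [hf0, indicator_of_notMem (by simpa using hs0)]
        simp only [h1, h2]
        exact tendsto_const_nhds
  -- rewrite the integrals
  have hFint : ∀ m : ℕ, (∫ s, F m s)
      = ∫ s in Ioo (0:ℝ) (c * Real.log m), s ^ ζ * G (s / m) ^ (m - 1) := by
    intro m; rw [hF, integral_indicator measurableSet_Ioo]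
  have hf0int : (∫ s, f0 s) = Real.Gamma (ζ + 1) := by
    rw [hf0, integral_indicator measurableSet_Ioi]
    rw [Real.Gamma_eq_integral (by linarith : (0:ℝ) < ζ + 1)]
    congr 1
    ext x
    rw [add_sub_cancel_right]
  rw [hf0int] at key
  refine key.congr fun m => ?_
  rw [hFint]


set_option maxHeartbeats 1000000 in
/-- **Asymptotics of the main bias term.** With `F̃(x) = 1 - C₁x^(-α) - C₂x^(-β)`,
`0 < α < β < ∞`, `C₁ > 0`, `ζ = (β-α)/α`, `a_m = κ m^(1/α)(ln m)^(-1/α)` and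
`0 < κ < (C₁/ζ)^(1/α)`, the quantity
`K''_{m,2} = C₂ β m (1/(β+1) - 1/(α+1)) ∫_{a_m}^∞ x^(-β-1) F̃^(m-1)(x) dx`
satisfies `K''_{m,2} ∼ -χ m^(-ζ)` as `m → ∞`, where
`χ = C₂ β ζ Γ(ζ+1)/(C₁^(ζ+1)(α+1)(β+1))`. -/
theorem main_bias_term_asymptotics
    (C₁ C₂ α β : ℝ) (hα : 0 < α) (hαβ : α < β) (hC₁ : 0 < C₁)
    (Ftilde : ℝ → ℝ)
    (hFt : ∀ x : ℝ, Ftilde x = 1 - C₁ * x ^ (-α) - C₂ * x ^ (-β))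
    (ζ χ : ℝ) (hζ : ζ = (β - α) / α)
    (hχ : χ = C₂ * β * ζ * Real.Gamma (ζ + 1) / (C₁ ^ (ζ + 1) * (α + 1) * (β + 1)))
    (κ : ℝ) (hκ : 0 < κ) (hκ' : κ < (C₁ / ζ) ^ (1 / α))
    (a : ℕ → ℝ)
    (ha : ∀ m : ℕ, a m = κ * (m : ℝ) ^ (1 / α) * (Real.log m) ^ (-(1 / α))) :
    (fun m : ℕ => C₂ * β * (m : ℝ) * (1 / (β + 1) - 1 / (α + 1)) *
        ∫ x in Set.Ioi (a m), x ^ (-β - 1) * (Ftilde x) ^ (m - 1))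
      ~[atTop] fun m : ℕ => -χ * (m : ℝ) ^ (-ζ) := by
  have hζpos : 0 < ζ := by rw [hζ]; exact div_pos (by linarith) hα
  have hβpos : 0 < β := hα.trans hαβ
  have hαζ : α * ζ = β - α := by rw [hζ]; field_simp
  have hC₁ζ : (0:ℝ) < C₁ ^ (ζ + 1) := Real.rpow_pos_of_pos hC₁ _
  set c : ℝ := C₁ * κ ^ (-α) with hcdef
  have hcpos : 0 < c := mul_pos hC₁ (Real.rpow_pos_of_pos hκ _)
  set D : ℝ := C₂ / C₁ ^ (1 + ζ) with hDdef
  set E : ℝ := C₂ * β * (1 / (β + 1) - 1 / (α + 1)) * (α⁻¹ * (C₁ ^ (ζ + 1))⁻¹) with hEdef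
  set J : ℕ → ℝ := fun m => ∫ s in Ioo (0:ℝ) (c * Real.log m),
      s ^ ζ * (1 - s / m - D * (s / m) ^ (1 + ζ)) ^ (m - 1) with hJdef
  have hΓpos : 0 < Real.Gamma (ζ + 1) := Real.Gamma_pos_of_pos (by linarith)
  -- the key eventual identity
  have hkey : ∀ᶠ m : ℕ in atTop,
      C₂ * β * (m : ℝ) * (1 / (β + 1) - 1 / (α + 1)) *
        ∫ x in Set.Ioi (a m), x ^ (-β - 1) * (Ftilde x) ^ (m - 1)
      = (E * (m : ℝ) ^ (-ζ)) * J m := by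
    filter_upwards [eventually_ge_atTop 2] with m hm2
    have hm1R : (1:ℝ) < m := by exact_mod_cast Nat.lt_of_lt_of_le one_lt_two hm2
    have hm0 : (0:ℝ) < m := by linarith
    have hlog : 0 < Real.log m := Real.log_pos hm1R
    have ham : 0 < a m := by
      rw [ha]
      exact mul_pos (mul_pos hκ (Real.rpow_pos_of_pos hm0 _)) (Real.rpow_pos_of_pos hlog _)
    set A : ℝ := (m : ℝ) * C₁ with hAdef
    have hApos : 0 < A := mul_pos hm0 hC₁
    -- upper limit
    have hL : A * (a m) ^ (-α) = c * Real.log m := by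
      rw [ha m]
      rw [Real.mul_rpow (by positivity) (Real.rpow_nonneg hlog.le _),
          Real.mul_rpow hκ.le (Real.rpow_nonneg hm0.le _)]
      rw [← Real.rpow_mul hm0.le, ← Real.rpow_mul hlog.le]
      rw [show (1/α) * (-α) = -1 by field_simp, show (-(1/α)) * (-α) = 1 by field_simp]
      rw [Real.rpow_neg_one, Real.rpow_one]
      field_simp
      ring
    set g : ℝ → ℝ := fun s => s ^ ζ * (1 - s / m - D * (s / m) ^ (1 + ζ)) ^ (m - 1) with hgdef
    have hsub := aux_subst α A (a m) hα hApos ham g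
    rw [hL] at hsub
    have heq : ∀ x ∈ Ioi (a m), (α * A * x ^ (-α - 1)) * g (A * x ^ (-α))
        = (α * A ^ (ζ + 1)) * (x ^ (-β - 1) * (Ftilde x) ^ (m - 1)) := by
      intro x hx
      have hx0 : 0 < x := ham.trans hx
      have hxα : 0 < x ^ (-α) := Real.rpow_pos_of_pos hx0 _
      have h1 : A * x ^ (-α) / m = C₁ * x ^ (-α) := by
        rw [hAdef]; field_simp
      have h2 : D * (C₁ * x ^ (-α)) ^ (1 + ζ) = C₂ * x ^ (-β) := by
        rw [Real.mul_rpow hC₁.le hxα.le, ← Real.rpow_mul hx0.le]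
        rw [show (-α) * (1 + ζ) = -β by linear_combination (-1) * hαζ]
        rw [hDdef]
        have hC₁1ζ : C₁ ^ (1 + ζ) ≠ 0 := (Real.rpow_pos_of_pos hC₁ _).ne'
        field_simp
      have h3 : (A * x ^ (-α)) ^ ζ = A ^ ζ * x ^ (-α * ζ) := by
        rw [Real.mul_rpow hApos.le hxα.le, ← Real.rpow_mul hx0.le]
      have h4 : A ^ (ζ + 1) = A ^ ζ * A := by
        rw [Real.rpow_add hApos, Real.rpow_one]
      have h5 : x ^ (-α - 1) * x ^ (-α * ζ) = x ^ (-β - 1) := by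
        rw [← Real.rpow_add hx0]
        congr 1
        linear_combination (-1) * hαζ
      simp only [hgdef]
      rw [h1, h2, ← hFt, h3, h4, ← h5]
      ring
    have h6 : J m = (α * A ^ (ζ + 1)) * ∫ x in Ioi (a m), x ^ (-β - 1) * (Ftilde x) ^ (m - 1) := by
      calc J m = ∫ s in Ioo (0:ℝ) (c * Real.log m), g s := by simp only [hJdef, hgdef]
        _ = ∫ x in Ioi (a m), (α * A * x ^ (-α - 1)) * g (A * x ^ (-α)) := hsub
        _ = ∫ x in Ioi (a m), (α * A ^ (ζ + 1)) * (x ^ (-β - 1) * (Ftilde x) ^ (m - 1)) :=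
            setIntegral_congr_fun measurableSet_Ioi heq
        _ = (α * A ^ (ζ + 1)) * ∫ x in Ioi (a m), x ^ (-β - 1) * (Ftilde x) ^ (m - 1) :=
            integral_const_mul _ _
    have hAζ : A ^ (ζ + 1) = (m:ℝ) ^ (ζ + 1) * C₁ ^ (ζ + 1) := by
      rw [hAdef]; exact Real.mul_rpow hm0.le hC₁.le
    have hmz : (m:ℝ) * (((m:ℝ) ^ (ζ + 1))⁻¹) = (m:ℝ) ^ (-ζ) := by
      rw [Real.rpow_add hm0, Real.rpow_one, Real.rpow_neg hm0.le, mul_inv,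
        mul_comm (((m:ℝ) ^ ζ)⁻¹), ← mul_assoc, mul_inv_cancel₀ hm0.ne', one_mul]
    have hmζ1 : ((m:ℝ) ^ (ζ + 1)) ≠ 0 := (Real.rpow_pos_of_pos hm0 _).ne'
    rw [h6, hAζ, ← hmz]
    simp only [hEdef]
    field_simp
  -- assemble the asymptotic equivalence
  have hJΓ : Tendsto J atTop (𝓝 (Real.Gamma (ζ + 1))) := aux_limit ζ D c hζpos hcpos
  have hJequiv : J ~[atTop] (fun _ : ℕ => Real.Gamma (ζ + 1)) :=
    (isEquivalent_const_iff_tendsto hΓpos.ne').mpr hJΓ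
  have hmul := (IsEquivalent.refl (u := fun m : ℕ => E * (m:ℝ) ^ (-ζ)) (l := atTop)).mul hJequiv
  have h7 : 1 / (β + 1) - 1 / (α + 1) = (α - β) / ((α + 1) * (β + 1)) := by
    rw [div_sub_div _ _ (by linarith : β + 1 ≠ 0) (by linarith : α + 1 ≠ 0)]
    ring_nf
  have hEΓ : E * Real.Gamma (ζ + 1) = -χ := by
    rw [hEdef, h7, show α - β = -(α * ζ) by linarith, hχ]
    field_simp
  refine (hmul.congr_left ?_).congr_right ?_
  · exact EventuallyEq.symm hkey
  · refine EventuallyEq.of_eq (funext fun m => ?_)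
    show (E * (m:ℝ) ^ (-ζ)) * Real.Gamma (ζ + 1) = -χ * (m:ℝ) ^ (-ζ)
    rw [← hEΓ]; ring
end

section
/- Let 0 < α < β < ∞ and C₁ > 0, and let a_m = κ m^{1/α} (ln m)^{−1/α} for some fixed κ > 0. Then ∫_{a_m}^∞ exp(−C₁ (m−1) x^{−α}) x^{−β−1} dx ∼ Γ(β/α) / (α C₁^{β/α}) · m^{−β/α} as m → ∞, where Γ denotes Euler's gamma function. -/
open MeasureTheory Filter Set Asymptotics
open scoped Topology

private lemma rpow_aux {x : ℝ} (hx : 0 < x) (p q : ℝ) : (x ^ p) ^ q = x ^ (p * q) :=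
  (Real.rpow_mul hx.le p q).symm

/-- Change of variables `u = c x^{-α}`. -/
lemma key_change (α β : ℝ) (hα : 0 < α) (A c : ℝ) (hA : 0 < A) (hc : 0 < c) :
    ∫ x in Set.Ioi A, Real.exp (-(c * x ^ (-α))) * x ^ (-β - 1)
      = c ^ (-(β / α)) / α *
        ∫ u in Set.Ioo 0 (c * A ^ (-α)), Real.exp (-u) * u ^ (β / α - 1) := by
  set T := c * A ^ (-α) with hT
  have hT0 : 0 < T := mul_pos hc (Real.rpow_pos_of_pos hA _)
  set f : ℝ → ℝ := fun u => c ^ (1/α) * u ^ (-(1/α)) with hf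
  set f' : ℝ → ℝ := fun u => c ^ (1/α) * ((-(1/α)) * u ^ (-(1/α) - 1)) with hf'
  have hderiv : ∀ u ∈ Set.Ioo (0:ℝ) T, HasDerivWithinAt f (f' u) (Set.Ioo 0 T) u := by
    intro u hu
    exact ((Real.hasDerivAt_rpow_const (Or.inl (ne_of_gt hu.1))).const_mul
      (c ^ (1/α))).hasDerivWithinAt
  have hinj : Set.InjOn f (Set.Ioo 0 T) := by
    intro u hu v hv huv
    have hc1 : c ^ (1/α) ≠ 0 := ne_of_gt (Real.rpow_pos_of_pos hc _)
    have h2 : u ^ (-(1/α)) = v ^ (-(1/α)) := mul_left_cancel₀ hc1 huv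
    have h3 : (u ^ (-(1/α))) ^ (-α) = (v ^ (-(1/α))) ^ (-α) := by rw [h2]
    rw [rpow_aux hu.1, rpow_aux hv.1,
      show (-(1/α)) * (-α) = 1 by field_simp, Real.rpow_one, Real.rpow_one] at h3
    exact h3
  have hfval : ∀ x : ℝ, 0 < x → f (c * x ^ (-α)) = x := by
    intro x hx
    simp only [hf]
    rw [Real.mul_rpow hc.le (Real.rpow_pos_of_pos hx _).le, rpow_aux hx,
      show (-α) * (-(1/α)) = 1 by field_simp, Real.rpow_one,
      ← mul_assoc, ← Real.rpow_add hc, show 1/α + (-(1/α)) = 0 by ring,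
      Real.rpow_zero, one_mul]
  have hfA : f T = A := hfval A hA
  have himg : f '' Set.Ioo 0 T = Set.Ioi A := by
    ext x
    constructor
    · rintro ⟨u, hu, rfl⟩
      have h1 : T ^ (-(1/α)) < u ^ (-(1/α)) :=
        Real.rpow_lt_rpow_of_neg hu.1 hu.2 (neg_neg_of_pos (by positivity))
      have := mul_lt_mul_of_pos_left h1 (Real.rpow_pos_of_pos hc (1/α))
      rw [show c ^ (1/α) * T ^ (-(1/α)) = f T from rfl, hfA] at this
      exact this
    · intro hx
      have hx0 : 0 < x := hA.trans hx
      refine ⟨c * x ^ (-α), ⟨by positivity, ?_⟩, hfval x hx0⟩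
      have h1 : x ^ (-α) < A ^ (-α) :=
        Real.rpow_lt_rpow_of_neg hA hx (by linarith)
      exact mul_lt_mul_of_pos_left h1 hc
  have hchg := integral_image_eq_integral_abs_deriv_smul measurableSet_Ioo hderiv hinj
      (fun x => Real.exp (-(c * x ^ (-α))) * x ^ (-β - 1))
  rw [himg] at hchg
  rw [hchg, ← MeasureTheory.integral_const_mul]
  refine setIntegral_congr_fun measurableSet_Ioo fun u hu => ?_
  have hu0 : 0 < u := hu.1
  have hcα : 0 < c ^ (1/α) := Real.rpow_pos_of_pos hc _
  have huα : 0 < u ^ (-(1/α)) := Real.rpow_pos_of_pos hu0 _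
  have hfu : 0 < f u := mul_pos hcα huα
  have e2 : c * (f u) ^ (-α) = u := by
    simp only [hf]
    rw [Real.mul_rpow hcα.le huα.le, rpow_aux hc, rpow_aux hu0,
      show (1/α) * (-α) = -1 by field_simp,
      show (-(1/α)) * (-α) = 1 by field_simp, Real.rpow_one,
      Real.rpow_neg_one, ← mul_assoc, mul_inv_cancel₀ (ne_of_gt hc), one_mul]
  have e1 : (f u) ^ (-β - 1) = c ^ ((1/α) * (-β-1)) * u ^ ((-(1/α)) * (-β-1)) := by
    simp only [hf]
    rw [Real.mul_rpow hcα.le huα.le, rpow_aux hc, rpow_aux hu0]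
  have e3 : |f' u| = c ^ (1/α) * ((1/α) * u ^ (-(1/α) - 1)) := by
    have : f' u = -(c ^ (1/α) * ((1/α) * u ^ (-(1/α) - 1))) := by
      simp only [hf']; ring
    rw [this, abs_neg, abs_of_pos (by positivity)]
  rw [smul_eq_mul, e3, e1, e2]
  have c4 : c ^ (1/α) * c ^ ((1/α)*(-β-1)) = c ^ (-(β/α)) := by
    rw [← Real.rpow_add hc]
    congr 1
    field_simp
    ring
  have u4 : u ^ (-(1/α)-1) * u ^ ((-(1/α))*(-β-1)) = u ^ (β/α - 1) := by
    rw [← Real.rpow_add hu0]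
    congr 1
    field_simp
    ring
  rw [← c4, ← u4]
  ring

/-- **A gamma-integral asymptotic.** For `0 < α < β < ∞`, `C₁ > 0`, `κ > 0` and
`a_m = κ m^(1/α)(ln m)^(-1/α)`, one has
`∫_{a_m}^∞ exp(-C₁(m-1)x^(-α)) x^(-β-1) dx ∼ Γ(β/α)/(α C₁^(β/α)) · m^(-β/α)`
as `m → ∞`, where `Γ` is Euler's gamma function. -/
theorem exp_integral_asymptotics
    (C₁ α β : ℝ) (hα : 0 < α) (hαβ : α < β) (hC₁ : 0 < C₁)
    (κ : ℝ) (hκ : 0 < κ)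
    (a : ℕ → ℝ)
    (ha : ∀ m : ℕ, a m = κ * (m : ℝ) ^ (1 / α) * (Real.log m) ^ (-(1 / α))) :
    (fun m : ℕ =>
        ∫ x in Set.Ioi (a m), Real.exp (-C₁ * ((m : ℝ) - 1) * x ^ (-α)) * x ^ (-β - 1))
      ~[atTop] fun m : ℕ =>
        Real.Gamma (β / α) / (α * C₁ ^ (β / α)) * (m : ℝ) ^ (-(β / α)) := by
  set γ := β / α with hγdef
  have hγ : 0 < γ := div_pos (hα.trans hαβ) hα
  have hΓ : 0 < Real.Gamma γ := Real.Gamma_pos_of_pos hγ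
  set G : ℝ → ℝ := fun T => ∫ u in Set.Ioo 0 T, Real.exp (-u) * u ^ (γ - 1) with hGdef
  -- G tends to Γ(γ)
  have hG : Tendsto G atTop (𝓝 (Real.Gamma γ)) := by
    rw [Real.Gamma_eq_integral hγ]
    have h := MeasureTheory.intervalIntegral_tendsto_integral_Ioi (0:ℝ)
      (Real.GammaIntegral_convergent hγ) tendsto_id
    refine Tendsto.congr' ?_ h
    filter_upwards [eventually_ge_atTop (0:ℝ)] with T hT
    simp only [id_eq]
    rw [intervalIntegral.integral_of_le hT, MeasureTheory.integral_Ioc_eq_integral_Ioo]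
  set u : ℕ → ℝ := fun m => C₁ * ((m:ℝ) - 1) * (a m) ^ (-α) with hudef
  -- basic facts for large m
  have hbasic : ∀ m : ℕ, 2 ≤ m → 0 < Real.log m ∧ 0 < a m ∧
      (a m) ^ (-α) = κ ^ (-α) * (m:ℝ)⁻¹ * Real.log m := by
    intro m hm
    have hm1 : (1:ℝ) < (m:ℝ) := by exact_mod_cast Nat.lt_of_lt_of_le one_lt_two hm
    have hm0 : (0:ℝ) < (m:ℝ) := by linarith
    have hlog : 0 < Real.log m := Real.log_pos hm1
    have ham : 0 < a m := by
      rw [ha m]; positivity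
    refine ⟨hlog, ham, ?_⟩
    rw [ha m, Real.mul_rpow (by positivity) (Real.rpow_pos_of_pos hlog _).le,
      Real.mul_rpow hκ.le (Real.rpow_pos_of_pos hm0 _).le,
      rpow_aux hm0, rpow_aux hlog,
      show (1/α) * (-α) = -1 by field_simp,
      show (-(1/α)) * (-α) = 1 by field_simp, Real.rpow_one, Real.rpow_neg_one]
  -- u m tendsto atTop
  have hfrac : Tendsto (fun m : ℕ => ((m:ℝ) - 1) / m) atTop (𝓝 1) := by
    have h1 : Tendsto (fun m : ℕ => 1 - 1/(m:ℝ)) atTop (𝓝 (1 - 0)) :=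
      tendsto_const_nhds.sub tendsto_one_div_atTop_nhds_zero_nat
    rw [sub_zero] at h1
    refine Tendsto.congr' ?_ h1
    filter_upwards [eventually_ge_atTop 1] with m hm
    have : (m:ℝ) ≠ 0 := by
      have : (1:ℝ) ≤ (m:ℝ) := by exact_mod_cast hm
      linarith
    field_simp
  have hu_tendsto : Tendsto u atTop atTop := by
    have hlim : Tendsto (fun m : ℕ => (C₁ * κ ^ (-α) * (((m:ℝ) - 1) / m)) * Real.log m)
        atTop atTop := by
      refine Filter.Tendsto.pos_mul_atTop
        (C := C₁ * κ ^ (-α) * 1) (by positivity)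
        (tendsto_const_nhds.mul hfrac) ?_
      exact Real.tendsto_log_atTop.comp tendsto_natCast_atTop_atTop
    refine Tendsto.congr' ?_ hlim
    filter_upwards [eventually_ge_atTop 2] with m hm
    obtain ⟨hlog, ham, hrw⟩ := hbasic m hm
    have hm0 : (m:ℝ) ≠ 0 := by
      have : (2:ℝ) ≤ (m:ℝ) := by exact_mod_cast hm
      linarith
    simp only [hudef, hrw]
    field_simp
  -- the value of the integral for m ≥ 2
  have hval : ∀ m : ℕ, 2 ≤ m →
      (∫ x in Set.Ioi (a m), Real.exp (-C₁ * ((m:ℝ) - 1) * x ^ (-α)) * x ^ (-β - 1))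
        = C₁ ^ (-γ) * ((m:ℝ) - 1) ^ (-γ) / α * G (u m) := by
    intro m hm
    obtain ⟨hlog, ham, _⟩ := hbasic m hm
    have hm1 : (1:ℝ) < (m:ℝ) := by exact_mod_cast Nat.lt_of_lt_of_le one_lt_two hm
    have hc : 0 < C₁ * ((m:ℝ) - 1) := by
      have : (0:ℝ) < (m:ℝ) - 1 := by linarith
      positivity
    have h1 : (∫ x in Set.Ioi (a m),
          Real.exp (-C₁ * ((m:ℝ) - 1) * x ^ (-α)) * x ^ (-β - 1))
        = ∫ x in Set.Ioi (a m),
          Real.exp (-(C₁ * ((m:ℝ) - 1) * x ^ (-α))) * x ^ (-β - 1) := by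
      simp only [neg_mul]
    rw [h1, key_change α β hα (a m) (C₁ * ((m:ℝ) - 1)) ham hc]
    have h2 : (C₁ * ((m:ℝ) - 1)) ^ (-γ) = C₁ ^ (-γ) * ((m:ℝ) - 1) ^ (-γ) :=
      Real.mul_rpow hC₁.le (by linarith)
    rw [← hγdef, h2]
  -- nonvanishing of the target
  have hgne : ∀ᶠ m : ℕ in atTop,
      Real.Gamma (β / α) / (α * C₁ ^ (β / α)) * (m : ℝ) ^ (-(β / α)) ≠ 0 := by
    filter_upwards [eventually_ge_atTop 1] with m hm
    have hm0 : (0:ℝ) < (m:ℝ) := by exact_mod_cast Nat.lt_of_lt_of_le Nat.zero_lt_one hm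
    have h1 : 0 < (m:ℝ) ^ (-(β/α)) := Real.rpow_pos_of_pos hm0 _
    have h2 : 0 < Real.Gamma (β/α) / (α * C₁ ^ (β/α)) := by positivity
    positivity
  rw [Asymptotics.isEquivalent_iff_tendsto_one hgne]
  -- the limit of the ratio
  have hmain : Tendsto (fun m : ℕ => (G (u m) / Real.Gamma γ) * (((m:ℝ) - 1) / m) ^ (-γ))
      atTop (𝓝 1) := by
    have h1 : Tendsto (fun m : ℕ => G (u m) / Real.Gamma γ) atTop
        (𝓝 (Real.Gamma γ / Real.Gamma γ)) := (hG.comp hu_tendsto).div_const _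
    rw [div_self (ne_of_gt hΓ)] at h1
    have h2 : Tendsto (fun m : ℕ => (((m:ℝ) - 1) / m) ^ (-γ)) atTop (𝓝 ((1:ℝ) ^ (-γ))) :=
      hfrac.rpow_const (Or.inl one_ne_zero)
    rw [Real.one_rpow] at h2
    have := h1.mul h2
    rwa [mul_one] at this
  refine Tendsto.congr' ?_ hmain
  filter_upwards [eventually_ge_atTop 2] with m hm
  obtain ⟨hlog, ham, _⟩ := hbasic m hm
  have hm1 : (1:ℝ) < (m:ℝ) := by exact_mod_cast Nat.lt_of_lt_of_le one_lt_two hm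
  have hm0 : (0:ℝ) < (m:ℝ) := by linarith
  have hms : (0:ℝ) < (m:ℝ) - 1 := by linarith
  simp only [Pi.div_apply]
  rw [hval m hm]
  have hdiv : (((m:ℝ) - 1) / m) ^ (-γ) = ((m:ℝ) - 1) ^ (-γ) / (m:ℝ) ^ (-γ) :=
    Real.div_rpow hms.le hm0.le (-γ)
  have hCC : C₁ ^ (-γ) * C₁ ^ γ = 1 := by
    rw [← Real.rpow_add hC₁, neg_add_cancel, Real.rpow_zero]
  have hP : (0:ℝ) < ((m:ℝ) - 1) ^ (-γ) := Real.rpow_pos_of_pos hms _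
  have hQ : (0:ℝ) < (m:ℝ) ^ (-γ) := Real.rpow_pos_of_pos hm0 _
  have hCγ : (0:ℝ) < C₁ ^ γ := Real.rpow_pos_of_pos hC₁ _
  rw [hdiv, ← hγdef]
  field_simp
  linear_combination (-G (u m)) * hCC
end

section
/- Let 0 < α < β < ∞, C₁ > 0, C₂ ∈ ℝ, set F̃(x) = 1 − C₁x^{−α} − C₂x^{−β}, ζ = (β−α)/α, and a_m = κ m^{1/α} (ln m)^{−1/α} with 0 < κ < (C₁/ζ)^{1/α}. Then ∫_{a_m}^∞ ( F̃^{m−1}(x) − exp(−C₁(m−1)x^{−α}) ) x^{−β−1} dx = o(m^{−β/α}) as m → ∞. -/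
open MeasureTheory Filter Set Asymptotics
open scoped Topology

lemma aux_abs_pow_sub_pow (a b : ℝ) (ha : |a| ≤ 1) (hb : |b| ≤ 1) :
    ∀ n : ℕ, |a ^ n - b ^ n| ≤ n * |a - b| := by
  intro n
  induction n with
  | zero => simp
  | succ n ih =>
    have h1 : a ^ (n+1) - b ^ (n+1) = a * (a ^ n - b ^ n) + (a - b) * b ^ n := by ring
    have hbn : |b ^ n| ≤ 1 := by rw [abs_pow]; exact pow_le_one₀ (abs_nonneg _) hb
    calc |a ^ (n+1) - b ^ (n+1)| ≤ |a * (a ^ n - b ^ n)| + |(a - b) * b ^ n| := by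
          rw [h1]; exact abs_add_le _ _
      _ = |a| * |a ^ n - b ^ n| + |a - b| * |b ^ n| := by rw [abs_mul, abs_mul]
      _ ≤ 1 * (n * |a - b|) + |a - b| * 1 := by
          have h2 : |a| * |a ^ n - b ^ n| ≤ 1 * (n * |a - b|) :=
            mul_le_mul ha ih (abs_nonneg _) one_pos.le
          have h5 : |a - b| * |b ^ n| ≤ |a - b| * 1 :=
            mul_le_mul_of_nonneg_left hbn (abs_nonneg _)
          linarith
      _ = (n + 1 : ℕ) * |a - b| := by push_cast; ring

lemma aux_abs_one_sub_exp (u : ℝ) (hu : 0 ≤ u) : |1 - u - Real.exp (-u)| ≤ u ^ 2 := by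
  have h1 : 1 - u ≤ Real.exp (-u) := by linarith [Real.add_one_le_exp (-u)]
  have hpos : (0:ℝ) < 1 + u := by linarith
  have h3 : Real.exp (-u) ≤ 1 / (1 + u) := by
    rw [Real.exp_neg, inv_eq_one_div]
    apply one_div_le_one_div_of_le hpos
    linarith [Real.add_one_le_exp u]
  have h4 : 1 / (1 + u) ≤ 1 - u + u ^ 2 := by
    rw [div_le_iff₀ hpos]; nlinarith
  rw [abs_le]; constructor <;> nlinarith

/-- **Replacing `F̃^(m-1)` by the exponential is negligible.** With
`F̃(x) = 1 - C₁x^(-α) - C₂x^(-β)`, `0 < α < β < ∞`, `C₁ > 0`, `ζ = (β-α)/α`,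
`a_m = κ m^(1/α)(ln m)^(-1/α)` and `0 < κ < (C₁/ζ)^(1/α)`, one has
`∫_{a_m}^∞ (F̃^(m-1)(x) - exp(-C₁(m-1)x^(-α))) x^(-β-1) dx = o(m^(-β/α))` as `m → ∞`. -/
theorem exp_approximation_negligible
    (C₁ C₂ α β : ℝ) (hα : 0 < α) (hαβ : α < β) (hC₁ : 0 < C₁)
    (Ftilde : ℝ → ℝ)
    (hFt : ∀ x : ℝ, Ftilde x = 1 - C₁ * x ^ (-α) - C₂ * x ^ (-β))
    (ζ : ℝ) (hζ : ζ = (β - α) / α)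
    (κ : ℝ) (hκ : 0 < κ) (hκ' : κ < (C₁ / ζ) ^ (1 / α))
    (a : ℕ → ℝ)
    (ha : ∀ m : ℕ, a m = κ * (m : ℝ) ^ (1 / α) * (Real.log m) ^ (-(1 / α))) :
    (fun m : ℕ =>
        ∫ x in Set.Ioi (a m),
          ((Ftilde x) ^ (m - 1) - Real.exp (-C₁ * ((m : ℝ) - 1) * x ^ (-α))) *
            x ^ (-β - 1))
      =o[atTop] fun m : ℕ => (m : ℝ) ^ (-(β / α)) := by
  have hβ : 0 < β := hα.trans hαβ
  set X : ℝ := max 1 (max ((|C₂| / C₁) ^ (1 / (β - α))) (C₁ ^ (1 / α))) with hXdef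
  -- pointwise bound
  have hpt : ∀ m : ℕ, 2 ≤ m → ∀ x : ℝ, X ≤ x →
      ‖((Ftilde x) ^ (m - 1) - Real.exp (-C₁ * ((m : ℝ) - 1) * x ^ (-α))) * x ^ (-β - 1)‖
        ≤ (m : ℝ) * |C₂| * x ^ (-2*β - 1) + (m : ℝ) * C₁ ^ 2 * x ^ (-2*α - β - 1) := by
    intro m hm x hx
    have hx1 : (1:ℝ) ≤ x := le_trans (le_max_left _ _) hx
    have hx0 : (0:ℝ) < x := lt_of_lt_of_le one_pos hx1
    have hβα : (0:ℝ) < β - α := by linarith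
    -- |C₂| x^{-β} ≤ C₁ x^{-α}
    have hr : (|C₂| / C₁) ^ (1 / (β - α)) ≤ x :=
      le_trans ((le_max_left _ _).trans (le_max_right _ _)) hx
    have hvu : |C₂| * x ^ (-β) ≤ C₁ * x ^ (-α) := by
      have h1 : (|C₂| / C₁) ≤ x ^ (β - α) := by
        have := Real.rpow_le_rpow (Real.rpow_nonneg (by positivity) _) hr hβα.le
        rwa [← Real.rpow_mul (by positivity), one_div, inv_mul_cancel₀ hβα.ne',
          Real.rpow_one] at this
      have h2 : |C₂| ≤ C₁ * x ^ (β - α) := by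
        rw [div_le_iff₀ hC₁] at h1; linarith [h1]
      have h3 : |C₂| * x ^ (-β) ≤ C₁ * x ^ (β - α) * x ^ (-β) :=
        mul_le_mul_of_nonneg_right h2 (Real.rpow_nonneg hx0.le _)
      calc |C₂| * x ^ (-β) ≤ C₁ * x ^ (β - α) * x ^ (-β) := h3
        _ = C₁ * x ^ (-α) := by
            rw [mul_assoc, ← Real.rpow_add hx0]; ring_nf
    -- C₁ x^{-α} ≤ 1
    have hu1 : C₁ * x ^ (-α) ≤ 1 := by
      have hr2 : C₁ ^ (1 / α) ≤ x :=
        le_trans ((le_max_right _ _).trans (le_max_right _ _)) hx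
      have h1 : C₁ ≤ x ^ α := by
        have := Real.rpow_le_rpow (Real.rpow_nonneg hC₁.le _) hr2 hα.le
        rwa [← Real.rpow_mul hC₁.le, one_div, inv_mul_cancel₀ hα.ne', Real.rpow_one] at this
      calc C₁ * x ^ (-α) ≤ x ^ α * x ^ (-α) :=
            mul_le_mul_of_nonneg_right h1 (Real.rpow_nonneg hx0.le _)
        _ = 1 := by rw [← Real.rpow_add hx0]; simp
    set u : ℝ := C₁ * x ^ (-α) with hudef
    have hu0 : 0 ≤ u := by positivity
    have hvabs : |C₂ * x ^ (-β)| ≤ u := by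
      rw [abs_mul, abs_of_nonneg (Real.rpow_nonneg hx0.le _)]; exact hvu
    have hF1 : |Ftilde x| ≤ 1 := by
      rw [hFt x, abs_le]
      constructor
      · have := abs_le.1 hvabs; nlinarith [this.1, this.2]
      · have := abs_le.1 hvabs; nlinarith [this.1, this.2]
    have hE1 : |Real.exp (-u)| ≤ 1 := by
      rw [abs_of_pos (Real.exp_pos _)]
      exact Real.exp_le_one_iff.2 (by linarith)
    -- exponential rewrite
    have hcast : ((m - 1 : ℕ) : ℝ) = (m : ℝ) - 1 := by
      rw [Nat.cast_sub (by omega)]; simp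
    have hexp : Real.exp (-C₁ * ((m : ℝ) - 1) * x ^ (-α)) = (Real.exp (-u)) ^ (m - 1) := by
      rw [← Real.exp_nat_mul, hcast]; congr 1; rw [hudef]; ring
    -- difference bound
    have hdiff : |Ftilde x - Real.exp (-u)| ≤ |C₂| * x ^ (-β) + C₁ ^ 2 * x ^ (-2*α) := by
      have h1 : Ftilde x - Real.exp (-u) = (1 - u - Real.exp (-u)) - C₂ * x ^ (-β) := by
        rw [hFt x, hudef]; ring
      have h2 : u ^ 2 = C₁ ^ 2 * x ^ (-2*α) := by
        rw [hudef, mul_pow, ← Real.rpow_natCast (x ^ (-α)) 2, ← Real.rpow_mul hx0.le]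
        norm_num
        left
        rw [show α * 2 = 2 * α by ring]
      calc |Ftilde x - Real.exp (-u)| ≤ |1 - u - Real.exp (-u)| + |C₂ * x ^ (-β)| := by
            rw [h1]; exact abs_sub _ _
        _ ≤ u ^ 2 + |C₂| * x ^ (-β) := by
            gcongr
            · exact aux_abs_one_sub_exp u hu0
            · rw [abs_mul, abs_of_nonneg (Real.rpow_nonneg hx0.le _)]
        _ = |C₂| * x ^ (-β) + C₁ ^ 2 * x ^ (-2*α) := by rw [h2]; ring
    have hpow : |Ftilde x ^ (m-1) - Real.exp (-u) ^ (m-1)|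
        ≤ (m : ℝ) * (|C₂| * x ^ (-β) + C₁ ^ 2 * x ^ (-2*α)) := by
      calc |Ftilde x ^ (m-1) - Real.exp (-u) ^ (m-1)|
          ≤ ((m-1 : ℕ) : ℝ) * |Ftilde x - Real.exp (-u)| :=
            aux_abs_pow_sub_pow _ _ hF1 hE1 (m-1)
        _ ≤ (m : ℝ) * (|C₂| * x ^ (-β) + C₁ ^ 2 * x ^ (-2*α)) := by
            apply mul_le_mul (by rw [hcast]; linarith)
              hdiff (abs_nonneg _) (Nat.cast_nonneg m)
    have hfin : ‖(Ftilde x ^ (m-1) - Real.exp (-C₁ * ((m : ℝ) - 1) * x ^ (-α))) * x ^ (-β-1)‖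
        = |Ftilde x ^ (m-1) - Real.exp (-u) ^ (m-1)| * x ^ (-β-1) := by
      rw [hexp, Real.norm_eq_abs, abs_mul, abs_of_nonneg (Real.rpow_nonneg hx0.le _)]
    rw [hfin]
    calc |Ftilde x ^ (m-1) - Real.exp (-u) ^ (m-1)| * x ^ (-β-1)
        ≤ ((m : ℝ) * (|C₂| * x ^ (-β) + C₁ ^ 2 * x ^ (-2*α))) * x ^ (-β-1) :=
          mul_le_mul_of_nonneg_right hpow (Real.rpow_nonneg hx0.le _)
      _ = (m : ℝ) * |C₂| * (x ^ (-β) * x ^ (-β-1))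
          + (m : ℝ) * C₁ ^ 2 * (x ^ (-2*α) * x ^ (-β-1)) := by ring
      _ = (m : ℝ) * |C₂| * x ^ (-2*β - 1) + (m : ℝ) * C₁ ^ 2 * x ^ (-2*α - β - 1) := by
          rw [← Real.rpow_add hx0, ← Real.rpow_add hx0]; ring_nf

  -- a m tends to infinity
  have htend : Tendsto a atTop atTop := by
    have hdiv : Tendsto (fun x : ℝ => x / Real.log x) atTop atTop := by
      have h0 : Tendsto (fun x : ℝ => Real.log x / x) atTop (𝓝[>] 0) := by
        apply tendsto_nhdsWithin_of_tendsto_nhds_of_eventually_within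
        · simpa [Function.comp] using
            Real.isLittleO_log_id_atTop.tendsto_div_nhds_zero
        · filter_upwards [eventually_gt_atTop (1:ℝ)] with x hx
          exact div_pos (Real.log_pos hx) (by linarith)
      have := h0.inv_tendsto_nhdsGT_zero
      refine this.congr fun x => ?_
      simp [Pi.inv_apply, inv_div]
    have hcomp : Tendsto (fun x : ℝ => κ * (x / Real.log x) ^ (1 / α)) atTop atTop :=
      ((tendsto_rpow_atTop (by positivity)).comp hdiv).const_mul_atTop hκ
    have hnat : Tendsto (fun m : ℕ => κ * ((m : ℝ) / Real.log m) ^ (1 / α)) atTop atTop :=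
      hcomp.comp tendsto_natCast_atTop_atTop
    refine hnat.congr' ?_
    filter_upwards [eventually_ge_atTop 2] with m hm
    have hm0 : (0:ℝ) < (m:ℝ) := by positivity
    have hlog : 0 < Real.log m := Real.log_pos (by exact_mod_cast by omega)
    rw [ha m, Real.div_rpow hm0.le hlog.le, Real.rpow_neg hlog.le, div_eq_mul_inv, mul_assoc]
  -- the dominating sequence
  set h : ℕ → ℝ := fun m => (m : ℝ) * |C₂| * ((a m) ^ (-(2*β)) / (2*β))
      + (m : ℝ) * C₁ ^ 2 * ((a m) ^ (-(2*α + β)) / (2*α + β)) with hhdef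
  have hbound : ∀ᶠ m : ℕ in atTop, ‖∫ x in Set.Ioi (a m),
      ((Ftilde x) ^ (m - 1) - Real.exp (-C₁ * ((m : ℝ) - 1) * x ^ (-α))) * x ^ (-β - 1)‖
        ≤ h m := by
    have hX1 : (1:ℝ) ≤ X := le_max_left _ _
    have hβ : 0 < β := hα.trans hαβ
    filter_upwards [htend.eventually_ge_atTop X, eventually_ge_atTop 2] with m hXa hm2
    have hc : (0:ℝ) < a m := lt_of_lt_of_le one_pos (hX1.trans hXa)
    have hint1 : IntegrableOn (fun x : ℝ => x ^ (-2*β - 1)) (Ioi (a m)) :=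
      integrableOn_Ioi_rpow_of_lt (by linarith) hc
    have hint2 : IntegrableOn (fun x : ℝ => x ^ (-2*α - β - 1)) (Ioi (a m)) :=
      integrableOn_Ioi_rpow_of_lt (by linarith) hc
    have hg : IntegrableOn (fun x : ℝ =>
        (m : ℝ) * |C₂| * x ^ (-2*β - 1) + (m : ℝ) * C₁ ^ 2 * x ^ (-2*α - β - 1)) (Ioi (a m)) :=
      (hint1.const_mul _).add (hint2.const_mul _)
    calc ‖∫ x in Set.Ioi (a m),
        ((Ftilde x) ^ (m - 1) - Real.exp (-C₁ * ((m : ℝ) - 1) * x ^ (-α))) * x ^ (-β - 1)‖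
        ≤ ∫ x in Set.Ioi (a m),
          ‖((Ftilde x) ^ (m - 1) - Real.exp (-C₁ * ((m : ℝ) - 1) * x ^ (-α))) * x ^ (-β - 1)‖ :=
          norm_integral_le_integral_norm _
      _ ≤ ∫ x in Set.Ioi (a m),
          ((m : ℝ) * |C₂| * x ^ (-2*β - 1) + (m : ℝ) * C₁ ^ 2 * x ^ (-2*α - β - 1)) := by
          refine integral_mono_of_nonneg (Eventually.of_forall fun x => norm_nonneg _) hg ?_
          filter_upwards [ae_restrict_mem measurableSet_Ioi] with x hx
          exact hpt m hm2 x (hXa.trans (le_of_lt hx))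
      _ = (m : ℝ) * |C₂| * ((a m) ^ (-(2*β)) / (2*β))
            + (m : ℝ) * C₁ ^ 2 * ((a m) ^ (-(2*α + β)) / (2*α + β)) := by
          rw [integral_add (hint1.const_mul _) (hint2.const_mul _),
            MeasureTheory.integral_const_mul, MeasureTheory.integral_const_mul,
            integral_Ioi_rpow_of_lt (by linarith) hc,
            integral_Ioi_rpow_of_lt (by linarith) hc,
            show -2*β - 1 + 1 = -(2*β) by ring,
            show -2*α - β - 1 + 1 = -(2*α + β) by ring]
          rw [neg_div_neg_eq, neg_div_neg_eq]
  -- key asymptotic lemma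
  have hkey : ∀ γ : ℝ, α + β < γ →
      (fun m : ℕ => (m : ℝ) * (a m) ^ (-γ)) =o[atTop] fun m : ℕ => (m : ℝ) ^ (-(β / α)) := by
    intro γ hγ
    have hβ : 0 < β := hα.trans hαβ
    have hγ0 : 0 < γ := by linarith
    rw [isLittleO_iff_tendsto']
    · -- ratio tends to 0
      set c : ℝ := 1 - γ/α + β/α with hcdef
      have hc : c < 0 := by
        rw [hcdef]
        have h2 : (1:ℝ) < (γ - β) / α := by
          rw [lt_div_iff₀ hα]; linarith
        have h3 : (γ - β) / α = γ/α - β/α := by ring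
        linarith
      have hd : 0 < γ / α := by positivity
      -- main limit
      have hlim : Tendsto (fun x : ℝ => x ^ c * Real.log x ^ (γ/α)) atTop (𝓝 0) := by
        have hlo : (fun x : ℝ => Real.log x ^ (γ/α)) =o[atTop] fun x : ℝ => x ^ (-c) :=
          isLittleO_log_rpow_rpow_atTop _ (by linarith)
        have := hlo.tendsto_div_nhds_zero
        refine this.congr' ?_
        filter_upwards [eventually_gt_atTop (0:ℝ)] with x hx
        rw [div_eq_mul_inv, ← Real.rpow_neg hx.le, neg_neg, mul_comm]
      have hlimn : Tendsto (fun m : ℕ => κ ^ (-γ) * ((m:ℝ) ^ c * Real.log m ^ (γ/α)))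
          atTop (𝓝 0) := by
        have := (hlim.comp tendsto_natCast_atTop_atTop).const_mul (κ ^ (-γ))
        simpa using this
      refine hlimn.congr' ?_
      filter_upwards [eventually_ge_atTop 2] with m hm
      have hm0 : (0:ℝ) < (m:ℝ) := by positivity
      have hlog : 0 < Real.log m := Real.log_pos (by exact_mod_cast by omega)
      have e1 : (a m) ^ (-γ) = κ ^ (-γ) * (m:ℝ) ^ (-(γ/α)) * Real.log m ^ (γ/α) := by
        rw [ha m, Real.mul_rpow (by positivity) (by positivity),
          Real.mul_rpow (by positivity) (by positivity),
          ← Real.rpow_mul hm0.le, ← Real.rpow_mul hlog.le]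
        congr 2
        · rw [show 1/α * (-γ) = -(γ/α) by field_simp]
        · rw [show -(1/α) * (-γ) = γ/α by field_simp]
      have hne : (m:ℝ) ^ (-(β/α)) ≠ 0 := (Real.rpow_pos_of_pos hm0 _).ne'
      rw [e1, eq_div_iff hne,
        show c = 1 + (-(γ/α)) + β/α by rw [hcdef]; ring,
        Real.rpow_add hm0, Real.rpow_add hm0, Real.rpow_one,
        Real.rpow_neg hm0.le (β/α)]
      field_simp
    · -- g = 0 → f = 0
      refine Eventually.of_forall fun m hm => ?_
      rcases Nat.eq_zero_or_pos m with h | h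
      · subst h; simp
      · exfalso
        exact (Real.rpow_pos_of_pos (by exact_mod_cast h) _).ne' hm
  have hh : h =o[atTop] fun m : ℕ => (m : ℝ) ^ (-(β / α)) := by
    have e : h = fun m : ℕ => (|C₂| / (2*β)) * ((m : ℝ) * (a m) ^ (-(2*β)))
        + (C₁ ^ 2 / (2*α + β)) * ((m : ℝ) * (a m) ^ (-(2*α + β))) := by
      funext m; rw [hhdef]; ring
    rw [e]
    exact ((hkey (2*β) (by linarith)).const_mul_left _).add
      ((hkey (2*α + β) (by linarith)).const_mul_left _)
  refine IsBigO.trans_isLittleO ?_ hh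
  refine (isBigO_iff.2 ⟨1, ?_⟩)
  filter_upwards [hbound] with m hm
  rw [one_mul]
  exact hm.trans (le_abs_self _)
end

section
/- Let 0 < α < β < ∞, C₁ > 0, C₂ ∈ ℝ, and F̃(x) = 1 − C₁x^{−α} − C₂x^{−β}. There exists a constant C > 0 such that for all sufficiently large m and all x ≥ a_m = κ m^{1/α}(ln m)^{−1/α} (with fixed 0 < κ < (C₁/ζ)^{1/α}, ζ = (β−α)/α), the difference Δ_m(x) = F̃^m(x) − exp(−C₁ m x^{−α}) satisfies |Δ_m(x)| ≤ C m x^{−min(2α, β)} exp(−C₁ m x^{−α}). -/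
open MeasureTheory Filter Set Asymptotics
open scoped Topology

private lemma aux_one_sub_mul_exp (u : ℝ) (hu0 : 0 ≤ u) (hu1 : u ≤ 1) :
    |(1 - u) * Real.exp u - 1| ≤ u ^ 2 := by
  have h1 : -u + 1 ≤ Real.exp (-u) := Real.add_one_le_exp (-u)
  have h2 : u + 1 ≤ Real.exp u := Real.add_one_le_exp u
  have hmul : Real.exp (-u) * Real.exp u = 1 := by
    rw [← Real.exp_add]; simp
  have hep : 0 < Real.exp u := Real.exp_pos u
  rw [abs_le]
  constructor <;> nlinarith

private lemma aux_abs_pow_sub_one (δ : ℝ) : ∀ m : ℕ, |(1 + δ) ^ m - 1| ≤ (1 + |δ|) ^ m - 1 := by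
  intro m
  induction m with
  | zero => simp
  | succ n ih =>
    have h2 : |1 + δ| ≤ 1 + |δ| := (abs_add_le 1 δ).trans (by simp)
    have hnn : (0:ℝ) ≤ (1 + |δ|) ^ n - 1 := by
      have : (1:ℝ) ≤ (1 + |δ|) ^ n := one_le_pow₀ (by simp [abs_nonneg])
      linarith
    have h1 : (1 + δ) ^ (n+1) - 1 = ((1 + δ) ^ n - 1) * (1 + δ) + δ := by ring
    calc |(1 + δ) ^ (n+1) - 1| ≤ |((1 + δ) ^ n - 1) * (1 + δ)| + |δ| := by
          rw [h1]; exact abs_add_le _ _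
      _ = |(1 + δ) ^ n - 1| * |1 + δ| + |δ| := by rw [abs_mul]
      _ ≤ ((1 + |δ|) ^ n - 1) * (1 + |δ|) + |δ| := by
          have := mul_le_mul ih h2 (abs_nonneg _) (by positivity)
          linarith
      _ = (1 + |δ|) ^ (n+1) - 1 := by ring

private lemma aux_exp_sub_one (t : ℝ) (ht0 : 0 ≤ t) (ht1 : t ≤ 1) :
    Real.exp t - 1 ≤ Real.exp 1 * t := by
  have h1 : -t + 1 ≤ Real.exp (-t) := Real.add_one_le_exp (-t)
  have hmul : Real.exp (-t) * Real.exp t = 1 := by rw [← Real.exp_add]; simp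
  have hle : Real.exp t ≤ Real.exp 1 := Real.exp_le_exp.mpr ht1
  have hep : 0 < Real.exp t := Real.exp_pos t
  nlinarith

private lemma aux_a_tendsto (α κ : ℝ) (hα : 0 < α) (hκ : 0 < κ) (a : ℕ → ℝ)
    (ha : ∀ m : ℕ, a m = κ * (m : ℝ) ^ (1 / α) * (Real.log m) ^ (-(1 / α))) :
    Tendsto a atTop atTop := by
  have h1 : Tendsto (fun x : ℝ => x / Real.log x) atTop atTop := by
    have h0 : Tendsto (fun x : ℝ => Real.log x / x) atTop (nhds 0) :=
      Real.isLittleO_log_id_atTop.tendsto_div_nhds_zero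
    have hpos : ∀ᶠ x : ℝ in atTop, 0 < Real.log x / x := by
      filter_upwards [eventually_gt_atTop 1] with x hx
      exact div_pos (Real.log_pos hx) (by linarith)
    have := (tendsto_nhdsWithin_iff.mpr ⟨h0, hpos⟩).inv_tendsto_nhdsGT_zero
    refine this.congr fun x => ?_
    simp [Pi.inv_apply, inv_div]
  have h2 : Tendsto (fun x : ℝ => κ * (x / Real.log x) ^ (1/α)) atTop atTop :=
    (tendsto_rpow_atTop (by positivity)).comp h1 |>.const_mul_atTop hκ
  have h3 : Tendsto (fun m : ℕ => κ * ((m : ℝ) / Real.log m) ^ (1/α)) atTop atTop :=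
    h2.comp tendsto_natCast_atTop_atTop
  refine h3.congr' ?_
  filter_upwards [eventually_ge_atTop 3] with m hm
  have ht1 : (1:ℝ) < (m:ℝ) := by exact_mod_cast Nat.lt_of_lt_of_le (by norm_num) hm
  have hl : 0 < Real.log m := Real.log_pos ht1
  rw [ha m, Real.div_rpow (by positivity) hl.le, Real.rpow_neg hl.le, div_eq_mul_inv, mul_assoc]

private lemma aux_small_tendsto (α γ κ K : ℝ) (hα : 0 < α) (hκ : 0 < κ) (hαγ : α < γ)
    (a : ℕ → ℝ)
    (ha : ∀ m : ℕ, a m = κ * (m : ℝ) ^ (1 / α) * (Real.log m) ^ (-(1 / α))) :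
    Tendsto (fun m : ℕ => K * (m:ℝ) * (a m) ^ (-γ)) atTop (nhds 0) := by
  have hp1 : 1 < γ / α := (one_lt_div hα).mpr hαγ
  have hlo : (fun x : ℝ => Real.log x ^ (γ/α)) =o[atTop] (fun x : ℝ => x ^ (γ/α - 1)) :=
    isLittleO_log_rpow_rpow_atTop _ (by linarith)
  have h0 : Tendsto (fun x : ℝ => (K * κ ^ (-γ)) * (Real.log x ^ (γ/α) / x ^ (γ/α - 1)))
      atTop (nhds 0) := by
    have := hlo.tendsto_div_nhds_zero.const_mul (K * κ ^ (-γ))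
    simpa using this
  have h3 := h0.comp tendsto_natCast_atTop_atTop
  refine h3.congr' ?_
  filter_upwards [eventually_ge_atTop 3] with m hm
  have ht1 : (1:ℝ) < (m:ℝ) := by exact_mod_cast Nat.lt_of_lt_of_le (by norm_num) hm
  have ht0 : (0:ℝ) < (m:ℝ) := by linarith
  have hl : 0 < Real.log m := Real.log_pos ht1
  have e1 : (a m) ^ (-γ) = κ ^ (-γ) * (m:ℝ) ^ (-(γ/α)) * Real.log m ^ (γ/α) := by
    rw [ha m, Real.mul_rpow (by positivity) (by positivity),
      Real.mul_rpow (by positivity) (by positivity),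
      ← Real.rpow_mul ht0.le, ← Real.rpow_mul hl.le]
    ring_nf
  have e2 : (m:ℝ) ^ (-(γ/α - 1)) = (m:ℝ) * (m:ℝ) ^ (-(γ/α)) := by
    rw [show -(γ/α-1) = 1 + -(γ/α) by ring, Real.rpow_add ht0, Real.rpow_one]
  show K * κ ^ (-γ) * (Real.log (m:ℝ) ^ (γ/α) / (m:ℝ) ^ (γ/α - 1)) = K * (m:ℝ) * (a m) ^ (-γ)
  rw [e1, div_eq_mul_inv, ← Real.rpow_neg ht0.le, e2]
  ring

/-- **Pointwise bound for the exponential approximation.** With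
`F̃(x) = 1 - C₁x^(-α) - C₂x^(-β)`, `0 < α < β < ∞`, `C₁ > 0`, `ζ = (β-α)/α`,
`a_m = κ m^(1/α)(ln m)^(-1/α)` and `0 < κ < (C₁/ζ)^(1/α)`, there is a constant `C > 0`
such that for all sufficiently large `m` and all `x ≥ a_m`, the difference
`Δ_m(x) = F̃^m(x) - exp(-C₁ m x^(-α))` satisfies
`|Δ_m(x)| ≤ C m x^(-min(2α, β)) exp(-C₁ m x^(-α))`. -/
theorem exp_approximation_pointwise_bound
    (C₁ C₂ α β : ℝ) (hα : 0 < α) (hαβ : α < β) (hC₁ : 0 < C₁)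
    (Ftilde : ℝ → ℝ)
    (hFt : ∀ x : ℝ, Ftilde x = 1 - C₁ * x ^ (-α) - C₂ * x ^ (-β))
    (ζ : ℝ) (hζ : ζ = (β - α) / α)
    (κ : ℝ) (hκ : 0 < κ) (hκ' : κ < (C₁ / ζ) ^ (1 / α))
    (a : ℕ → ℝ)
    (ha : ∀ m : ℕ, a m = κ * (m : ℝ) ^ (1 / α) * (Real.log m) ^ (-(1 / α))) :
    ∃ C : ℝ, 0 < C ∧ ∀ᶠ m : ℕ in atTop, ∀ x : ℝ, a m ≤ x →
      |(Ftilde x) ^ m - Real.exp (-C₁ * (m : ℝ) * x ^ (-α))|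
        ≤ C * (m : ℝ) * x ^ (-(min (2 * α) β)) * Real.exp (-C₁ * (m : ℝ) * x ^ (-α)) := by
  set γ := min (2 * α) β with hγdef
  have hγ2α : γ ≤ 2 * α := min_le_left _ _
  have hγβ : γ ≤ β := min_le_right _ _
  have hαγ : α < γ := lt_min (by linarith) hαβ
  set K := C₁ ^ 2 + Real.exp 1 * |C₂| + 1 with hKdef
  have hKpos : 0 < K := by positivity
  refine ⟨Real.exp 1 * K, by positivity, ?_⟩
  set x₀ := max 1 (C₁ ^ (1/α)) with hx₀def
  have hA : ∀ᶠ m : ℕ in atTop, x₀ ≤ a m :=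
    (aux_a_tendsto α κ hα hκ a ha).eventually_ge_atTop x₀
  have hB : ∀ᶠ m : ℕ in atTop, K * (m:ℝ) * (a m) ^ (-γ) ≤ 1 :=
    (aux_small_tendsto α γ κ K hα hκ hαγ a ha).eventually (ge_mem_nhds (by norm_num))
  filter_upwards [hA, hB] with m hAm hBm
  intro x hx
  have hx₀x : x₀ ≤ x := le_trans hAm hx
  have hx1 : (1:ℝ) ≤ x := le_trans (le_max_left _ _) hx₀x
  have hx0 : (0:ℝ) < x := lt_of_lt_of_le one_pos hx1
  have ham0 : 0 < a m := lt_of_lt_of_le (lt_of_lt_of_le one_pos (le_max_left _ _)) hAm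
  set u := C₁ * x ^ (-α) with hudef
  have hu0 : 0 ≤ u := by positivity
  have hu1 : u ≤ 1 := by
    have hxc : C₁ ^ (1/α) ≤ x := le_trans (le_max_right _ _) hx₀x
    have h1 : (C₁ ^ (1/α)) ^ α ≤ x ^ α :=
      Real.rpow_le_rpow (Real.rpow_nonneg hC₁.le _) hxc hα.le
    have h2 : (C₁ ^ (1/α)) ^ α = C₁ := by
      rw [← Real.rpow_mul hC₁.le, one_div_mul_cancel hα.ne', Real.rpow_one]
    have hxα : 0 < x ^ α := Real.rpow_pos_of_pos hx0 α
    rw [hudef, Real.rpow_neg hx0.le]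
    rw [h2] at h1
    calc C₁ * (x ^ α)⁻¹ ≤ x ^ α * (x ^ α)⁻¹ := by gcongr
      _ = 1 := mul_inv_cancel₀ hxα.ne'
  set δ := Ftilde x * Real.exp u - 1 with hδdef
  have hδeq : δ = ((1 - u) * Real.exp u - 1) - C₂ * x ^ (-β) * Real.exp u := by
    rw [hδdef, hFt x, hudef]; ring
  -- bound on |δ|
  have hxγ0 : 0 ≤ x ^ (-γ) := Real.rpow_nonneg hx0.le _
  have hδbound : |δ| ≤ K * x ^ (-γ) := by
    have hb1 : |(1 - u) * Real.exp u - 1| ≤ u ^ 2 := aux_one_sub_mul_exp u hu0 hu1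
    have hu2 : u ^ 2 = C₁ ^ 2 * x ^ (-(2*α)) := by
      rw [hudef, show -(2*α) = -α + -α by ring, Real.rpow_add hx0]; ring
    have h2a : x ^ (-(2*α)) ≤ x ^ (-γ) :=
      Real.rpow_le_rpow_of_exponent_le hx1 (by linarith)
    have hbb : x ^ (-β) ≤ x ^ (-γ) :=
      Real.rpow_le_rpow_of_exponent_le hx1 (by linarith)
    have hexp : Real.exp u ≤ Real.exp 1 := Real.exp_le_exp.mpr hu1
    have hb2 : |C₂ * x ^ (-β) * Real.exp u| ≤ |C₂| * x ^ (-γ) * Real.exp 1 := by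
      rw [abs_mul, abs_mul, abs_of_nonneg (Real.rpow_nonneg hx0.le _),
        abs_of_pos (Real.exp_pos u)]
      gcongr
    have := abs_sub (((1 - u) * Real.exp u - 1)) (C₂ * x ^ (-β) * Real.exp u)
    rw [hδeq]
    calc |((1 - u) * Real.exp u - 1) - C₂ * x ^ (-β) * Real.exp u|
        ≤ |(1 - u) * Real.exp u - 1| + |C₂ * x ^ (-β) * Real.exp u| := abs_sub _ _
      _ ≤ C₁ ^ 2 * x ^ (-(2*α)) + |C₂| * x ^ (-γ) * Real.exp 1 := by
          rw [← hu2]; exact add_le_add hb1 hb2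
      _ ≤ C₁ ^ 2 * x ^ (-γ) + |C₂| * x ^ (-γ) * Real.exp 1 := by gcongr
      _ ≤ K * x ^ (-γ) := by rw [hKdef]; nlinarith
  have hmδ : (m:ℝ) * |δ| ≤ 1 := by
    have hxam : x ^ (-γ) ≤ (a m) ^ (-γ) :=
      Real.rpow_le_rpow_of_nonpos ham0 hx (by linarith)
    calc (m:ℝ) * |δ| ≤ (m:ℝ) * (K * x ^ (-γ)) := by
          have : (0:ℝ) ≤ (m:ℝ) := Nat.cast_nonneg m
          exact mul_le_mul_of_nonneg_left hδbound this
      _ ≤ (m:ℝ) * (K * (a m) ^ (-γ)) := by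
          have : (0:ℝ) ≤ (m:ℝ) := Nat.cast_nonneg m
          gcongr
      _ = K * (m:ℝ) * (a m) ^ (-γ) := by ring
      _ ≤ 1 := hBm
  -- representation
  have hrepr : Ftilde x = (1 + δ) * Real.exp (-u) := by
    rw [hδdef, Real.exp_neg]
    field_simp
    ring
  have hEeq : Real.exp (-u) ^ m = Real.exp (-C₁ * (m:ℝ) * x ^ (-α)) := by
    rw [← Real.exp_nat_mul]
    congr 1
    rw [hudef]; ring
  have hpow : Ftilde x ^ m = (1 + δ) ^ m * Real.exp (-C₁ * (m:ℝ) * x ^ (-α)) := by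
    rw [hrepr, mul_pow, hEeq]
  set E := Real.exp (-C₁ * (m:ℝ) * x ^ (-α)) with hEdef
  have hEpos : 0 < E := Real.exp_pos _
  have key : |Ftilde x ^ m - E| = |(1 + δ) ^ m - 1| * E := by
    rw [hpow, show (1 + δ) ^ m * E - E = ((1 + δ) ^ m - 1) * E by ring, abs_mul,
      abs_of_pos hEpos]
  rw [key]
  have hchain : |(1 + δ) ^ m - 1| ≤ Real.exp 1 * ((m:ℝ) * |δ|) := by
    calc |(1 + δ) ^ m - 1| ≤ (1 + |δ|) ^ m - 1 := aux_abs_pow_sub_one δ m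
      _ ≤ Real.exp ((m:ℝ) * |δ|) - 1 := by
          have h1 : (1 + |δ|) ^ m ≤ Real.exp ((m:ℝ) * |δ|) := by
            rw [Real.exp_nat_mul]
            exact pow_le_pow_left₀ (by positivity)
              (by linarith [Real.add_one_le_exp |δ|]) m
          linarith
      _ ≤ Real.exp 1 * ((m:ℝ) * |δ|) :=
          aux_exp_sub_one _ (by positivity) hmδ
  calc |(1 + δ) ^ m - 1| * E ≤ Real.exp 1 * ((m:ℝ) * |δ|) * E := by gcongr
    _ ≤ Real.exp 1 * ((m:ℝ) * (K * x ^ (-γ))) * E := by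
        have : (0:ℝ) ≤ (m:ℝ) := Nat.cast_nonneg m
        gcongr
    _ = Real.exp 1 * K * (m:ℝ) * x ^ (-γ) * E := by ring
end

section
/- Let F be a distribution function satisfying the second-order condition 1 − F(x) = C₁x^{−α} + C₂x^{−β} + o(x^{−β}) as x → ∞ with 0 < α < β < ∞ and C₁ > 0, set F̃(x) = 1 − C₁x^{−α} − C₂x^{−β}, ζ = (β−α)/α, and a_m = κ m^{1/α} (ln m)^{−1/α} with 0 < κ < (C₁/ζ)^{1/α}. Then R_{m,1} := m ∫_{a_m}^∞ ( F^{m−1}(x) − F̃^{m−1}(x) ) ( C₁α/(α+1) · x^{−α−1} + C₂β/(β+1) · x^{−β−1} ) dx = o(m^{−ζ}) as m → ∞. -/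
open MeasureTheory Filter Set Asymptotics
open scoped Topology

lemma abs_pow_sub_pow_le' (M : ℝ) : ∀ (n : ℕ) (p q : ℝ), |p| ≤ M → |q| ≤ M →
    |p ^ n - q ^ n| ≤ n * |p - q| * M ^ (n - 1)
  | 0, p, q, _, _ => by simp
  | 1, p, q, _, _ => by simp
  | (n+2), p, q, hp, hq => by
      have hM : 0 ≤ M := le_trans (abs_nonneg p) hp
      have IH := abs_pow_sub_pow_le' M (n+1) p q hp hq
      have key : p ^ (n+2) - q ^ (n+2) = p * (p^(n+1) - q^(n+1)) + (p - q) * q^(n+1) := by ring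
      calc |p^(n+2) - q^(n+2)| ≤ |p| * |p^(n+1) - q^(n+1)| + |p - q| * |q|^(n+1) := by
              rw [key]
              refine (abs_add_le _ _).trans ?_
              rw [abs_mul, abs_mul, abs_pow]
        _ ≤ M * (((n+1:ℕ):ℝ) * |p - q| * M ^ n) + |p - q| * M^(n+1) := by
              have h1 : |p| * |p^(n+1) - q^(n+1)| ≤ M * (((n+1:ℕ):ℝ) * |p - q| * M ^ n) := by
                refine mul_le_mul hp ?_ (abs_nonneg _) hM
                simpa using IH
              have h2 : |p - q| * |q|^(n+1) ≤ |p - q| * M^(n+1) :=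
                mul_le_mul_of_nonneg_left (pow_le_pow_left₀ (abs_nonneg _) hq _) (abs_nonneg _)
              linarith
        _ = ((n+2:ℕ):ℝ) * |p - q| * M ^ (n+1) := by push_cast; ring

lemma integrableOn_rpow_mul_exp_neg_mul {s lam : ℝ} (hs : 0 < s) (hlam : 0 < lam) :
    IntegrableOn (fun u : ℝ => u ^ (s - 1) * Real.exp (-(lam * u))) (Set.Ioi 0) := by
  have h0 : IntegrableOn (fun x : ℝ => Real.exp (-x) * x ^ (s-1)) (Set.Ioi 0) :=
    Real.GammaIntegral_convergent hs
  have h1 : IntegrableOn (fun u : ℝ => Real.exp (-(lam*u)) * (lam*u) ^ (s-1)) (Set.Ioi 0) :=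
    (integrableOn_Ioi_comp_mul_left_iff
      (fun x : ℝ => Real.exp (-x) * x ^ (s-1)) 0 hlam).mpr (by rw [mul_zero]; exact h0)
  have h2 : IntegrableOn
      (fun u : ℝ => lam ^ (-(s-1)) * (Real.exp (-(lam*u)) * (lam*u) ^ (s-1))) (Set.Ioi 0) :=
    h1.const_mul (lam ^ (-(s-1)) : ℝ)
  refine h2.congr_fun (fun u hu => ?_) measurableSet_Ioi
  have hu0 : (0:ℝ) < u := hu
  beta_reduce
  rw [Real.mul_rpow hlam.le hu0.le]
  rw [show lam ^ (-(s-1)) * (Real.exp (-(lam*u)) * (lam ^ (s-1) * u ^ (s-1)))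
      = (lam ^ (-(s-1)) * lam ^ (s-1)) * (u ^ (s-1) * Real.exp (-(lam*u))) by ring,
    ← Real.rpow_add hlam]
  simp

lemma tail_bound {α γ lam a : ℝ} (hα : 0 < α) (hγ : 0 < γ) (hlam : 0 < lam) (ha : 0 < a) :
    ∫ x in Set.Ioi a, x ^ (-γ - 1) * Real.exp (-(lam * x ^ (-α))) ≤
      (1/α) * ((1/lam) ^ (γ/α) * Real.Gamma (γ/α)) := by
  set s := γ / α with hs_def
  have hs : 0 < s := div_pos hγ hα
  set g : ℝ → ℝ := fun u => u ^ (s - 1) * Real.exp (-(lam * u)) with hg_def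
  have hderiv : ∀ x ∈ Set.Ioi a, HasDerivWithinAt (fun x : ℝ => x ^ (-α))
      ((-α) * x ^ (-α - 1)) (Set.Ioi a) x := fun x hx =>
    (Real.hasDerivAt_rpow_const (Or.inl (ne_of_gt (ha.trans hx)))).hasDerivWithinAt
  have hinj : InjOn (fun x : ℝ => x ^ (-α)) (Set.Ioi a) := by
    refine StrictAntiOn.injOn (fun x hx y hy hxy => ?_)
    exact Real.rpow_lt_rpow_of_neg (ha.trans hx) hxy (neg_lt_zero.mpr hα)
  have himg : (fun x : ℝ => x ^ (-α)) '' Set.Ioi a = Set.Ioo 0 (a ^ (-α)) := by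
    ext u
    constructor
    · rintro ⟨x, hx, rfl⟩
      exact ⟨Real.rpow_pos_of_pos (ha.trans hx) _,
        Real.rpow_lt_rpow_of_neg ha hx (neg_lt_zero.mpr hα)⟩
    · rintro ⟨hu0, hua⟩
      refine ⟨u ^ (-α⁻¹), ?_, ?_⟩
      · have h1 : (a ^ (-α)) ^ (-α⁻¹) < u ^ (-α⁻¹) :=
          Real.rpow_lt_rpow_of_neg hu0 hua (neg_lt_zero.mpr (inv_pos.mpr hα))
        have h2 : (a ^ (-α)) ^ (-α⁻¹) = a := by
          rw [← Real.rpow_mul ha.le]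
          rw [show (-α) * (-α⁻¹) = 1 by field_simp]
          exact Real.rpow_one a
        simpa [h2] using h1
      · show (u ^ (-α⁻¹)) ^ (-α) = u
        rw [← Real.rpow_mul hu0.le]
        rw [show (-α⁻¹) * (-α) = 1 by field_simp]
        exact Real.rpow_one u
  have key := integral_image_eq_integral_abs_deriv_smul measurableSet_Ioi hderiv hinj g
  rw [himg] at key
  have hrhs : ∫ x in Set.Ioi a, |(-α) * x ^ (-α - 1)| • g (x ^ (-α))
      = α * ∫ x in Set.Ioi a, x ^ (-γ - 1) * Real.exp (-(lam * x ^ (-α))) := by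
    rw [← integral_const_mul]
    refine setIntegral_congr_fun measurableSet_Ioi (fun x hx => ?_)
    have hx0 : (0:ℝ) < x := ha.trans hx
    have h1 : |(-α) * x ^ (-α - 1)| = α * x ^ (-α - 1) := by
      rw [abs_mul, abs_neg, abs_of_pos hα, abs_of_pos (Real.rpow_pos_of_pos hx0 _)]
    show |(-α) * x ^ (-α - 1)| • ((x ^ (-α)) ^ (s - 1) * Real.exp (-(lam * x ^ (-α))))
        = α * (x ^ (-γ - 1) * Real.exp (-(lam * x ^ (-α))))
    rw [smul_eq_mul, h1]
    have h2 : (x ^ (-α)) ^ (s - 1) = x ^ ((-α) * (s - 1)) := (Real.rpow_mul hx0.le _ _).symm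
    have h3 : x ^ (-α - 1) * x ^ ((-α) * (s - 1)) = x ^ (-γ - 1) := by
      rw [← Real.rpow_add hx0]
      congr 1
      have : α * s = γ := by rw [hs_def]; field_simp
      nlinarith [this]
    rw [h2]
    calc α * x ^ (-α-1) * ((x ^ ((-α) * (s-1))) * Real.exp (-(lam * x ^ (-α))))
        = α * ((x ^ (-α-1) * x ^ ((-α)*(s-1))) * Real.exp (-(lam * x ^ (-α)))) := by ring
      _ = α * (x ^ (-γ-1) * Real.exp (-(lam * x ^ (-α)))) := by rw [h3]
  rw [hrhs] at key
  have hgint : IntegrableOn g (Set.Ioi 0) := integrableOn_rpow_mul_exp_neg_mul hs hlam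
  have hmono : ∫ u in Set.Ioo 0 (a ^ (-α)), g u ≤ ∫ u in Set.Ioi 0, g u := by
    refine setIntegral_mono_set hgint ?_ ?_
    · filter_upwards [self_mem_ae_restrict (measurableSet_Ioi : MeasurableSet (Set.Ioi (0:ℝ)))]
        with u hu
      exact mul_nonneg (Real.rpow_nonneg (le_of_lt hu) _) (Real.exp_nonneg _)
    · exact HasSubset.Subset.eventuallyLE (fun u hu => hu.1)
  have hval : ∫ u in Set.Ioi 0, g u = (1/lam) ^ s * Real.Gamma s :=
    Real.integral_rpow_mul_exp_neg_mul_Ioi hs hlam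
  have hfin : α * ∫ x in Set.Ioi a, x ^ (-γ - 1) * Real.exp (-(lam * x ^ (-α)))
      ≤ (1/lam) ^ s * Real.Gamma s := by
    rw [← key, ← hval]; exact hmono
  calc ∫ x in Set.Ioi a, x ^ (-γ - 1) * Real.exp (-(lam * x ^ (-α)))
      = (1/α) * (α * ∫ x in Set.Ioi a, x ^ (-γ - 1) * Real.exp (-(lam * x ^ (-α)))) := by
        field_simp
    _ ≤ (1/α) * ((1/lam) ^ (γ/α) * Real.Gamma (γ/α)) := by
        exact mul_le_mul_of_nonneg_left hfin (by positivity)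


set_option maxHeartbeats 1000000 in
/-- **The remainder `R_{m,1}` is negligible.** Under the second-order condition with
`0 < α < β < ∞`, `C₁ > 0`, with `F̃(x) = 1 - C₁x^(-α) - C₂x^(-β)`, `ζ = (β-α)/α`,
`a_m = κ m^(1/α)(ln m)^(-1/α)` and `0 < κ < (C₁/ζ)^(1/α)`, one has
`R_{m,1} = m ∫_{a_m}^∞ (F^(m-1)(x) - F̃^(m-1)(x))(C₁α/(α+1) x^(-α-1) + C₂β/(β+1) x^(-β-1)) dx
 = o(m^(-ζ))` as `m → ∞`. -/
theorem remainder_Rm1_negligible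
    (F : ℝ → ℝ)
    (C₁ C₂ α β : ℝ) (hα : 0 < α) (hαβ : α < β) (hC₁ : 0 < C₁)
    (hso : SecondOrderCondition F C₁ C₂ α β)
    (Ftilde : ℝ → ℝ)
    (hFt : ∀ x : ℝ, Ftilde x = 1 - C₁ * x ^ (-α) - C₂ * x ^ (-β))
    (ζ : ℝ) (hζ : ζ = (β - α) / α)
    (κ : ℝ) (hκ : 0 < κ) (hκ' : κ < (C₁ / ζ) ^ (1 / α))
    (a : ℕ → ℝ)
    (ha : ∀ m : ℕ, a m = κ * (m : ℝ) ^ (1 / α) * (Real.log m) ^ (-(1 / α))) :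
    (fun m : ℕ => (m : ℝ) *
        ∫ x in Set.Ioi (a m),
          ((F x) ^ (m - 1) - (Ftilde x) ^ (m - 1)) *
            (C₁ * α / (α + 1) * x ^ (-α - 1) + C₂ * β / (β + 1) * x ^ (-β - 1)))
      =o[atTop] fun m : ℕ => (m : ℝ) ^ (-ζ) := by

  have hso' : (fun x : ℝ => (1 - F x) - (C₁ * x ^ (-α) + C₂ * x ^ (-β)))
      =o[atTop] (fun x : ℝ => x ^ (-β)) := hso

  have hβ : 0 < β := hα.trans hαβ
  set D : ℝ := C₁*α/(α+1) + |C₂| * β/(β+1) with hD_def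
  have hD : 0 < D := by positivity
  set Cst : ℝ := D * ((1/α) * ((4/C₁) ^ ((α+β)/α) * Real.Gamma ((α+β)/α))) with hCst_def
  have hGammaPos : 0 < Real.Gamma ((α+β)/α) := Real.Gamma_pos_of_pos (by positivity)
  have hCst : 0 < Cst := by positivity
  rw [isLittleO_iff]
  intro c hc
  set ε : ℝ := min 1 (c / Cst) with hε_def
  have hε : 0 < ε := lt_min one_pos (div_pos hc hCst)
  have hε1 : ε ≤ 1 := min_le_left _ _
  -- eventual facts in x
  have h1 : ∀ᶠ x : ℝ in atTop, |F x - Ftilde x| ≤ ε * x ^ (-β) := by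
    filter_upwards [hso'.def hε, eventually_gt_atTop (0:ℝ)] with x h hx
    have heq : F x - Ftilde x = -((1 - F x) - (C₁ * x ^ (-α) + C₂ * x ^ (-β))) := by
      rw [hFt]; ring
    rw [heq, abs_neg]
    simpa [Real.norm_eq_abs, abs_of_pos (Real.rpow_pos_of_pos hx (-β))] using h
  have h2 : ∀ᶠ x : ℝ in atTop, (|C₂|+1) * x ^ (α - β) ≤ C₁/2 := by
    have ht : Tendsto (fun x : ℝ => (|C₂|+1) * x ^ (α - β)) atTop (𝓝 0) := by
      have h := (tendsto_rpow_neg_atTop (by linarith : (0:ℝ) < β - α)).const_mul (|C₂|+1)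
      rw [mul_zero] at h
      simpa [show -(β - α) = α - β by ring] using h
    exact ht.eventually (eventually_le_nhds (by positivity))
  have h3 : ∀ᶠ x : ℝ in atTop, (C₁+|C₂|+1) * x ^ (-α) ≤ 1 := by
    have ht : Tendsto (fun x : ℝ => (C₁+|C₂|+1) * x ^ (-α)) atTop (𝓝 0) := by
      have h := (tendsto_rpow_neg_atTop hα).const_mul (C₁+|C₂|+1)
      rw [mul_zero] at h
      exact h
    exact ht.eventually (eventually_le_nhds one_pos)
  have h4 : ∀ᶠ x : ℝ in atTop, (1:ℝ) ≤ x := eventually_ge_atTop 1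
  obtain ⟨X, hX⟩ := eventually_atTop.mp ((h1.and (h2.and (h3.and h4))))
  -- a m → ∞
  have haT : Tendsto a atTop atTop := by
    have hlow : ∀ᶠ m : ℕ in atTop, (κ * 2 ^ (-(1/α))) * (m:ℝ) ^ (1/(2*α)) ≤ a m := by
      filter_upwards [eventually_ge_atTop 3] with m hm3
      have h3m : (3:ℝ) ≤ (m:ℝ) := by exact_mod_cast hm3
      have hm0 : (0:ℝ) < m := by linarith
      have hln1 : 1 ≤ Real.log m := by
        have he3 : Real.exp 1 ≤ 3 := by
          have := Real.exp_one_lt_d9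
          linarith
        calc (1:ℝ) = Real.log (Real.exp 1) := (Real.log_exp 1).symm
          _ ≤ Real.log m := Real.log_le_log (Real.exp_pos 1) (le_trans he3 h3m)
      have hln2 : Real.log m ≤ 2 * (m:ℝ) ^ (1/2 : ℝ) := by
        have h := Real.log_le_rpow_div hm0.le one_half_pos
        have h2 : (m:ℝ) ^ ((1:ℝ)/2) / (1/2) = 2 * (m:ℝ) ^ ((1:ℝ)/2) := by ring
        rw [h2] at h
        exact h
      have hlnpos : (0:ℝ) < Real.log m := lt_of_lt_of_le one_pos hln1
      have hhalfpos : (0:ℝ) < 2 * (m:ℝ) ^ (1/2:ℝ) := by positivity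
      have hstep : (2 * (m:ℝ) ^ (1/2:ℝ)) ^ (-(1/α)) ≤ (Real.log m) ^ (-(1/α)) := by
        rw [Real.rpow_neg hhalfpos.le, Real.rpow_neg hlnpos.le]
        refine inv_anti₀ (Real.rpow_pos_of_pos hlnpos _) ?_
        exact Real.rpow_le_rpow hlnpos.le hln2 (by positivity)
      have heq2 : (2 * (m:ℝ) ^ (1/2:ℝ)) ^ (-(1/α))
          = 2 ^ (-(1/α)) * ((m:ℝ) ^ (1/2:ℝ)) ^ (-(1/α)) :=
        Real.mul_rpow (by norm_num) (by positivity)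
      have heq3 : ((m:ℝ) ^ (1/2:ℝ)) ^ (-(1/α)) = (m:ℝ) ^ (-(1/(2*α))) := by
        rw [← Real.rpow_mul hm0.le]
        congr 1
        field_simp
      have hmul : κ * (m:ℝ)^(1/α) * ((2 * (m:ℝ) ^ (1/2:ℝ)) ^ (-(1/α)))
          = (κ * 2 ^ (-(1/α))) * (m:ℝ) ^ (1/(2*α)) := by
        rw [heq2, heq3,
          show κ * (m:ℝ)^(1/α) * (2 ^ (-(1/α)) * (m:ℝ)^(-(1/(2*α))))
            = (κ * 2^(-(1/α))) * ((m:ℝ)^(1/α) * (m:ℝ)^(-(1/(2*α)))) from by ring,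
          ← Real.rpow_add hm0]
        congr 1
        field_simp
        ring
      rw [ha m]
      calc (κ * 2 ^ (-(1/α))) * (m:ℝ) ^ (1/(2*α))
          = κ * (m:ℝ)^(1/α) * ((2 * (m:ℝ)^(1/2:ℝ)) ^ (-(1/α))) := hmul.symm
        _ ≤ κ * (m:ℝ)^(1/α) * (Real.log m) ^ (-(1/α)) := by
            refine mul_le_mul_of_nonneg_left hstep (by positivity)
    have hbase : Tendsto (fun m : ℕ => (κ * 2 ^ (-(1/α))) * (m:ℝ) ^ (1/(2*α))) atTop atTop := by
      refine Tendsto.const_mul_atTop (by positivity) ?_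
      exact (tendsto_rpow_atTop (by positivity)).comp tendsto_natCast_atTop_atTop
    exact tendsto_atTop_mono' atTop hlow hbase
  have hXa : ∀ᶠ m : ℕ in atTop, X ≤ a m := haT.eventually_ge_atTop X
  have h0a : ∀ᶠ m : ℕ in atTop, 0 < a m := haT.eventually_gt_atTop 0
  filter_upwards [hXa, h0a, eventually_ge_atTop 4] with m hmX hma hm4
  have hm4' : (4:ℝ) ≤ (m:ℝ) := by exact_mod_cast hm4
  have hm0 : (0:ℝ) < m := by linarith
  set lam : ℝ := ((m:ℝ) - 2) * (C₁/2) with hlam_def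
  have hlam : 0 < lam := mul_pos (by linarith) (by linarith)
  have hlam4 : C₁/4 * (m:ℝ) ≤ lam := by
    rw [hlam_def]
    nlinarith [hm4', hC₁]
  -- pointwise bound
  have hpt : ∀ x ∈ Set.Ioi (a m),
      |((F x) ^ (m-1) - (Ftilde x) ^ (m-1)) *
        (C₁ * α / (α + 1) * x ^ (-α - 1) + C₂ * β / (β + 1) * x ^ (-β - 1))|
      ≤ ((m:ℝ) - 1) * ε * D * (x ^ (-(α+β) - 1) * Real.exp (-(lam * x ^ (-α)))) := by
    intro x hx
    have hxX : X ≤ x := le_trans hmX (le_of_lt hx)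
    obtain ⟨hb1, hb2, hb3, hb4⟩ := hX x hxX
    have hx1 : (1:ℝ) ≤ x := hb4
    have hx0 : (0:ℝ) < x := by linarith
    have hu0 : (0:ℝ) < x ^ (-α) := Real.rpow_pos_of_pos hx0 _
    have hv0 : (0:ℝ) < x ^ (-β) := Real.rpow_pos_of_pos hx0 _
    have hvw : x ^ (-β) = x ^ (α - β) * x ^ (-α) := by
      rw [← Real.rpow_add hx0]; congr 1; ring
    have hvu : x ^ (-β) ≤ x ^ (-α) := Real.rpow_le_rpow_of_exponent_le hx1 (by linarith)
    have hMnn : 0 ≤ 1 - C₁/2 * x ^ (-α) := by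
      have k0 : (C₁/2) * x^(-α) ≤ (C₁+|C₂|+1) * x^(-α) := by
        refine mul_le_mul_of_nonneg_right ?_ hu0.le
        have := abs_nonneg C₂; linarith
      linarith
    have k1 : (|C₂|+1) * x^(α-β) * x^(-α) ≤ C₁/2 * x^(-α) :=
      mul_le_mul_of_nonneg_right hb2 hu0.le
    have k3 : -(C₂ * x^(-β)) ≤ C₁/2 * x^(-α) := by
      calc -(C₂ * x^(-β)) ≤ |C₂| * x^(-β) := by
            have hn := neg_le_abs (C₂ * x^(-β))
            rw [abs_mul, abs_of_pos hv0] at hn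
            exact hn
        _ ≤ (|C₂|+1) * x^(-β) := by nlinarith [hv0.le]
        _ = (|C₂|+1) * x^(α-β) * x^(-α) := by rw [hvw]; ring
        _ ≤ C₁/2 * x^(-α) := k1
    have k4 : C₁/2 * x^(-α) ≤ C₁ * x^(-α) := mul_le_mul_of_nonneg_right (by linarith) hu0.le
    have hFtle : Ftilde x ≤ 1 - C₁/2 * x ^ (-α) := by
      rw [hFt]; linarith
    have k2 : C₂ * x^(-β) ≤ |C₂| * x^(-β) := mul_le_mul_of_nonneg_right (le_abs_self C₂) hv0.le
    have k5 : |C₂| * x^(-β) ≤ |C₂| * x^(-α) := mul_le_mul_of_nonneg_left hvu (abs_nonneg C₂)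
    have hFtge : 0 ≤ Ftilde x := by
      rw [hFt]; linarith [k2, k5, hb3, hu0.le]
    have habs := abs_le.mp hb1
    have hkneg : -(C₂ * x^(-β)) ≤ |C₂| * x^(-β) := by
      have hn := neg_le_abs (C₂ * x^(-β))
      rw [abs_mul, abs_of_pos hv0] at hn
      exact hn
    have k1' : (|C₂|+1) * x^(-β) ≤ C₁/2 * x^(-α) := by
      rw [hvw, ← mul_assoc]; exact k1
    have k7 : ε * x^(-β) ≤ x^(-β) := by
      have := mul_le_mul_of_nonneg_right hε1 hv0.le
      linarith
    have hFle : F x ≤ 1 - C₁/2 * x ^ (-α) := by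
      have hup : F x ≤ Ftilde x + ε * x^(-β) := by linarith [habs.2]
      have k6 : Ftilde x + ε * x^(-β) ≤ 1 - C₁/2 * x^(-α) := by
        rw [hFt]
        linarith [k7, hkneg, k1', k4]
      linarith
    have hFge : 0 ≤ F x := by
      have hdn : Ftilde x - ε * x^(-β) ≤ F x := by linarith [habs.1]
      have k10 : 0 ≤ Ftilde x - ε * x^(-β) := by
        rw [hFt]; linarith [hb3, hu0.le, k2, k5, k7, hvu]
      linarith
    set M : ℝ := 1 - C₁/2 * x ^ (-α) with hM_def
    have hFabs : |F x| ≤ M := abs_le.mpr ⟨by simp only [hM_def]; linarith, hFle⟩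
    have hFtabs : |Ftilde x| ≤ M := abs_le.mpr ⟨by simp only [hM_def]; linarith, hFtle⟩
    have hpow := abs_pow_sub_pow_le' M (m-1) (F x) (Ftilde x) hFabs hFtabs
    have hidx : (m-1) - 1 = m - 2 := by omega
    have hMexp : M ^ (m - 2) ≤ Real.exp (-(lam * x ^ (-α))) := by
      have e1 : M ≤ Real.exp (-(C₁/2 * x^(-α))) := by
        have := Real.add_one_le_exp (-(C₁/2 * x^(-α)))
        simp only [hM_def]; linarith
      have e2 : M ^ (m-2) ≤ (Real.exp (-(C₁/2 * x^(-α)))) ^ (m-2) :=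
        pow_le_pow_left₀ hMnn e1 _
      have e3 : (Real.exp (-(C₁/2 * x^(-α)))) ^ (m-2)
          = Real.exp (((m-2:ℕ):ℝ) * (-(C₁/2 * x^(-α)))) := (Real.exp_nat_mul _ _).symm
      have e4 : ((m-2:ℕ):ℝ) = (m:ℝ) - 2 := by
        have h2m : (2:ℕ) ≤ m := by omega
        rw [Nat.cast_sub h2m]; norm_num
      rw [e3, e4] at e2
      calc M^(m-2) ≤ Real.exp (((m:ℝ)-2) * (-(C₁/2 * x^(-α)))) := e2
        _ = Real.exp (-(lam * x^(-α))) := by rw [hlam_def]; ring_nf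
    have e5 : ((m-1:ℕ):ℝ) = (m:ℝ) - 1 := by
      have h1m : (1:ℕ) ≤ m := by omega
      rw [Nat.cast_sub h1m]; norm_num
    have hp2 : (0:ℝ) < x ^ (-β-1) := Real.rpow_pos_of_pos hx0 _
    have hp3 : x ^ (-β-1) ≤ x ^ (-α-1) := Real.rpow_le_rpow_of_exponent_le hx1 (by linarith)
    have hW : |C₁ * α / (α + 1) * x ^ (-α - 1) + C₂ * β / (β + 1) * x ^ (-β - 1)|
        ≤ D * x ^ (-α - 1) := by
      have q1 : |C₁ * α / (α + 1) * x ^ (-α - 1)| = C₁*α/(α+1) * x^(-α-1) :=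
        abs_of_pos (by positivity)
      have q2 : |C₂ * β / (β + 1) * x ^ (-β - 1)| = |C₂| * β/(β+1) * x^(-β-1) := by
        rw [abs_mul, abs_div, abs_mul, abs_of_pos hβ,
          abs_of_pos (by linarith : (0:ℝ) < β+1), abs_of_pos hp2]
      calc |C₁ * α / (α + 1) * x ^ (-α - 1) + C₂ * β / (β + 1) * x ^ (-β - 1)|
          ≤ |C₁ * α / (α + 1) * x ^ (-α - 1)| + |C₂ * β / (β + 1) * x ^ (-β - 1)| := abs_add_le _ _
        _ = C₁*α/(α+1) * x^(-α-1) + |C₂| * β/(β+1) * x^(-β-1) := by rw [q1, q2]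
        _ ≤ C₁*α/(α+1) * x^(-α-1) + |C₂| * β/(β+1) * x^(-α-1) := by
            have : |C₂| * β/(β+1) * x^(-β-1) ≤ |C₂| * β/(β+1) * x^(-α-1) :=
              mul_le_mul_of_nonneg_left hp3 (by positivity)
            linarith
        _ = D * x^(-α-1) := by rw [hD_def]; ring
    have hxc : x^(-β) * x^(-α-1) = x^(-(α+β)-1) := by
      rw [← Real.rpow_add hx0]; congr 1; ring
    rw [abs_mul]
    calc |F x ^ (m-1) - Ftilde x ^ (m-1)|
          * |C₁ * α / (α + 1) * x ^ (-α - 1) + C₂ * β / (β + 1) * x ^ (-β - 1)|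
        ≤ (((m-1:ℕ):ℝ) * |F x - Ftilde x| * M ^ ((m-1)-1)) * (D * x^(-α-1)) := by
          refine mul_le_mul hpow hW (abs_nonneg _) ?_
          have hMnn' : (0:ℝ) ≤ M := hMnn
          positivity
      _ ≤ (((m:ℝ)-1) * (ε * x^(-β)) * Real.exp (-(lam * x^(-α)))) * (D * x^(-α-1)) := by
          rw [hidx, e5]
          refine mul_le_mul_of_nonneg_right ?_ (by positivity)
          have hm1nn : (0:ℝ) ≤ (m:ℝ)-1 := by linarith
          refine mul_le_mul (mul_le_mul_of_nonneg_left hb1 hm1nn) hMexp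
            (pow_nonneg hMnn _) (by positivity)
      _ = ((m:ℝ)-1) * ε * D * ((x^(-β) * x^(-α-1)) * Real.exp (-(lam * x^(-α)))) := by ring
      _ = ((m:ℝ)-1) * ε * D * (x^(-(α+β)-1) * Real.exp (-(lam * x^(-α)))) := by rw [hxc]
  -- integrability of the bound
  have hnz : ∀ x ∈ Set.Ioi (a m), (fun y : ℝ => y) x ≠ 0 ∨ (0:ℝ) ≤ (-(α+β)-1) :=
    fun x hx => Or.inl (ne_of_gt (hma.trans hx))
  have hnz2 : ∀ x ∈ Set.Ioi (a m), (fun y : ℝ => y) x ≠ 0 ∨ (0:ℝ) ≤ (-α) :=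
    fun x hx => Or.inl (ne_of_gt (hma.trans hx))
  have hg0cont : ContinuousOn
      (fun x : ℝ => x ^ (-(α+β)-1) * Real.exp (-(lam * x ^ (-α)))) (Set.Ioi (a m)) := by
    refine ContinuousOn.mul (continuousOn_id.rpow_const hnz) ?_
    exact Real.continuous_exp.comp_continuousOn
      ((continuousOn_const.mul (continuousOn_id.rpow_const hnz2)).neg)
  have hg0int : IntegrableOn
      (fun x : ℝ => x ^ (-(α+β)-1) * Real.exp (-(lam * x ^ (-α)))) (Set.Ioi (a m)) := by
    have hbig : IntegrableOn (fun x : ℝ => x ^ (-(α+β)-1)) (Set.Ioi (a m)) :=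
      integrableOn_Ioi_rpow_of_lt (by linarith) hma
    refine Integrable.mono' hbig (hg0cont.aestronglyMeasurable measurableSet_Ioi) ?_
    filter_upwards [self_mem_ae_restrict (measurableSet_Ioi : MeasurableSet (Set.Ioi (a m)))]
      with x hx
    have hx0 : (0:ℝ) < x := hma.trans hx
    have hq1 : (0:ℝ) < x ^ (-(α+β)-1) := Real.rpow_pos_of_pos hx0 _
    have hexp : Real.exp (-(lam * x^(-α))) ≤ 1 := by
      rw [Real.exp_le_one_iff]
      have := mul_pos hlam (Real.rpow_pos_of_pos hx0 (-α))
      linarith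
    rw [Real.norm_eq_abs, abs_mul, abs_of_pos hq1, abs_of_pos (Real.exp_pos _)]
    calc x ^ (-(α+β)-1) * Real.exp (-(lam * x^(-α))) ≤ x ^ (-(α+β)-1) * 1 :=
          mul_le_mul_of_nonneg_left hexp hq1.le
      _ = x ^ (-(α+β)-1) := mul_one _
  have hBint : IntegrableOn
      (fun x : ℝ => ((m:ℝ)-1) * ε * D * (x ^ (-(α+β)-1) * Real.exp (-(lam * x ^ (-α)))))
      (Set.Ioi (a m)) := hg0int.const_mul _
  have hnorm : ‖∫ x in Set.Ioi (a m),
      ((F x) ^ (m-1) - (Ftilde x) ^ (m-1)) *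
        (C₁ * α / (α + 1) * x ^ (-α - 1) + C₂ * β / (β + 1) * x ^ (-β - 1))‖
      ≤ ∫ x in Set.Ioi (a m),
          ((m:ℝ)-1) * ε * D * (x ^ (-(α+β)-1) * Real.exp (-(lam * x ^ (-α)))) := by
    refine norm_integral_le_of_norm_le hBint ?_
    filter_upwards [self_mem_ae_restrict (measurableSet_Ioi : MeasurableSet (Set.Ioi (a m)))]
      with x hx
    simpa [Real.norm_eq_abs, abs_mul] using hpt x hx
  have hIval : ∫ x in Set.Ioi (a m),
      ((m:ℝ)-1) * ε * D * (x ^ (-(α+β)-1) * Real.exp (-(lam * x ^ (-α))))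
      ≤ ((m:ℝ)-1) * ε * D * ((1/α) * ((1/lam) ^ ((α+β)/α) * Real.Gamma ((α+β)/α))) := by
    rw [integral_const_mul]
    have hm1nn : (0:ℝ) ≤ (m:ℝ) - 1 := by linarith
    refine mul_le_mul_of_nonneg_left ?_ (mul_nonneg (mul_nonneg hm1nn hε.le) hD.le)
    exact tail_bound hα (by linarith) hlam hma
  have hrfin : (1/lam) ^ ((α+β)/α) ≤ (4/C₁) ^ ((α+β)/α) * (m:ℝ) ^ (-((α+β)/α)) := by
    have l2 : 1/lam ≤ 4/(C₁ * m) := by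
      rw [div_le_div_iff₀ hlam (by positivity)]
      nlinarith
    have l3 : (1/lam) ^ ((α+β)/α) ≤ (4/(C₁*(m:ℝ))) ^ ((α+β)/α) :=
      Real.rpow_le_rpow (by positivity) l2 (by positivity)
    have l4 : (4/(C₁*(m:ℝ))) ^ ((α+β)/α) = (4/C₁) ^ ((α+β)/α) * (m:ℝ) ^ (-((α+β)/α)) := by
      rw [show 4/(C₁*(m:ℝ)) = (4/C₁) * (1/(m:ℝ)) from by ring,
        Real.mul_rpow (by positivity) (by positivity), one_div,
        Real.inv_rpow hm0.le, ← Real.rpow_neg hm0.le]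
    rw [l4] at l3
    exact l3
  have hnormI : ‖(m:ℝ) * ∫ x in Set.Ioi (a m),
      ((F x) ^ (m-1) - (Ftilde x) ^ (m-1)) *
        (C₁ * α / (α + 1) * x ^ (-α - 1) + C₂ * β / (β + 1) * x ^ (-β - 1))‖
      ≤ ε * Cst * ((m:ℝ) ^ (-ζ)) := by
    rw [norm_mul, Real.norm_eq_abs (m:ℝ), abs_of_nonneg hm0.le]
    have step1 : (m:ℝ) * ‖∫ x in Set.Ioi (a m),
        ((F x) ^ (m-1) - (Ftilde x) ^ (m-1)) *
          (C₁ * α / (α + 1) * x ^ (-α - 1) + C₂ * β / (β + 1) * x ^ (-β - 1))‖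
        ≤ (m:ℝ) * (((m:ℝ)-1) * ε * D * ((1/α) * ((1/lam) ^ ((α+β)/α) * Real.Gamma ((α+β)/α)))) :=
      mul_le_mul_of_nonneg_left (hnorm.trans hIval) hm0.le
    have step2 : (m:ℝ) * (((m:ℝ)-1) * ε * D * ((1/α) * ((1/lam) ^ ((α+β)/α) * Real.Gamma ((α+β)/α))))
        ≤ (m:ℝ) * (((m:ℝ)) * ε * D * ((1/α) * (((4/C₁) ^ ((α+β)/α) * (m:ℝ) ^ (-((α+β)/α))) * Real.Gamma ((α+β)/α)))) := by
      have hm1nn : (0:ℝ) ≤ (m:ℝ) - 1 := by linarith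
      have hmle : (m:ℝ) - 1 ≤ (m:ℝ) := by linarith
      gcongr
    have step3 : (m:ℝ) * (((m:ℝ)) * ε * D * ((1/α) * (((4/C₁) ^ ((α+β)/α) * (m:ℝ) ^ (-((α+β)/α))) * Real.Gamma ((α+β)/α))))
        = ε * Cst * ((m:ℝ) * (m:ℝ) * (m:ℝ) ^ (-((α+β)/α))) := by
      rw [hCst_def]; ring
    have step4 : (m:ℝ) * (m:ℝ) * (m:ℝ) ^ (-((α+β)/α)) = (m:ℝ) ^ (-ζ) := by
      rw [show (m:ℝ) * (m:ℝ) * (m:ℝ) ^ (-((α+β)/α))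
          = (m:ℝ)^(1:ℝ) * ((m:ℝ)^(1:ℝ) * (m:ℝ)^(-((α+β)/α))) from by rw [Real.rpow_one]; ring,
        ← Real.rpow_add hm0, ← Real.rpow_add hm0]
      congr 1
      rw [hζ]
      field_simp
      ring
    calc (m:ℝ) * ‖∫ x in Set.Ioi (a m),
        ((F x) ^ (m-1) - (Ftilde x) ^ (m-1)) *
          (C₁ * α / (α + 1) * x ^ (-α - 1) + C₂ * β / (β + 1) * x ^ (-β - 1))‖
        ≤ (m:ℝ) * (((m:ℝ)-1) * ε * D * ((1/α) * ((1/lam) ^ ((α+β)/α) * Real.Gamma ((α+β)/α)))) := step1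
      _ ≤ (m:ℝ) * (((m:ℝ)) * ε * D * ((1/α) * (((4/C₁) ^ ((α+β)/α) * (m:ℝ) ^ (-((α+β)/α))) * Real.Gamma ((α+β)/α)))) := step2
      _ = ε * Cst * ((m:ℝ) * (m:ℝ) * (m:ℝ) ^ (-((α+β)/α))) := step3
      _ = ε * Cst * ((m:ℝ) ^ (-ζ)) := by rw [step4]
  calc ‖(m:ℝ) * ∫ x in Set.Ioi (a m),
      ((F x) ^ (m-1) - (Ftilde x) ^ (m-1)) *
        (C₁ * α / (α + 1) * x ^ (-α - 1) + C₂ * β / (β + 1) * x ^ (-β - 1))‖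
      ≤ ε * Cst * ((m:ℝ) ^ (-ζ)) := hnormI
    _ ≤ c * ((m:ℝ) ^ (-ζ)) := by
        refine mul_le_mul_of_nonneg_right ?_ (Real.rpow_nonneg hm0.le _)
        have hle : ε ≤ c / Cst := min_le_right _ _
        calc ε * Cst ≤ (c/Cst) * Cst := mul_le_mul_of_nonneg_right hle hCst.le
          _ = c := div_mul_cancel₀ c hCst.ne'
    _ = c * ‖(m:ℝ) ^ (-ζ)‖ := by
        rw [Real.norm_eq_abs, abs_of_nonneg (Real.rpow_nonneg hm0.le _)]
end

section
/- For all real α, β with 0 < α < β, setting ζ = (β−α)/α, the quantity RMMSE(1) = ( η(α,β) Γ²(2+ζ) )^{1/(1+2ζ)} is strictly greater than 1, where η(α,β) = ( β(α+1) / (α(β+1)) )² · ( (α+1)² / (α(α+2)) )^{2ζ} and Γ is Euler's gamma function; equivalently, η(α,β) Γ²(2+ζ) > 1 for all 0 < α < β. -/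
open Filter Set
open scoped Topology

/-- **The Hill estimator dominates the DPR estimator.** For all `0 < α < β`, with
`ζ = (β-α)/α` and `η(α,β) = (β(α+1)/(α(β+1)))² ((α+1)²/(α(α+2)))^(2ζ)`, the ratio of
minimal mean square errors `RMMSE(1) = (η(α,β) Γ²(2+ζ))^(1/(1+2ζ))` is strictly greater
than `1`; equivalently, `η(α,β) Γ²(2+ζ) > 1`. -/
theorem rmmse_hill_gt_one
    (α β : ℝ) (hα : 0 < α) (hαβ : α < β)
    (ζ η : ℝ) (hζ : ζ = (β - α) / α)
    (hη : η = (β * (α + 1) / (α * (β + 1))) ^ 2 *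
      ((α + 1) ^ 2 / (α * (α + 2))) ^ (2 * ζ)) :
    1 < (η * (Real.Gamma (2 + ζ)) ^ 2) ^ (1 / (1 + 2 * ζ)) ∧
      1 < η * (Real.Gamma (2 + ζ)) ^ 2 := by
  have hβ : 0 < β := hα.trans hαβ
  have hζpos : 0 < ζ := by
    rw [hζ]; exact div_pos (by linarith) hα
  have hA : 1 < β * (α + 1) / (α * (β + 1)) := by
    rw [lt_div_iff₀ (by positivity)]; nlinarith
  have hA2 : 1 < (β * (α + 1) / (α * (β + 1))) ^ 2 := by nlinarith
  have hB : 1 < (α + 1) ^ 2 / (α * (α + 2)) := by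
    rw [lt_div_iff₀ (by positivity)]; nlinarith
  have hB2 : 1 < ((α + 1) ^ 2 / (α * (α + 2))) ^ (2 * ζ) :=
    Real.one_lt_rpow_iff_of_pos (by positivity) |>.mpr (Or.inl ⟨hB, by positivity⟩)
  have hηgt : 1 < η := by
    rw [hη]; nlinarith
  have hG : 1 < Real.Gamma (2 + ζ) := by
    have h2 : Real.Gamma 2 = 1 := by
      have := Real.Gamma_nat_eq_factorial 1
      norm_num at this
      simpa using this
    calc (1:ℝ) = Real.Gamma 2 := h2.symm
      _ < Real.Gamma (2 + ζ) := Real.Gamma_strictMonoOn_Ici (by norm_num)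
          (by simp only [mem_Ici]; linarith) (by linarith)
  have hmain : 1 < η * (Real.Gamma (2 + ζ)) ^ 2 := by nlinarith
  refine ⟨?_, hmain⟩
  exact Real.one_lt_rpow_iff_of_pos (by linarith) |>.mpr (Or.inl ⟨hmain, by positivity⟩)
end

section
/- For all real α, β with 0 < α < β, setting ζ = (β−α)/α, the quantity RMMSE(4) = ( η(α,β) (1+ζ)² Γ²(2+ζ) / 2^{2ζ} )^{1/(1+2ζ)} is strictly greater than 1, where η(α,β) = ( β(α+1) / (α(β+1)) )² · ( (α+1)² / (α(α+2)) )^{2ζ} and Γ is Euler's gamma function; this follows in particular from the inequality (α+1)⁶ − 4α³(α+2) > 0 valid for all α > 0. -/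
open Filter Set
open scoped Topology

lemma one_le_Gamma_of_two_le {x : ℝ} (hx : 2 ≤ x) : 1 ≤ Real.Gamma x := by
  rcases eq_or_lt_of_le hx with h | h
  · rw [← h, Real.Gamma_two]
  · have := Real.Gamma_strictMonoOn_Ici (by simp : (2:ℝ) ∈ Ici 2) (le_of_lt h : x ∈ Ici 2) h
    rw [Real.Gamma_two] at this
    exact this.le

lemma key_aux : ∀ n : ℕ, ∀ ζ : ℝ, 0 ≤ ζ → ζ ≤ n + 1 →
    (2:ℝ) ^ ζ ≤ (1 + ζ) * Real.Gamma (2 + ζ) := by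
  intro n
  induction n with
  | zero =>
    intro ζ h0 h1
    norm_num at h1
    have h2 : (2:ℝ) ^ ζ ≤ 1 + ζ := by
      have h := rpow_one_add_le_one_add_mul_self (s := 1) (by norm_num) h0 h1
      norm_num at h
      linarith
    have hG : 1 ≤ Real.Gamma (2 + ζ) := one_le_Gamma_of_two_le (by linarith)
    nlinarith [h2, hG]
  | succ n ih =>
    intro ζ h0 h1
    rcases le_or_gt ζ (n + 1) with h | h
    · exact ih ζ h0 h
    · have hζ1 : (1:ℝ) ≤ ζ := by
        have hn0 : (0:ℝ) ≤ n := Nat.cast_nonneg n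
        have : (1:ℝ) ≤ n + 1 := by linarith
        linarith
      have hih := ih (ζ - 1) (by linarith) (by push_cast at h1 ⊢; linarith)
      have hrec : Real.Gamma (2 + ζ) = (1 + ζ) * Real.Gamma (1 + ζ) := by
        have : (2:ℝ) + ζ = (1 + ζ) + 1 := by ring
        rw [this, Real.Gamma_add_one (by linarith)]
      have h2 : (2:ℝ) + (ζ - 1) = 1 + ζ := by ring
      rw [h2] at hih
      have hGpos : 0 < Real.Gamma (1 + ζ) := Real.Gamma_pos_of_pos (by linarith)
      have hpow : (2:ℝ) ^ ζ = 2 * (2:ℝ) ^ (ζ - 1) := by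
        rw [← Real.rpow_one_add' (by norm_num) (by intro hc; linarith [h0])]
        ring_nf
      rw [hpow, hrec]
      have hsq : 2 * (ζ - 1 + 1) ≤ (1 + ζ) * (1 + ζ) := by nlinarith
      calc 2 * (2:ℝ) ^ (ζ - 1) ≤ 2 * ((ζ - 1 + 1) * Real.Gamma (1 + ζ)) := by
            have := hih
            nlinarith [Real.rpow_nonneg (by norm_num : (0:ℝ) ≤ 2) (ζ - 1)]
        _ ≤ (1 + ζ) * ((1 + ζ) * Real.Gamma (1 + ζ)) := by nlinarith

lemma key (ζ : ℝ) (h0 : 0 ≤ ζ) : (2:ℝ) ^ ζ ≤ (1 + ζ) * Real.Gamma (2 + ζ) := by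
  obtain ⟨n, hn⟩ := exists_nat_ge ζ
  exact key_aux n ζ h0 (by linarith)

/-- **The de Vries estimator dominates the DPR estimator.** For all `0 < α < β`, with
`ζ = (β-α)/α` and `η(α,β) = (β(α+1)/(α(β+1)))² ((α+1)²/(α(α+2)))^(2ζ)`, the ratio of
minimal mean square errors `RMMSE(4) = (η(α,β)(1+ζ)² Γ²(2+ζ)/2^(2ζ))^(1/(1+2ζ))` is
strictly greater than `1`; this follows in particular from the inequality
`(α+1)⁶ - 4α³(α+2) > 0`, valid for all `α > 0`. -/
theorem rmmse_deVries_gt_one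
    (α β : ℝ) (hα : 0 < α) (hαβ : α < β)
    (ζ η : ℝ) (hζ : ζ = (β - α) / α)
    (hη : η = (β * (α + 1) / (α * (β + 1))) ^ 2 *
      ((α + 1) ^ 2 / (α * (α + 2))) ^ (2 * ζ)) :
    1 < (η * (1 + ζ) ^ 2 * (Real.Gamma (2 + ζ)) ^ 2 / 2 ^ (2 * ζ)) ^ (1 / (1 + 2 * ζ)) ∧
      ∀ a : ℝ, 0 < a → 0 < (a + 1) ^ 6 - 4 * a ^ 3 * (a + 2) := by
  constructor
  · have hζ0 : 0 < ζ := by rw [hζ]; exact div_pos (by linarith) hα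
    set A : ℝ := β * (α + 1) / (α * (β + 1)) with hA
    set g : ℝ := (α + 1) ^ 2 / (α * (α + 2)) with hg
    have hApos : 1 < A := by
      rw [hA, lt_div_iff₀ (mul_pos hα (by linarith))]
      nlinarith
    have hgpos : 1 < g := by
      rw [hg, lt_div_iff₀ (mul_pos hα (by linarith))]
      nlinarith
    have hgζ : 1 ≤ g ^ ζ := Real.one_le_rpow hgpos.le hζ0.le
    have hΓ : (2:ℝ) ^ ζ ≤ (1 + ζ) * Real.Gamma (2 + ζ) := key ζ hζ0.le
    have h2ζpos : (0:ℝ) < (2:ℝ) ^ ζ := Real.rpow_pos_of_pos (by norm_num) ζ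
    have hΓpos : 0 < Real.Gamma (2 + ζ) := Real.Gamma_pos_of_pos (by linarith)
    -- key: Y = A * ((1+ζ)Γ(2+ζ)/2^ζ) * g^ζ > 1
    have hY : 1 < A * ((1 + ζ) * Real.Gamma (2 + ζ) / 2 ^ ζ) * g ^ ζ := by
      have h1 : (1:ℝ) ≤ (1 + ζ) * Real.Gamma (2 + ζ) / 2 ^ ζ :=
        (one_le_div h2ζpos).mpr hΓ
      calc (1:ℝ) < A := hApos
        _ ≤ A * ((1 + ζ) * Real.Gamma (2 + ζ) / 2 ^ ζ) :=
            le_mul_of_one_le_right (by linarith) h1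
        _ ≤ A * ((1 + ζ) * Real.Gamma (2 + ζ) / 2 ^ ζ) * g ^ ζ :=
            le_mul_of_one_le_right (by nlinarith) hgζ
    have hX : η * (1 + ζ) ^ 2 * (Real.Gamma (2 + ζ)) ^ 2 / 2 ^ (2 * ζ) =
        (A * ((1 + ζ) * Real.Gamma (2 + ζ) / 2 ^ ζ) * g ^ ζ) ^ 2 := by
      rw [hη]
      have hgsq : g ^ (2 * ζ) = (g ^ ζ) ^ 2 := by
        rw [← Real.rpow_natCast (g ^ ζ) 2, ← Real.rpow_mul (by positivity)]
        norm_num [mul_comm]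
      have h2sq : (2:ℝ) ^ (2 * ζ) = ((2:ℝ) ^ ζ) ^ 2 := by
        rw [← Real.rpow_natCast ((2:ℝ) ^ ζ) 2, ← Real.rpow_mul (by norm_num)]
        norm_num [mul_comm]
      rw [hgsq, h2sq]
      field_simp
    rw [hX]
    have hbase : 1 < (A * ((1 + ζ) * Real.Gamma (2 + ζ) / 2 ^ ζ) * g ^ ζ) ^ 2 := by
      nlinarith
    have hexp : 0 < 1 / (1 + 2 * ζ) := by positivity
    exact Real.one_lt_rpow_iff_of_pos (by positivity) |>.mpr (Or.inl ⟨hbase, hexp⟩)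
  · intro a ha
    nlinarith [pow_pos ha 6, pow_pos ha 5, pow_pos ha 4, pow_pos ha 3, sq_nonneg a, ha]
end
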